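/- arXiv:2011.02405 — 5 statements merged into one kernel-verified Lean document; each statement's English description precedes it below -/
import Mathlib

section
/- Let X = ℝ × ℤ(2), let n ≥ 2, and let b_1,…,b_n be strictly positive real numbers. Let μ_1,…,μ_n be probability measures on X and suppose that Measure.map (x ↦ (∑_j x_j, ∑_j b_j•x_j)) (⊗_j μ_j) = Measure.map (x ↦ (∑_j x_j, −∑_j b_j•x_j)) (⊗_j μ_j). Then for every j there exists x_j ∈ X such that the shifted measure μ_j * δ_{−x_j} is concentrated on the subgroup {0} × ℤ(2), i.e. (μ_j * δ_{−x_j})({0} × ℤ(2)) = 1. -/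
open MeasureTheory Complex intervalIntegral

section Aux

lemma pi_integral_prod {n : ℕ} {α : Type*} [MeasurableSpace α] (μ : Fin n → Measure α)
    (hμ : ∀ i, IsProbabilityMeasure (μ i)) (f : Fin n → α → ℂ) :
    ∫ x : Fin n → α, ∏ i, f i (x i) ∂Measure.pi μ = ∏ i, ∫ x, f i x ∂μ i := by
  haveI := hμ
  exact MeasureTheory.integral_fintype_prod_eq_prod (𝕜 := ℂ) f

lemma integrable_exp_I {α : Type*} [MeasurableSpace α] (ν : Measure α) [IsFiniteMeasure ν]
    (g : α → ℝ) (hg : Measurable g) :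
    Integrable (fun x => Complex.exp ((g x : ℝ) * Complex.I)) ν := by
  apply Integrable.mono' (integrable_const (1:ℝ))
    ((Complex.measurable_exp.comp ((Complex.measurable_ofReal.comp hg).mul_const I)).aestronglyMeasurable)
  exact Filter.Eventually.of_forall fun x => (Complex.norm_exp_ofReal_mul_I (g x)).le

lemma charlike_continuous {α : Type*} [MeasurableSpace α] (ν : Measure α) [IsFiniteMeasure ν]
    (g : α → ℝ) (hg : Measurable g) :
    Continuous fun t : ℝ => ∫ x, Complex.exp (((t * g x : ℝ)) * Complex.I) ∂ν := by
  apply continuous_of_dominated (bound := fun _ => (1:ℝ))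
  · intro t
    exact ((Complex.measurable_exp.comp ((Complex.measurable_ofReal.comp (hg.const_mul t)).mul_const I)).aestronglyMeasurable)
  · intro t
    exact Filter.Eventually.of_forall fun x => (Complex.norm_exp_ofReal_mul_I (t * g x)).le
  · exact integrable_const 1
  · refine Filter.Eventually.of_forall fun x => ?_
    have : Continuous fun t : ℝ => ((t * g x : ℝ) : ℂ) * Complex.I :=
      (Complex.continuous_ofReal.comp (continuous_mul_right (g x))).mul continuous_const
    exact Complex.continuous_exp.comp this


lemma heyde_core (n : ℕ) (hn : 0 < n) (b : Fin n → ℝ) (hb : ∀ j, 0 < b j) (φ : Fin n → ℝ → ℝ)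
    (hc : ∀ j, Continuous (φ j)) (h0 : ∀ j, φ j 0 = 1) (hnn : ∀ j t, 0 ≤ φ j t)
    (hle : ∀ j t, φ j t ≤ 1)
    (heq : ∀ s u : ℝ, ∏ j, φ j (s + u * b j) = ∏ j, φ j (s - u * b j)) :
    ∃ δ > 0, ∀ j, ∀ t : ℝ, |t| ≤ δ → φ j t = 1 := by
  -- step 1: uniform positivity near 0
  have key : ∀ j : Fin n, ∃ d > 0, ∀ t : ℝ, |t| ≤ d → 1/2 ≤ φ j t := by
    intro j
    obtain ⟨d, hd, hdd⟩ := Metric.continuousAt_iff.mp ((hc j).continuousAt (x := 0))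
      (1/2) (by norm_num)
    refine ⟨d/2, by positivity, fun t ht => ?_⟩
    have h2 := hdd (x := t) (by rw [Real.dist_eq, sub_zero]; linarith)
    rw [Real.dist_eq, h0 j] at h2
    have := (abs_lt.mp h2).1
    linarith
  choose d hd hdle using key
  haveI : Nonempty (Fin n) := ⟨⟨0, hn⟩⟩
  set ε : ℝ := Finset.univ.inf' Finset.univ_nonempty d with hεdef
  have hε : 0 < ε := by
    rw [hεdef, Finset.lt_inf'_iff]
    exact fun j _ => hd j
  have hφhalf : ∀ j, ∀ t : ℝ, |t| ≤ ε → 1/2 ≤ φ j t := fun j t ht =>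
    hdle j t (le_trans ht (Finset.inf'_le _ (Finset.mem_univ j)))
  have hφpos : ∀ j, ∀ t : ℝ, |t| ≤ ε → 0 < φ j t := fun j t ht =>
    lt_of_lt_of_le (by norm_num) (hφhalf j t ht)
  -- step 2: bounds
  obtain ⟨B, hB1, hbB⟩ : ∃ B : ℝ, 1 ≤ B ∧ ∀ j, b j ≤ B := by
    refine ⟨1 + ∑ j, b j, ?_, ?_⟩
    · have : 0 ≤ ∑ j, b j := Finset.sum_nonneg fun j _ => (hb j).le
      linarith
    · intro j
      have := Finset.single_le_sum (f := b) (fun i _ => (hb i).le) (Finset.mem_univ j)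
      linarith
  have hBpos : 0 < B := by linarith
  obtain ⟨r, hrdef⟩ : ∃ r : ℝ, r = ε / (2 * B) := ⟨_, rfl⟩
  have hr : 0 < r := by rw [hrdef]; positivity
  have hub : ∀ (u : ℝ) (j), |u| ≤ r → |u * b j| ≤ ε / 2 := by
    intro u j hu
    rw [abs_mul, abs_of_pos (hb j)]
    calc |u| * b j ≤ r * B := mul_le_mul hu (hbB j) (hb j).le hr.le
      _ = ε / 2 * (B / B) := by rw [hrdef]; ring
      _ = ε / 2 := by rw [div_self hBpos.ne', mul_one]
  have harg1 : ∀ (s u : ℝ) (j), |s| ≤ ε/2 → |u| ≤ r → |s + u * b j| ≤ ε := by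
    intro s u j hs hu
    have := abs_add_le s (u * b j)
    have := hub u j hu
    linarith
  have harg2 : ∀ (s u : ℝ) (j), |s| ≤ ε/2 → |u| ≤ r → |s - u * b j| ≤ ε := by
    intro s u j hs hu
    have h1 := abs_add_le s (-(u * b j))
    rw [abs_neg] at h1
    have := hub u j hu
    rw [sub_eq_add_neg]
    linarith
  -- step 3: ψ
  set ψ : Fin n → ℝ → ℝ := fun j t => -Real.log (φ j t) with hψdef
  have hψ0 : ∀ j, ψ j 0 = 0 := fun j => by simp [hψdef, h0 j]
  have hψnn : ∀ j, ∀ t : ℝ, |t| ≤ ε → 0 ≤ ψ j t := fun j t ht => by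
    simp only [hψdef, neg_nonneg]
    exact Real.log_nonpos (hnn j t) (hle j t)
  have hψca : ∀ j, ∀ t : ℝ, |t| ≤ ε → ContinuousAt (ψ j) t := by
    intro j t ht
    exact ((Real.continuousAt_log (hφpos j t ht).ne').comp (hc j).continuousAt).neg
  have hψmeas : ∀ j, Measurable (ψ j) :=
    fun j => (Real.measurable_log.comp (hc j).measurable).neg
  -- step 4: pointwise sum identity
  have hsum : ∀ s u : ℝ, |s| ≤ ε/2 → |u| ≤ r →
      ∑ j, ψ j (s + u * b j) = ∑ j, ψ j (s - u * b j) := by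
    intro s u hs hu
    have e1 : ∑ j, ψ j (s + u * b j) = -Real.log (∏ j, φ j (s + u * b j)) := by
      rw [Real.log_prod (fun j _ => (hφpos j _ (harg1 s u j hs hu)).ne')]
      simp [hψdef]
    have e2 : ∑ j, ψ j (s - u * b j) = -Real.log (∏ j, φ j (s - u * b j)) := by
      rw [Real.log_prod (fun j _ => (hφpos j _ (harg2 s u j hs hu)).ne')]
      simp [hψdef]
    rw [e1, e2, heq s u]
  -- step 5: interval integrability
  have hII : ∀ j (a c : ℝ), |a| ≤ ε → |c| ≤ ε → IntervalIntegrable (ψ j) volume a c := by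
    intro j a c ha hc'
    apply ContinuousOn.intervalIntegrable
    intro x hx
    have hx' : |x| ≤ ε := by
      rcases abs_le.mp ha with ⟨ha1, ha2⟩
      rcases abs_le.mp hc' with ⟨hc1, hc2⟩
      rcases Set.mem_uIcc.mp hx with ⟨h1, h2⟩ | ⟨h1, h2⟩ <;> rw [abs_le] <;> constructor <;> linarith
    exact (hψca j x hx').continuousWithinAt
  -- step 6: G and its derivative
  set G : Fin n → ℝ → ℝ := fun j x => ∫ s in (0:ℝ)..x, ψ j s with hGdef
  have hGderiv : ∀ j (y : ℝ), |y| ≤ ε/2 → HasDerivAt (G j) (ψ j y) y := by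
    intro j y hy
    refine integral_hasDerivAt_right (hII j 0 y (by simp; linarith) (by linarith)) ?_ (hψca j y (by linarith))
    exact (hψmeas j).stronglyMeasurable.stronglyMeasurableAtFilter
  -- step 7: main argument for fixed T
  refine ⟨ε/2, by positivity, fun j T hT => ?_⟩
  have hTε : |T| ≤ ε := by linarith
  have hmem : ∀ x ∈ Set.uIcc (0:ℝ) T, |x| ≤ ε/2 := by
    intro x hx
    rcases abs_le.mp hT with ⟨h1, h2⟩
    rcases Set.mem_uIcc.mp hx with ⟨ha, hb'⟩ | ⟨ha, hb'⟩ <;> rw [abs_le] <;> constructor <;> linarith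
  have ItgAdd : ∀ (u : ℝ), |u| ≤ r → ∀ j',
      IntervalIntegrable (fun s => ψ j' (s + u * b j')) volume 0 T := by
    intro u hu j'
    apply ContinuousOn.intervalIntegrable
    intro x hx
    have hin : ContinuousAt (fun s : ℝ => s + u * b j') x :=
      (continuous_id.add continuous_const).continuousAt
    exact (ContinuousAt.comp (x := x) (f := fun s : ℝ => s + u * b j')
      (hψca j' _ (harg1 x u j' (hmem x hx) hu)) hin).continuousWithinAt
  have ItgSub : ∀ (u : ℝ), |u| ≤ r → ∀ j',
      IntervalIntegrable (fun s => ψ j' (s - u * b j')) volume 0 T := by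
    intro u hu j'
    apply ContinuousOn.intervalIntegrable
    intro x hx
    have hin : ContinuousAt (fun s : ℝ => s - u * b j') x :=
      (continuous_id.sub continuous_const).continuousAt
    exact (ContinuousAt.comp (x := x) (f := fun s : ℝ => s - u * b j')
      (hψca j' _ (harg2 x u j' (hmem x hx) hu)) hin).continuousWithinAt
  have hH0 : ∀ u : ℝ, |u| ≤ r →
      (∑ j', (G j' (T + u * b j') - G j' (T - u * b j') - G j' (u * b j') + G j' (-(u * b j')))) = 0 := by
    intro u hu
    have hcε : ∀ j', |u * b j'| ≤ ε := fun j' => by have := hub u j' hu; linarith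
    have hcε2 : ∀ j', |(-(u * b j'))| ≤ ε := fun j' => by rw [abs_neg]; exact hcε j'
    have hc1 : ∀ j', |T + u * b j'| ≤ ε := fun j' => by
      have := abs_add_le T (u * b j'); have := hub u j' hu; linarith
    have hc2 : ∀ j', |T - u * b j'| ≤ ε := fun j' => by
      have h' := abs_add_le T (-(u * b j')); rw [abs_neg] at h'
      have := hub u j' hu; rw [sub_eq_add_neg]; linarith
    have I1 : ∀ j', ∫ s in (0:ℝ)..T, ψ j' (s + u * b j')
        = G j' (T + u * b j') - G j' (u * b j') := by
      intro j'
      rw [intervalIntegral.integral_comp_add_right (ψ j') (u * b j'), zero_add]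
      exact (integral_interval_sub_left
        (hII j' 0 (T + u * b j') (by simpa using hε.le) (hc1 j'))
        (hII j' 0 (u * b j') (by simpa using hε.le) (hcε j'))).symm
    have I2 : ∀ j', ∫ s in (0:ℝ)..T, ψ j' (s - u * b j')
        = G j' (T - u * b j') - G j' (-(u * b j')) := by
      intro j'
      rw [intervalIntegral.integral_comp_sub_right (ψ j') (u * b j'), zero_sub]
      exact (integral_interval_sub_left
        (hII j' 0 (T - u * b j') (by simpa using hε.le) (hc2 j'))
        (hII j' 0 (-(u * b j')) (by simpa using hε.le) (hcε2 j'))).symm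
    calc ∑ j', (G j' (T + u * b j') - G j' (T - u * b j') - G j' (u * b j') + G j' (-(u * b j')))
        = ∑ j', ((∫ s in (0:ℝ)..T, ψ j' (s + u * b j')) - (∫ s in (0:ℝ)..T, ψ j' (s - u * b j'))) := by
          refine Finset.sum_congr rfl fun j' _ => ?_
          rw [I1 j', I2 j']; ring
      _ = ∑ j', ∫ s in (0:ℝ)..T, (ψ j' (s + u * b j') - ψ j' (s - u * b j')) := by
          refine Finset.sum_congr rfl fun j' _ => ?_
          rw [intervalIntegral.integral_sub (ItgAdd u hu j') (ItgSub u hu j')]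
      _ = ∫ s in (0:ℝ)..T, ∑ j', (ψ j' (s + u * b j') - ψ j' (s - u * b j')) :=
          (intervalIntegral.integral_finset_sum
            (fun j' _ => (ItgAdd u hu j').sub (ItgSub u hu j'))).symm
      _ = ∫ s in (0:ℝ)..T, (0:ℝ) := by
          refine intervalIntegral.integral_congr fun x hx => ?_
          rw [Finset.sum_sub_distrib, hsum x u (hmem x hx) hu, sub_self]
      _ = 0 := by simp
  -- derivatives
  have hAder : ∀ j', HasDerivAt
      (fun u : ℝ => G j' (T + u * b j') - G j' (T - u * b j') - G j' (u * b j') + G j' (-(u * b j')))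
      (ψ j' T * b j' + ψ j' T * b j') 0 := by
    intro j'
    have hbd : HasDerivAt (fun u : ℝ => u * b j') (b j') 0 := by
      simpa using (hasDerivAt_id (0:ℝ)).mul_const (b j')
    have h1 : HasDerivAt (fun u : ℝ => T + u * b j') (b j') 0 := hbd.const_add T
    have h2 : HasDerivAt (fun u : ℝ => T - u * b j') (-(b j')) 0 := by
      simpa [sub_eq_add_neg] using hbd.neg.const_add T
    have h4 : HasDerivAt (fun u : ℝ => -(u * b j')) (-(b j')) 0 := hbd.neg
    have e1 : T + 0 * b j' = T := by ring
    have e3 : (0:ℝ) * b j' = 0 := by ring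
    have A1 : HasDerivAt (fun u : ℝ => G j' (T + u * b j')) (ψ j' T * b j') 0 := by
      have hg : HasDerivAt (G j') (ψ j' (T + 0 * b j')) (T + 0 * b j') := by
        rw [e1]; exact hGderiv j' T hT
      simpa [e1, Function.comp_def] using hg.comp 0 h1
    have A2 : HasDerivAt (fun u : ℝ => G j' (T - u * b j')) (ψ j' T * -(b j')) 0 := by
      have e2 : T - 0 * b j' = T := by ring
      have hg : HasDerivAt (G j') (ψ j' (T - 0 * b j')) (T - 0 * b j') := by
        rw [e2]; exact hGderiv j' T hT
      simpa [e2, Function.comp_def] using hg.comp 0 h2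
    have A3 : HasDerivAt (fun u : ℝ => G j' (u * b j')) (ψ j' 0 * b j') 0 := by
      have hg : HasDerivAt (G j') (ψ j' ((0:ℝ) * b j')) ((0:ℝ) * b j') := by
        rw [e3]; exact hGderiv j' 0 (by simp; positivity)
      simpa [e3, Function.comp_def] using hg.comp 0 hbd
    have A4 : HasDerivAt (fun u : ℝ => G j' (-(u * b j'))) (ψ j' 0 * -(b j')) 0 := by
      have e4 : -((0:ℝ) * b j') = 0 := by ring
      have hg : HasDerivAt (G j') (ψ j' (-((0:ℝ) * b j'))) (-((0:ℝ) * b j')) := by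
        rw [e4]; exact hGderiv j' 0 (by simp; positivity)
      simpa [e4, Function.comp_def] using hg.comp 0 h4
    have := ((A1.sub A2).sub A3).add A4
    have heval : ψ j' T * b j' - ψ j' T * -(b j') - ψ j' 0 * b j' + ψ j' 0 * -(b j')
        = ψ j' T * b j' + ψ j' T * b j' := by rw [hψ0 j']; ring
    rwa [heval] at this
  have Hder : HasDerivAt
      (fun u : ℝ => ∑ j', (G j' (T + u * b j') - G j' (T - u * b j') - G j' (u * b j') + G j' (-(u * b j'))))
      (∑ j', (ψ j' T * b j' + ψ j' T * b j')) 0 :=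
    HasDerivAt.fun_sum fun j' _ => hAder j'
  have Hzero : HasDerivAt
      (fun u : ℝ => ∑ j', (G j' (T + u * b j') - G j' (T - u * b j') - G j' (u * b j') + G j' (-(u * b j'))))
      0 0 := by
    refine (hasDerivAt_const (0:ℝ) (0:ℝ)).congr_of_eventuallyEq ?_
    refine Metric.eventually_nhds_iff.mpr ⟨r, hr, fun y hy => ?_⟩
    exact hH0 y (by rw [Real.dist_eq, sub_zero] at hy; exact hy.le)
  have hsum0 : (∑ j', (ψ j' T * b j' + ψ j' T * b j')) = 0 := Hder.unique Hzero
  have hψT : ψ j T = 0 := by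
    have hz := (Finset.sum_eq_zero_iff_of_nonneg (fun j' _ => by
      have := hψnn j' T hTε
      have := (hb j').le
      positivity)).mp hsum0 j (Finset.mem_univ j)
    have := hb j
    nlinarith [hψnn j T hTε]
  have hlog : Real.log (φ j T) = 0 := by
    have h' : -Real.log (φ j T) = 0 := hψT
    linarith
  rcases Real.log_eq_zero.mp hlog with h | h | h
  · exact absurd h (hφpos j T hTε).ne'
  · exact h
  · nlinarith [hφpos j T hTε]


lemma integrable_exp_I' {α : Type*} [MeasurableSpace α] (ν : Measure α) [IsFiniteMeasure ν]
    (g : α → ℝ) (hg : Measurable g) :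
    Integrable (fun x => Complex.exp ((g x : ℝ) * Complex.I)) ν := by
  apply Integrable.mono' (integrable_const (1:ℝ))
    ((Complex.measurable_exp.comp ((Complex.measurable_ofReal.comp hg).mul_const I)).aestronglyMeasurable)
  exact Filter.Eventually.of_forall fun x => (Complex.norm_exp_ofReal_mul_I (g x)).le

lemma norm_one_dirac (ν : Measure ℝ) [IsProbabilityMeasure ν] (δ : ℝ) (hδ : 0 < δ)
    (h : ∀ t : ℝ, |t| ≤ δ → ‖∫ x, Complex.exp ((t * x : ℝ) * Complex.I) ∂ν‖ = 1) :
    ∃ c : ℝ, ν {c} = 1 := by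
  have key : ∀ t : ℝ, |t| ≤ δ → ∀ᵐ p ∂(ν.prod ν),
      ∃ k : ℤ, (k : ℝ) * (2 * Real.pi) = t * (p.1 - p.2) := by
    intro t ht
    have hmeas : Measurable fun p : ℝ × ℝ => t * (p.1 - p.2) :=
      (measurable_fst.sub measurable_snd).const_mul t
    have hint : Integrable (fun p : ℝ × ℝ => Complex.exp ((t * (p.1 - p.2) : ℝ) * I)) (ν.prod ν) :=
      integrable_exp_I' _ _ hmeas
    set f : ℂ := ∫ x, Complex.exp ((t * x : ℝ) * I) ∂ν with hfdef
    have hsplit : ∫ p, Complex.exp ((t * (p.1 - p.2) : ℝ) * I) ∂(ν.prod ν)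
        = f * (starRingEnd ℂ) f := by
      have e : ∀ p : ℝ × ℝ, Complex.exp ((t * (p.1 - p.2) : ℝ) * I)
          = Complex.exp ((t * p.1 : ℝ) * I) * Complex.exp (-((t * p.2 : ℝ) * I)) := by
        intro p; rw [← Complex.exp_add]; congr 1; push_cast; ring
      simp_rw [e]
      rw [integral_prod_mul (f := fun x : ℝ => Complex.exp ((t * x : ℝ) * I))
        (g := fun y : ℝ => Complex.exp (-((t * y : ℝ) * I)))]
      congr 1
      rw [← integral_conj]
      congr 1
      funext y
      rw [← Complex.exp_conj]
      congr 1
      simp [Complex.conj_I]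
    have hcos : ∫ p, Real.cos (t * (p.1 - p.2)) ∂(ν.prod ν) = 1 := by
      have h1 := integral_re hint
      simp only [RCLike.re_to_complex] at h1
      have h2 : (fun p : ℝ × ℝ => Real.cos (t * (p.1 - p.2)))
          = fun p : ℝ × ℝ => (Complex.exp ((t * (p.1 - p.2) : ℝ) * I)).re := by
        funext p; rw [Complex.exp_ofReal_mul_I_re]
      rw [h2, h1, hsplit, Complex.mul_conj]
      rw [Complex.ofReal_re, Complex.normSq_eq_norm_sq, h t ht]
      norm_num
    have hcos_int : Integrable (fun p : ℝ × ℝ => Real.cos (t * (p.1 - p.2))) (ν.prod ν) := by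
      apply Integrable.mono' (integrable_const (1:ℝ))
        (Real.measurable_cos.comp hmeas).aestronglyMeasurable
      exact Filter.Eventually.of_forall fun p => by
        rw [Real.norm_eq_abs]; exact Real.abs_cos_le_one _
    have hzero : ∫ p, (1 - Real.cos (t * (p.1 - p.2))) ∂(ν.prod ν) = 0 := by
      rw [integral_sub (integrable_const 1) hcos_int, hcos]
      simp
    have hae0 := (integral_eq_zero_iff_of_nonneg
      (f := fun p : ℝ × ℝ => 1 - Real.cos (t * (p.1 - p.2)))
      (fun p => by simp only [Pi.zero_apply, sub_nonneg]; exact Real.cos_le_one _)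
      (Integrable.sub (integrable_const 1) hcos_int)).mp hzero
    filter_upwards [hae0] with p hp
    have hc1 : Real.cos (t * (p.1 - p.2)) = 1 := by
      have : (1:ℝ) - Real.cos (t * (p.1 - p.2)) = 0 := hp
      linarith
    exact (Real.cos_eq_one_iff _).mp hc1
  have hsqrt1 : (1:ℝ) ≤ Real.sqrt 2 := by
    rw [show (1:ℝ) = Real.sqrt 1 by simp]
    exact Real.sqrt_le_sqrt (by norm_num)
  have hs2 : (0:ℝ) < Real.sqrt 2 := by linarith
  have hae : ∀ᵐ p ∂(ν.prod ν), p.1 = p.2 := by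
    filter_upwards [key δ (by rw [abs_of_pos hδ]), key (δ / Real.sqrt 2)
      (by rw [abs_of_pos (by positivity)]; exact div_le_self hδ.le hsqrt1)] with p h1 h2
    obtain ⟨k, hk⟩ := h1
    obtain ⟨m, hm⟩ := h2
    by_contra hne
    have hπ : (0:ℝ) < 2 * Real.pi := by positivity
    have e2 : ((m:ℝ) * Real.sqrt 2) * (2 * Real.pi) = δ * (p.1 - p.2) := by
      have : (m:ℝ) * (2 * Real.pi) * Real.sqrt 2 = (δ / Real.sqrt 2) * (p.1 - p.2) * Real.sqrt 2 := by
        rw [hm]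
      rw [div_mul_eq_mul_div, div_mul_eq_mul_div, mul_comm] at this
      field_simp at this
      nlinarith [this]
    have e3 : (k:ℝ) = m * Real.sqrt 2 := by
      have heq : (k:ℝ) * (2 * Real.pi) = ((m:ℝ) * Real.sqrt 2) * (2 * Real.pi) := by
        rw [hk]; linarith [e2]
      exact mul_right_cancel₀ hπ.ne' heq
    rcases eq_or_ne m 0 with hm0 | hm0
    · rw [hm0] at e3
      simp only [Int.cast_zero, zero_mul] at e3
      rw [e3, zero_mul] at hk
      rcases mul_eq_zero.mp hk.symm with h' | h'
      · exact hδ.ne' h'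
      · exact hne (sub_eq_zero.mp h')
    · have hmr : ((m:ℝ)) ≠ 0 := Int.cast_ne_zero.mpr hm0
      have : Real.sqrt 2 = (k:ℝ) / (m:ℝ) := by
        rw [e3]; field_simp
      exact irrational_sqrt_two ⟨(k:ℚ)/(m:ℚ), by push_cast; rw [this]⟩
  have hsdiag : MeasurableSet {p : ℝ × ℝ | p.1 = p.2} :=
    measurableSet_eq_fun measurable_fst measurable_snd
  have h0 : (ν.prod ν) ({p : ℝ × ℝ | p.1 = p.2}ᶜ) = 0 := by
    have := ae_iff.mp hae
    convert this using 2
    rfl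
  have hkey : ∫⁻ x, ν ({x}ᶜ) ∂ν = 0 := by
    rw [Measure.prod_apply hsdiag.compl] at h0
    rw [← h0]
    congr 1
    funext x
    congr 1
    ext y
    simp [eq_comm]
  have hmf : Measurable fun x : ℝ => ν ({x}ᶜ) := by
    have := measurable_measure_prodMk_left (ν := ν) hsdiag.compl
    convert this using 2 with x
    congr 1
    ext y
    simp [eq_comm]
  have hae2 : ∀ᵐ x ∂ν, ν ({x}ᶜ) = 0 := by
    have := (lintegral_eq_zero_iff hmf).mp hkey
    filter_upwards [this] with x hx using hx
  obtain ⟨c, hc⟩ := hae2.exists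
  exact ⟨c, (prob_compl_eq_zero_iff (measurableSet_singleton c)).mp hc⟩

end Aux

/-- Corollary to Heyde's theorem for `ℝ × ZMod 2`: if all coefficients of `L₂` are
positive (and those of `L₁` equal `1`), then shifts of the `μ_j` are concentrated
on the subgroup `{0} × ZMod 2`. -/
theorem heyde_R_Z2_positive_coefficients (n : ℕ) (hn : 2 ≤ n) (b : Fin n → ℝ)
    (hb : ∀ j, 0 < b j)
    (μ : Fin n → Measure (ℝ × ZMod 2)) (hμ : ∀ j, IsProbabilityMeasure (μ j))
    (hsym :
      Measure.map (fun x : Fin n → ℝ × ZMod 2 =>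
          (∑ j, x j, ∑ j, ((b j * (x j).1, (x j).2) : ℝ × ZMod 2))) (Measure.pi μ) =
      Measure.map (fun x : Fin n → ℝ × ZMod 2 =>
          (∑ j, x j, -∑ j, ((b j * (x j).1, (x j).2) : ℝ × ZMod 2))) (Measure.pi μ)) :
    ∀ j, ∃ x : ℝ × ZMod 2,
      Measure.conv (μ j) (Measure.dirac (-x)) {p : ℝ × ZMod 2 | p.1 = 0} = 1 := by
  haveI : ∀ j, IsProbabilityMeasure (μ j) := hμ
  -- first marginals
  set ν : Fin n → Measure ℝ := fun j => (μ j).map Prod.fst with hνdef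
  haveI hνprob : ∀ j, IsProbabilityMeasure (ν j) :=
    fun j => Measure.isProbabilityMeasure_map measurable_fst.aemeasurable
  -- characteristic functions of the marginals
  set F : Fin n → ℝ → ℂ := fun j t => ∫ x, Complex.exp ((t * x : ℝ) * Complex.I) ∂ν j with hFdef
  have hFμ : ∀ j (t : ℝ), F j t = ∫ p, Complex.exp ((t * p.1 : ℝ) * Complex.I) ∂μ j := by
    intro j t
    rw [hFdef]
    simp only
    rw [hνdef]
    simp only
    exact integral_map measurable_fst.aemeasurable
      ((by fun_prop : Measurable fun x : ℝ => Complex.exp ((t * x : ℝ) * Complex.I)).aestronglyMeasurable)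
  -- measurability of the two maps
  have hT1 : Measurable (fun x : Fin n → ℝ × ZMod 2 =>
      (∑ j, x j, ∑ j, ((b j * (x j).1, (x j).2) : ℝ × ZMod 2))) := by
    refine Measurable.prod ?_ ?_ <;> simp only
    · exact Finset.measurable_sum _ fun j _ => measurable_pi_apply j
    · exact Finset.measurable_sum _ fun j _ => Measurable.prod (by fun_prop) (by fun_prop)
  have hT2 : Measurable (fun x : Fin n → ℝ × ZMod 2 =>
      (∑ j, x j, -∑ j, ((b j * (x j).1, (x j).2) : ℝ × ZMod 2))) := by
    refine Measurable.prod ?_ ?_ <;> simp only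
    · exact Finset.measurable_sum _ fun j _ => measurable_pi_apply j
    · exact (Finset.measurable_sum _ fun j _ => Measurable.prod (by fun_prop) (by fun_prop)).neg
  -- the product identity for characteristic functions
  have prodEq : ∀ s u : ℝ, ∏ j, F j (s + u * b j) = ∏ j, F j (s - u * b j) := by
    intro s u
    have hg : Measurable (fun y : (ℝ × ZMod 2) × (ℝ × ZMod 2) =>
        Complex.exp ((s * y.1.1 + u * y.2.1 : ℝ) * Complex.I)) := by
      have hr : Measurable fun y : (ℝ × ZMod 2) × (ℝ × ZMod 2) => s * y.1.1 + u * y.2.1 :=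
        (measurable_fst.fst.const_mul s).add (measurable_snd.fst.const_mul u)
      exact Complex.measurable_exp.comp ((Complex.measurable_ofReal.comp hr).mul_const I)
    have h0 : ∫ y, Complex.exp ((s * y.1.1 + u * y.2.1 : ℝ) * Complex.I)
          ∂(Measure.map (fun x : Fin n → ℝ × ZMod 2 =>
            (∑ j, x j, ∑ j, ((b j * (x j).1, (x j).2) : ℝ × ZMod 2))) (Measure.pi μ))
        = ∫ y, Complex.exp ((s * y.1.1 + u * y.2.1 : ℝ) * Complex.I)
          ∂(Measure.map (fun x : Fin n → ℝ × ZMod 2 =>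
            (∑ j, x j, -∑ j, ((b j * (x j).1, (x j).2) : ℝ × ZMod 2))) (Measure.pi μ)) := by
      rw [hsym]
    rw [integral_map hT1.aemeasurable hg.aestronglyMeasurable,
        integral_map hT2.aemeasurable hg.aestronglyMeasurable] at h0
    have e1 : ∀ x : Fin n → ℝ × ZMod 2,
        Complex.exp ((s * (∑ j, x j).1 + u * (∑ j, ((b j * (x j).1, (x j).2) : ℝ × ZMod 2)).1 : ℝ)
          * Complex.I)
        = ∏ j, Complex.exp (((s + u * b j) * (x j).1 : ℝ) * Complex.I) := by
      intro x
      rw [← Complex.exp_sum]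
      congr 1
      rw [Prod.fst_sum, Prod.fst_sum]
      simp only
      have : s * (∑ j, (x j).1) + u * (∑ j, b j * (x j).1)
          = ∑ j, (s + u * b j) * (x j).1 := by
        rw [Finset.mul_sum, Finset.mul_sum, ← Finset.sum_add_distrib]
        exact Finset.sum_congr rfl fun j _ => by ring
      rw [this]
      push_cast
      rw [Finset.sum_mul]
    have e2 : ∀ x : Fin n → ℝ × ZMod 2,
        Complex.exp ((s * (∑ j, x j).1 + u * (-∑ j, ((b j * (x j).1, (x j).2) : ℝ × ZMod 2)).1 : ℝ)
          * Complex.I)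
        = ∏ j, Complex.exp (((s - u * b j) * (x j).1 : ℝ) * Complex.I) := by
      intro x
      rw [← Complex.exp_sum]
      congr 1
      rw [Prod.fst_neg, Prod.fst_sum, Prod.fst_sum]
      simp only
      have : s * (∑ j, (x j).1) + u * (-∑ j, b j * (x j).1)
          = ∑ j, (s - u * b j) * (x j).1 := by
        rw [Finset.mul_sum, mul_neg, Finset.mul_sum, ← sub_eq_add_neg, ← Finset.sum_sub_distrib]
        exact Finset.sum_congr rfl fun j _ => by ring
      rw [this]
      push_cast
      rw [Finset.sum_mul]
    simp only [Prod.fst, Prod.snd] at h0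
    simp only [e1, e2] at h0
    calc ∏ j, F j (s + u * b j)
        = ∏ j, ∫ p, Complex.exp (((s + u * b j) * p.1 : ℝ) * Complex.I) ∂μ j :=
          Finset.prod_congr rfl fun j _ => hFμ j _
      _ = ∫ x : Fin n → ℝ × ZMod 2, ∏ j, Complex.exp (((s + u * b j) * (x j).1 : ℝ) * Complex.I)
            ∂Measure.pi μ :=
          (pi_integral_prod μ hμ (fun j q => Complex.exp (((s + u * b j) * q.1 : ℝ) * Complex.I))).symm
      _ = ∫ x : Fin n → ℝ × ZMod 2, ∏ j, Complex.exp (((s - u * b j) * (x j).1 : ℝ) * Complex.I)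
            ∂Measure.pi μ := h0
      _ = ∏ j, ∫ p, Complex.exp (((s - u * b j) * p.1 : ℝ) * Complex.I) ∂μ j :=
          pi_integral_prod μ hμ (fun j q => Complex.exp (((s - u * b j) * q.1 : ℝ) * Complex.I))
      _ = ∏ j, F j (s - u * b j) := (Finset.prod_congr rfl fun j _ => (hFμ j _).symm)
  -- modulus functions
  set φ : Fin n → ℝ → ℝ := fun j t => ‖F j t‖ with hφdef
  have hφc : ∀ j, Continuous (φ j) := by
    intro j
    have h := charlike_continuous (ν j) id measurable_id
    simp only [id_eq] at h
    rw [hφdef]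
    simp only [hFdef]
    exact h.norm
  have hφ0 : ∀ j, φ j 0 = 1 := by
    intro j
    rw [hφdef]
    simp only [hFdef]
    simp
  have hφnn : ∀ j, ∀ t : ℝ, 0 ≤ φ j t := fun j t => norm_nonneg _
  have hφle : ∀ j, ∀ t : ℝ, φ j t ≤ 1 := by
    intro j t
    rw [hφdef]
    simp only [hFdef]
    calc ‖∫ x, Complex.exp ((t * x : ℝ) * Complex.I) ∂ν j‖
        ≤ ∫ x, ‖Complex.exp ((t * x : ℝ) * Complex.I)‖ ∂ν j := norm_integral_le_integral_norm _
      _ = 1 := by simp_rw [Complex.norm_exp_ofReal_mul_I]; simp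
  have hφeq : ∀ s u : ℝ, ∏ j, φ j (s + u * b j) = ∏ j, φ j (s - u * b j) := by
    intro s u
    rw [hφdef]
    simp only
    rw [← norm_prod, ← norm_prod, prodEq s u]
  obtain ⟨δ, hδ, hone⟩ := heyde_core n (by omega) b hb φ hφc hφ0 hφnn hφle hφeq
  intro j
  obtain ⟨c, hc⟩ := norm_one_dirac (ν j) δ hδ (fun t ht => by
    have h := hone j t ht
    rw [hφdef] at h
    simpa only [hFdef] using h)
  refine ⟨(c, 0), ?_⟩
  have hS : MeasurableSet {p : ℝ × ZMod 2 | p.1 = 0} :=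
    (measurableSet_singleton (0:ℝ)).preimage measurable_fst
  have haddm : Measurable fun p : ℝ × ZMod 2 => p + -((c, (0:ZMod 2))) :=
    measurable_add_const _
  have hconv : Measure.conv (μ j) (Measure.dirac (-((c, (0:ZMod 2)))))
      = Measure.map (fun p : ℝ × ZMod 2 => p + -((c, (0:ZMod 2)))) (μ j) := by
    unfold Measure.conv
    rw [Measure.prod_dirac]
    rw [Measure.map_map measurable_add measurable_prodMk_right]
    rfl
  rw [hconv, Measure.map_apply haddm hS]
  have hset : (fun p : ℝ × ZMod 2 => p + -((c, (0:ZMod 2)))) ⁻¹' {p : ℝ × ZMod 2 | p.1 = 0}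
      = Prod.fst ⁻¹' {c} := by
    ext p
    simp only [Set.mem_preimage, Set.mem_setOf_eq, Set.mem_singleton_iff, Prod.fst_add,
      Prod.fst_neg, add_neg_eq_zero]
  rw [hset]
  have hmarg : ν j {c} = μ j (Prod.fst ⁻¹' {c}) := by
    rw [hνdef]
    simp only
    exact Measure.map_apply measurable_fst (measurableSet_singleton c)
  rw [← hmarg, hc]
end

section
/- Let σ, σ′ ≥ 0 and β, β′, κ ∈ ℝ, and define f : ℝ × ℤ(2) → ℂ by f(s,0) = exp(−σ·s² + i·β·s) and f(s,1) = κ·exp(−σ′·s² + i·β′·s). Then: (i) there exist finite measures ν⁺, ν⁻ on X = ℝ × ℤ(2) such that f(s,l) = ∫ exp(i·s·t)·(−1)^(k·l) dν⁺(t,k) − ∫ exp(i·s·t)·(−1)^(k·l) dν⁻(t,k) for all (s,l) ∈ ℝ × ℤ(2), i.e. f is the characteristic function of a finite signed measure on X; (ii) if κ ≠ 0, then there exists a probability measure μ on X with μ̂ = f if and only if either (0 < σ′ < σ and 0 < |κ| ≤ √(σ′/σ)·exp(−(β−β′)²/(4(σ−σ′)))) or (σ = σ′, β = β′ and |κ|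 ≤ 1). -/
open MeasureTheory Complex

noncomputable section AuxSection
open ProbabilityTheory Real ENNReal NNReal Filter

set_option maxHeartbeats 1000000

namespace CharFnAux

lemma exp_helper2 (c A B W U V : ℂ) (h : A + B = W + (U + V)) :
    c * cexp A * cexp B = c * cexp W * (cexp U * cexp V) := by
  rw [mul_assoc, ← Complex.exp_add, h, Complex.exp_add, Complex.exp_add]; ring

lemma pdf_fourier (σ β s : ℝ) (hσ : 0 < σ) :
    ∫ t : ℝ, (gaussianPDFReal β (2*σ).toNNReal t : ℂ) * cexp (I*s*t)
      = cexp (-(σ:ℂ)*s^2 + I*β*s) := by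
  have h2σ : ((2*σ).toNNReal : ℝ) = 2*σ := Real.coe_toNNReal _ (by positivity)
  have hbpos : (0:ℝ) < 1/(4*σ) := by positivity
  have key := fourierIntegral_gaussian (b := ((1/(4*σ):ℝ) : ℂ)) (by simpa using hbpos) (s:ℂ)
  have hσ0 : σ ≠ 0 := ne_of_gt hσ
  have hsq : Real.sqrt (4*π*σ) ≠ 0 := Real.sqrt_ne_zero'.2 (by positivity)
  have hc : ((Real.sqrt (4*π*σ) : ℝ) : ℂ) ≠ 0 := Complex.ofReal_ne_zero.mpr hsq
  have hint : ∀ u : ℝ,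
      (gaussianPDFReal β (2*σ).toNNReal (u + β) : ℂ) * cexp (I*s*((u:ℂ)+(β:ℂ)))
      = ((Real.sqrt (4*π*σ))⁻¹ : ℝ) * cexp (I*β*s) *
        (cexp (I*s*u) * cexp (-((1/(4*σ):ℝ):ℂ) * u^2)) := by
    intro u
    unfold gaussianPDFReal
    rw [h2σ]
    have h4 : (2:ℝ) * π * (2*σ) = 4*π*σ := by ring
    rw [h4]
    push_cast
    apply exp_helper2
    field_simp
    ring
  calc ∫ t : ℝ, (gaussianPDFReal β (2*σ).toNNReal t : ℂ) * cexp (I*s*t)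
      = ∫ u : ℝ, (gaussianPDFReal β (2*σ).toNNReal (u+β) : ℂ) * cexp (I*s*((u:ℂ)+(β:ℂ))) := by
        rw [← integral_add_right_eq_self
          (fun t : ℝ => (gaussianPDFReal β (2*σ).toNNReal t : ℂ) * cexp (I*s*t)) β]
        push_cast
        rfl
    _ = ((Real.sqrt (4*π*σ))⁻¹ : ℝ) * cexp (I*β*s) *
        ∫ u : ℝ, cexp (I*(s:ℂ)*u) * cexp (-((1/(4*σ):ℝ):ℂ) * u^2) := by
        simp only [hint]; rw [integral_const_mul]
    _ = cexp (-(σ:ℂ)*s^2 + I*β*s) := by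
        rw [key]
        have h1 : ((π:ℂ) / ((1/(4*σ):ℝ):ℂ)) = ((4*π*σ : ℝ):ℂ) := by
          push_cast; field_simp
        rw [h1]
        have h2 : ((4*π*σ : ℝ):ℂ) ^ (1/2 : ℂ) = ((Real.sqrt (4*π*σ) : ℝ):ℂ) := by
          rw [show (1/2 : ℂ) = ((1/2 : ℝ):ℂ) by norm_num, ← Complex.ofReal_cpow (by positivity),
            Real.sqrt_eq_rpow]
        rw [h2]
        have h3 : (-(s:ℂ)^2/(4*((1/(4*σ):ℝ):ℂ))) = -(σ:ℂ)*s^2 := by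
          push_cast; field_simp
        rw [h3, show (-(σ:ℂ)*s^2 + I*β*s) = (I*β*s + -(σ:ℂ)*s^2) by ring,
          Complex.exp_add, Complex.ofReal_inv]
        rw [show ((Real.sqrt (4*π*σ):ℝ):ℂ)⁻¹ * cexp (I*↑β*↑s) *
            (↑(Real.sqrt (4*π*σ)) * cexp (-(σ:ℂ)*(s:ℂ)^2))
          = ((↑(Real.sqrt (4*π*σ)):ℂ)⁻¹ * ↑(Real.sqrt (4*π*σ))) *
            (cexp (I*↑β*↑s) * cexp (-(σ:ℂ)*(s:ℂ)^2)) from by ring,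
          inv_mul_cancel₀ hc, one_mul]

/-- integral against a withDensity-of-ofReal measure -/
lemma integral_withDensity_toNNReal {d : ℝ → ℝ} (hd : ∀ t, 0 ≤ d t) (hm : Measurable d)
    (g : ℝ → ℂ) :
    ∫ t, g t ∂(volume.withDensity fun t => ENNReal.ofReal (d t))
      = ∫ t, (d t : ℂ) * g t := by
  have h : (fun t => ENNReal.ofReal (d t)) = fun t => ((d t).toNNReal : ℝ≥0∞) := rfl
  rw [h, integral_withDensity_eq_integral_smul (hm.real_toNNReal) g]
  congr 1
  ext t
  rw [NNReal.smul_def, Real.coe_toNNReal _ (hd t), Complex.real_smul]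

lemma gauss_char (σ β : ℝ) (hσ : 0 ≤ σ) (s : ℝ) :
    ∫ t, cexp (I*(s:ℂ)*(t:ℂ)) ∂(gaussianReal β (2*σ).toNNReal)
      = cexp (-(σ:ℂ)*s^2 + I*β*s) := by
  rcases eq_or_lt_of_le hσ with h0 | hpos
  · have h : (2*σ).toNNReal = 0 := by simp [← h0]
    rw [h, gaussianReal_zero_var, integral_dirac]
    rw [← h0]
    push_cast
    ring_nf
  · have hne : (2*σ).toNNReal ≠ 0 := by
      simp only [ne_eq, Real.toNNReal_eq_zero, not_le]
      positivity
    rw [gaussianReal_of_var_ne_zero β hne]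
    rw [show (gaussianPDF β (2*σ).toNNReal)
      = fun x => ENNReal.ofReal (gaussianPDFReal β (2*σ).toNNReal x) from rfl]
    rw [integral_withDensity_toNNReal (gaussianPDFReal_nonneg β _)
      (measurable_gaussianPDFReal β _) _]
    exact pdf_fourier σ β s hpos

lemma F_meas (s : ℝ) (l : ZMod 2) :
    Measurable (fun x : ℝ × ZMod 2 => cexp (I * s * x.1) * (-1 : ℂ) ^ (x.2 * l).val) := by
  apply Measurable.mul
  · exact Complex.measurable_exp.comp
      ((measurable_const.mul (Complex.measurable_ofReal.comp measurable_fst)))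
  · exact (measurable_from_top (f := fun k : ZMod 2 => ((-1:ℂ)) ^ (k * l).val)).comp
      measurable_snd

lemma F_integrable (μ : Measure (ℝ × ZMod 2)) [IsFiniteMeasure μ] (s : ℝ) (l : ZMod 2) :
    Integrable (fun x : ℝ × ZMod 2 => cexp (I * s * x.1) * (-1 : ℂ) ^ (x.2 * l).val) μ := by
  refine (integrable_const (1:ℝ)).mono' ((F_meas s l).aestronglyMeasurable) ?_
  refine ae_of_all _ fun x => le_of_eq ?_
  rw [norm_mul, norm_pow, norm_neg, norm_one, one_pow, mul_one,
    Complex.norm_exp]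
  simp

lemma cexp_meas (s : ℝ) : Measurable (fun t : ℝ => cexp (I * s * t)) :=
  Complex.measurable_exp.comp (measurable_const.mul Complex.measurable_ofReal)

end CharFnAux

end AuxSection

/-- Characteristic function of a (finite) measure on `ℝ × ZMod 2`:
`ν̂(s,l) = ∫ exp(i·s·t)·(−1)^(k·l) dν(t,k)`. -/
noncomputable def charFn2 (ν : Measure (ℝ × ZMod 2)) (s : ℝ) (l : ZMod 2) : ℂ :=
  ∫ x, Complex.exp (Complex.I * s * x.1) * (-1 : ℂ) ^ (x.2 * l).val ∂ν

/-- The condition on the parameters in the definition of the class `Θ`. -/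
def ThetaCond (σ σ' β β' κ : ℝ) : Prop :=
  (0 < σ' ∧ σ' < σ ∧ 0 < |κ| ∧
    |κ| ≤ Real.sqrt (σ' / σ) * Real.exp (-(β - β') ^ 2 / (4 * (σ - σ')))) ∨
  (σ = σ' ∧ β = β' ∧ |κ| ≤ 1)

noncomputable section AuxSection2
open ProbabilityTheory Real ENNReal NNReal Filter

set_option maxHeartbeats 1000000

namespace CharFnAux

lemma charFn2_map (m : Measure ℝ) [IsFiniteMeasure m] (j : ZMod 2) (s : ℝ) (l : ZMod 2) :
    charFn2 (m.map (fun t => (t, j))) s l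
      = (-1 : ℂ) ^ ((j * l).val) * ∫ t, cexp (I*(s:ℂ)*(t:ℂ)) ∂m := by
  unfold charFn2
  rw [integral_map (measurable_prodMk_right (y := j)).aemeasurable
    ((F_meas s l).aestronglyMeasurable)]
  simp only
  rw [← integral_const_mul]
  congr 1; ext t; ring

lemma charFn2_add (μ ν : Measure (ℝ × ZMod 2)) [IsFiniteMeasure μ] [IsFiniteMeasure ν]
    (s : ℝ) (l : ZMod 2) :
    charFn2 (μ + ν) s l = charFn2 μ s l + charFn2 ν s l :=
  integral_add_measure (F_integrable μ s l) (F_integrable ν s l)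

lemma charFn2_smul (c : ℝ≥0∞) (μ : Measure (ℝ × ZMod 2)) (s : ℝ) (l : ZMod 2) :
    charFn2 (c • μ) s l = (c.toReal : ℂ) * charFn2 μ s l := by
  unfold charFn2
  rw [integral_smul_measure, Complex.real_smul]

instance map_fin (m : Measure ℝ) [IsFiniteMeasure m] (j : ZMod 2) :
    IsFiniteMeasure (m.map (fun t => (t, j))) := by
  constructor
  rw [Measure.map_apply (measurable_prodMk_right (y := j)) MeasurableSet.univ]
  exact lt_of_le_of_lt (measure_mono (Set.subset_univ _)) (measure_lt_top m _)

instance fst_fin (μ : Measure (ℝ × ZMod 2)) [IsFiniteMeasure μ] :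
    IsFiniteMeasure (μ.map Prod.fst) := by
  constructor
  rw [Measure.map_apply measurable_fst MeasurableSet.univ]
  exact lt_of_le_of_lt (measure_mono (Set.subset_univ _)) (measure_lt_top μ _)

lemma smul_fin (c : ℝ≥0∞) (hc : c ≠ ⊤) (μ : Measure (ℝ × ZMod 2)) [IsFiniteMeasure μ] :
    IsFiniteMeasure (c • μ) := by
  constructor
  rw [Measure.smul_apply, smul_eq_mul]
  exact ENNReal.mul_lt_top hc.lt_top (measure_lt_top μ _)

lemma charFn2_decomp (μ : Measure (ℝ × ZMod 2)) [IsFiniteMeasure μ] (s : ℝ) (l : ZMod 2) :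
    charFn2 μ s l
      = (∫ t, cexp (I*(s:ℂ)*(t:ℂ)) ∂((μ.restrict (Prod.snd ⁻¹' {(0 : ZMod 2)})).map Prod.fst))
        + (-1:ℂ)^(l.val) *
          ∫ t, cexp (I*(s:ℂ)*(t:ℂ))
            ∂((μ.restrict ((Prod.snd ⁻¹' {(0 : ZMod 2)})ᶜ)).map Prod.fst) := by
  have hA : MeasurableSet (Prod.snd ⁻¹' {(0 : ZMod 2)} : Set (ℝ × ZMod 2)) :=
    measurable_snd (measurableSet_singleton 0)
  have hg : ∀ (ν : Measure (ℝ × ZMod 2)),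
      AEStronglyMeasurable (fun t : ℝ => cexp (I*(s:ℂ)*(t:ℂ))) (ν.map Prod.fst) :=
    fun ν => (cexp_meas s).aestronglyMeasurable
  have h1 : ∫ t, cexp (I*(s:ℂ)*(t:ℂ)) ∂((μ.restrict (Prod.snd ⁻¹' {(0:ZMod 2)})).map Prod.fst)
      = ∫ x in Prod.snd ⁻¹' {(0:ZMod 2)}, cexp (I*(s:ℂ)*(x.1:ℂ)) ∂μ := by
    rw [integral_map measurable_fst.aemeasurable (hg _)]
  have h2 : ∫ t, cexp (I*(s:ℂ)*(t:ℂ)) ∂((μ.restrict ((Prod.snd ⁻¹' {(0:ZMod 2)})ᶜ)).map Prod.fst)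
      = ∫ x in (Prod.snd ⁻¹' {(0:ZMod 2)})ᶜ, cexp (I*(s:ℂ)*(x.1:ℂ)) ∂μ := by
    rw [integral_map measurable_fst.aemeasurable (hg _)]
  rw [h1, h2]
  unfold charFn2
  rw [← integral_add_compl hA (F_integrable μ s l)]
  congr 1
  · apply setIntegral_congr_fun hA
    intro x hx
    have hx0 : x.2 = 0 := hx
    simp only [hx0, zero_mul]
    norm_num [ZMod.val_zero]
  · rw [← integral_const_mul]
    apply setIntegral_congr_fun hA.compl
    intro x hx
    have hall : ∀ k : ZMod 2, k ≠ 0 → k = 1 := by decide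
    have hx1 : x.2 = 1 := hall x.2 hx
    simp only [hx1, one_mul]
    ring

/-- the Gaussian test factor -/
noncomputable def W (ε t₀ : ℝ) (s : ℝ) : ℂ := cexp (I*(-t₀:ℂ)*s) * cexp (-(ε:ℂ)*s^2)

lemma cpow_half (a : ℝ) (ha : 0 ≤ a) : ((a : ℂ)) ^ (1/2 : ℂ) = ((Real.sqrt a : ℝ) : ℂ) := by
  rw [show (1/2 : ℂ) = ((1/2 : ℝ):ℂ) by norm_num, ← Complex.ofReal_cpow ha, Real.sqrt_eq_rpow]

/-- Fourier-type integral of a Gaussian against W. -/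
lemma intB (σ β : ℝ) {ε : ℝ} (hε : 0 < ε) (t₀ : ℝ) (hσ : 0 ≤ σ) :
    ∫ s : ℝ, cexp (-(σ:ℂ)*s^2 + I*(β:ℂ)*s) * W ε t₀ s
      = ((Real.sqrt (π/(σ+ε)) * rexp (-(β-t₀)^2/(4*(σ+ε))) : ℝ) : ℂ) := by
  have hσε : (0:ℝ) < σ + ε := by linarith
  have key := fourierIntegral_gaussian (b := ((σ+ε:ℝ) : ℂ)) (by simpa using hσε) ((β - t₀ : ℝ):ℂ)
  have hpt : ∀ s : ℝ, cexp (-(σ:ℂ)*s^2 + I*(β:ℂ)*s) * W ε t₀ s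
      = cexp (I*((β - t₀:ℝ):ℂ)*s) * cexp (-((σ+ε:ℝ):ℂ)*s^2) := by
    intro s
    unfold W
    simp only [← mul_assoc, ← Complex.exp_add]
    congr 1
    push_cast
    ring
  simp only [hpt]
  rw [key]
  have h1 : ((π:ℂ) / ((σ+ε:ℝ):ℂ)) = ((π/(σ+ε) : ℝ):ℂ) := by push_cast; ring
  rw [h1, cpow_half _ (by positivity)]
  have h2 : -((β - t₀:ℝ):ℂ)^2/(4*((σ+ε:ℝ):ℂ)) = ((-(β-t₀)^2/(4*(σ+ε)) : ℝ) : ℂ) := by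
    push_cast; ring
  rw [h2, ← Complex.ofReal_exp, ← Complex.ofReal_mul]

lemma intW (σ β : ℝ) (hσ : 0 ≤ σ) {ε : ℝ} (hε : 0 < ε) (t₀ : ℝ) :
    Integrable (fun s : ℝ => cexp (-(σ:ℂ)*s^2 + I*(β:ℂ)*s) * W ε t₀ s) := by
  have h : (fun s : ℝ => cexp (-(σ:ℂ)*s^2 + I*(β:ℂ)*s) * W ε t₀ s)
      = fun s : ℝ => cexp (-((σ+ε:ℝ):ℂ)*s^2 + (I*((β - t₀:ℝ):ℂ))*s + 0) := by
    ext s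
    unfold W
    simp only [← mul_assoc, ← Complex.exp_add]
    congr 1
    push_cast
    ring
  rw [h]
  exact integrable_cexp_quadratic (by simpa using (by linarith : (0:ℝ) < σ + ε)) _ _

/-- positivity of the smoothed transform of a finite measure -/
lemma posA (ν : Measure ℝ) [IsFiniteMeasure ν] {ε : ℝ} (hε : 0 < ε) (t₀ : ℝ) :
    0 ≤ (∫ s : ℝ, (∫ t, cexp (I*(s:ℂ)*(t:ℂ)) ∂ν) * W ε t₀ s).re := by
  set r : ℝ → ℝ := fun t => Real.sqrt (π/ε) * rexp (-(t-t₀)^2/(4*ε)) with hr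
  have step1 : ∀ s : ℝ, (∫ t, cexp (I*(s:ℂ)*(t:ℂ)) ∂ν) * W ε t₀ s
      = ∫ t, cexp (I*(s:ℂ)*(t:ℂ)) * W ε t₀ s ∂ν := by
    intro s
    rw [← smul_eq_mul, ← integral_smul_const]
    simp only [smul_eq_mul]
  have hG : Continuous (fun z : ℝ × ℝ => cexp (I*(z.1:ℂ)*(z.2:ℂ)) * W ε t₀ z.1) := by
    unfold W
    fun_prop
  have hGnorm : ∀ z : ℝ × ℝ, ‖cexp (I*(z.1:ℂ)*(z.2:ℂ)) * W ε t₀ z.1‖ = rexp (-ε*z.1^2) := by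
    intro z
    unfold W
    rw [norm_mul, norm_mul]
    simp only [Complex.norm_exp]
    have e1 : (I*(z.1:ℂ)*(z.2:ℂ)).re = 0 := by simp
    have e2 : (I*(-t₀:ℂ)*(z.1:ℂ)).re = 0 := by simp
    have e3 : (-(ε:ℂ)*(z.1:ℂ)^2).re = -ε*z.1^2 := by
      simp [pow_two]
      try ring
    rw [e1, e2, e3]
    simp
  have hbound : Integrable (fun z : ℝ × ℝ => rexp (-ε*z.1^2) * 1) (volume.prod ν) :=
    Integrable.mul_prod (integrable_exp_neg_mul_sq hε) (integrable_const 1)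
  have hInt : Integrable (Function.uncurry fun s t : ℝ => cexp (I*(s:ℂ)*(t:ℂ)) * W ε t₀ s)
      (volume.prod ν) := by
    refine hbound.mono' hG.aestronglyMeasurable (ae_of_all _ fun z => ?_)
    rw [mul_one]
    exact le_of_eq (hGnorm z)
  have step3 : ∀ t : ℝ, (∫ s : ℝ, cexp (I*(s:ℂ)*(t:ℂ)) * W ε t₀ s) = ((r t : ℝ) : ℂ) := by
    intro t
    have key := fourierIntegral_gaussian (b := ((ε:ℝ) : ℂ)) (by simpa using hε) ((t - t₀ : ℝ):ℂ)
    have hpt : ∀ s : ℝ, cexp (I*(s:ℂ)*(t:ℂ)) * W ε t₀ s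
        = cexp (I*((t - t₀:ℝ):ℂ)*s) * cexp (-((ε:ℝ):ℂ)*s^2) := by
      intro s
      unfold W
      simp only [← mul_assoc, ← Complex.exp_add]
      congr 1
      push_cast
      ring
    simp only [hpt]
    rw [key]
    have h1 : ((π:ℂ) / ((ε:ℝ):ℂ)) = ((π/ε : ℝ):ℂ) := by push_cast; ring
    rw [h1, cpow_half _ (by positivity)]
    have h2 : -((t - t₀:ℝ):ℂ)^2/(4*((ε:ℝ):ℂ)) = ((-(t-t₀)^2/(4*ε) : ℝ) : ℂ) := by
      push_cast; ring
    rw [h2, ← Complex.ofReal_exp, ← Complex.ofReal_mul]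
  calc (0:ℝ) ≤ ∫ t, r t ∂ν := by
        apply integral_nonneg
        intro t
        positivity
    _ = (∫ s : ℝ, (∫ t, cexp (I*(s:ℂ)*(t:ℂ)) ∂ν) * W ε t₀ s).re := by
        simp only [step1]
        rw [integral_integral_swap hInt]
        simp only [step3]
        rw [show (∫ (y:ℝ), ((r y : ℝ):ℂ) ∂ν) = (((∫ (y:ℝ), r y ∂ν : ℝ)):ℂ) from integral_ofReal]
        rw [Complex.ofReal_re]

/-- divide through the fundamental inequality -/
lemma ratio_form {A A' k e e' : ℝ} (hA : 0 < A) (hA' : 0 < A')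
    (h : k * (Real.sqrt (π/A') * rexp e') ≤ Real.sqrt (π/A) * rexp e) :
    k ≤ Real.sqrt (A'/A) * rexp (e - e') := by
  have hpos : 0 < Real.sqrt (π/A') * rexp e' := by
    apply mul_pos _ (Real.exp_pos _)
    exact Real.sqrt_pos.2 (by positivity)
  have h2 : k ≤ (Real.sqrt (π/A) * rexp e) / (Real.sqrt (π/A') * rexp e') :=
    (le_div_iff₀ hpos).2 h
  refine h2.trans (le_of_eq ?_)
  rw [← div_mul_div_comm, Real.exp_sub, ← Real.sqrt_div (by positivity)]
  congr 2
  field_simp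

lemma one_lt_sqrt_two : (1:ℝ) < Real.sqrt 2 := by
  rw [show (1:ℝ) = Real.sqrt 1 from (Real.sqrt_one).symm]
  exact Real.sqrt_lt_sqrt (by norm_num) (by norm_num)

/-- quadratic with negative leading coefficient tends to -∞ -/
lemma quad_tendsto_atBot {c p q : ℝ} (hc : c < 0) :
    Tendsto (fun t : ℝ => c*t^2 + p*t + q) atTop atBot := by
  have hev : ∀ᶠ t in atTop, c*t^2 + p*t + q ≤ (c/2)*t^2 + q := by
    have hB := eventually_ge_atTop (max 0 (2*|p|/(-c)))
    filter_upwards [hB] with t ht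
    have ht0 : 0 ≤ t := le_trans (le_max_left _ _) ht
    have ht1 : 2*|p|/(-c) ≤ t := le_trans (le_max_right _ _) ht
    have hp : p*t ≤ |p| * t := mul_le_mul_of_nonneg_right (le_abs_self p) ht0
    have h2 : 2*|p| ≤ (-c)*t := by
      rw [div_le_iff₀ (by linarith)] at ht1
      linarith [ht1]
    have h3 : (0:ℝ) ≤ ((-c)*t - 2*|p|)*t := mul_nonneg (by linarith) ht0
    nlinarith [abs_nonneg p]
  have hbase : Tendsto (fun t : ℝ => (c/2)*t^2 + q) atTop atBot := by
    apply tendsto_atBot_add_const_right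
    exact (tendsto_pow_atTop two_ne_zero).const_mul_atTop_of_neg (by linarith)
  exact tendsto_atBot_mono' atTop hev hbase

/-- The forward real-analysis argument. -/
lemma thetaCond_of_K (σ σ' β β' κ : ℝ) (hσ : 0 ≤ σ) (hσ' : 0 ≤ σ') (hκ : κ ≠ 0)
    (H : ∀ ε : ℝ, 0 < ε → ∀ t₀ : ℝ,
      |κ| * (Real.sqrt (π/(σ'+ε)) * rexp (-(β'-t₀)^2/(4*(σ'+ε))))
        ≤ Real.sqrt (π/(σ+ε)) * rexp (-(β-t₀)^2/(4*(σ+ε)))) :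
    ThetaCond σ σ' β β' κ := by
  have habs : 0 < |κ| := abs_pos.2 hκ
  have H' : ∀ ε : ℝ, 0 < ε → ∀ t₀ : ℝ,
      |κ| ≤ Real.sqrt ((σ'+ε)/(σ+ε)) *
        rexp (-(β-t₀)^2/(4*(σ+ε)) - (-(β'-t₀)^2/(4*(σ'+ε)))) := by
    intro ε hε t₀
    exact ratio_form (by linarith) (by linarith) (H ε hε t₀)
  rcases lt_trichotomy σ σ' with hlt | heq | hgt
  · -- σ < σ' : contradiction
    exfalso
    have hApos : (0:ℝ) < σ + 1 := by positivity
    have hA'pos : (0:ℝ) < σ' + 1 := by positivity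
    have hc : 1/(4*(σ'+1)) - 1/(4*(σ+1)) < 0 := by
      have h1 : 1/(4*(σ'+1)) < 1/(4*(σ+1)) := by
        apply one_div_lt_one_div_of_lt (by linarith)
        linarith
      linarith
    have hQ : ∀ t : ℝ, -(β-t)^2/(4*(σ+1)) - (-(β'-t)^2/(4*(σ'+1)))
        = (1/(4*(σ'+1)) - 1/(4*(σ+1)))*t^2
          + (β/(2*(σ+1)) - β'/(2*(σ'+1)))*t
          + (β'^2/(4*(σ'+1)) - β^2/(4*(σ+1))) := by
      intro t
      field_simp
      ring
    have h4 : Tendsto (fun t : ℝ => -(β-t)^2/(4*(σ+1)) - (-(β'-t)^2/(4*(σ'+1))))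
        atTop atBot := by
      rw [show (fun t : ℝ => -(β-t)^2/(4*(σ+1)) - (-(β'-t)^2/(4*(σ'+1))))
        = fun t : ℝ => (1/(4*(σ'+1)) - 1/(4*(σ+1)))*t^2
          + (β/(2*(σ+1)) - β'/(2*(σ'+1)))*t
          + (β'^2/(4*(σ'+1)) - β^2/(4*(σ+1))) from funext hQ]
      exact quad_tendsto_atBot hc
    have h5 : Tendsto (fun t : ℝ => Real.sqrt ((σ'+1)/(σ+1)) *
        rexp (-(β-t)^2/(4*(σ+1)) - (-(β'-t)^2/(4*(σ'+1))))) atTop (nhds 0) := by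
      have h6 := ((Real.tendsto_exp_atBot).comp h4).const_mul (Real.sqrt ((σ'+1)/(σ+1)))
      simpa using h6
    have h7 : |κ| ≤ 0 := ge_of_tendsto' h5 fun t => H' 1 one_pos t
    linarith
  · -- σ = σ'
    by_cases hββ : β = β'
    · right
      refine ⟨heq, hββ, ?_⟩
      have h := H' 1 one_pos β
      rw [← heq, ← hββ] at h
      have e : ((σ+1):ℝ)/(σ+1) = 1 := div_self (by positivity)
      rw [e, Real.sqrt_one, one_mul] at h
      simpa using h
    · exfalso
      have hApos : (0:ℝ) < σ + 1 := by positivity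
      have hu : β' - β ≠ 0 := fun h => hββ (by linarith [sub_eq_zero.1 h])
      set t₀ := (β+β')/2 - (4*(σ+1)*Real.log (|κ|/2))/(2*(β'-β)) with ht₀
      have h := H' 1 one_pos t₀
      rw [← heq] at h
      have harg : -(β-t₀)^2/(4*(σ+1)) - (-(β'-t₀)^2/(4*(σ+1))) = Real.log (|κ|/2) := by
        rw [ht₀]
        field_simp
        ring
      rw [harg, Real.exp_log (by positivity),
        div_self (by positivity : ((σ+1):ℝ) ≠ 0), Real.sqrt_one, one_mul] at h
      linarith
  · -- σ' < σ
    rcases eq_or_lt_of_le hσ' with h0 | hσ'pos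
    · -- σ' = 0 : contradiction
      exfalso
      have hσpos : 0 < σ := by linarith
      set ε := σ*κ^2/2 with hε
      have hκsq : 0 < κ^2 := by positivity
      have hεpos : 0 < ε := by rw [hε]; positivity
      have h := H' ε hεpos β'
      rw [← h0] at h
      have hb1 : Real.sqrt ((0+ε)/(σ+ε)) *
          rexp (-(β-β')^2/(4*(σ+ε)) - (-(β'-β')^2/(4*(0+ε))))
          ≤ Real.sqrt (ε/σ) * 1 := by
        apply mul_le_mul
        · apply Real.sqrt_le_sqrt
          rw [zero_add]
          exact div_le_div_of_nonneg_left (le_of_lt hεpos) hσpos (by linarith)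
        · rw [Real.exp_le_one_iff]
          have h9 : (0:ℝ) ≤ (β-β')^2/(4*(σ+ε)) := by positivity
          simp only [sub_self, neg_zero, ne_eq, OfNat.ofNat_ne_zero,
            not_false_eq_true, zero_pow, zero_div, sub_zero]
          rw [neg_div]
          linarith
        · positivity
        · positivity
      have hb2 : Real.sqrt (ε/σ) = |κ|/Real.sqrt 2 := by
        rw [hε, show σ*κ^2/2/σ = κ^2/2 from by field_simp,
          Real.sqrt_div (sq_nonneg κ), Real.sqrt_sq_eq_abs]
      rw [mul_one, hb2] at hb1
      have hle : |κ| ≤ |κ|/Real.sqrt 2 := le_trans h hb1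
      have h2 : |κ|/Real.sqrt 2 < |κ| := div_lt_self habs one_lt_sqrt_two
      linarith
    · -- 0 < σ' < σ : the main bound
      left
      refine ⟨hσ'pos, hgt, habs, ?_⟩
      have key : ∀ ε : ℝ, 0 < ε →
          |κ| ≤ Real.sqrt ((σ'+ε)/(σ+ε)) * rexp (-(β - β')^2/(4*(σ-σ'))) := by
        intro ε hε
        have h := H' ε hε ((β'*(σ+ε) - β*(σ'+ε))/(σ - σ'))
        have h1 : σ - σ' ≠ 0 := by intro h'; linarith
        have h2 : σ + ε ≠ 0 := by intro h'; linarith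
        have h3 : σ' + ε ≠ 0 := by intro h'; linarith
        have harg : -(β-((β'*(σ+ε) - β*(σ'+ε))/(σ - σ')))^2/(4*(σ+ε))
            - (-(β'-((β'*(σ+ε) - β*(σ'+ε))/(σ - σ')))^2/(4*(σ'+ε)))
            = -(β - β')^2/(4*(σ-σ')) := by
          field_simp
          ring
        rwa [harg] at h
      have hlim : Tendsto (fun ε : ℝ => Real.sqrt ((σ'+ε)/(σ+ε)) * rexp (-(β - β')^2/(4*(σ-σ'))))
          (nhdsWithin 0 (Set.Ioi 0)) (nhds (Real.sqrt (σ'/σ) * rexp (-(β - β')^2/(4*(σ-σ'))))) := by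
        have hct : ContinuousAt (fun ε : ℝ => Real.sqrt ((σ'+ε)/(σ+ε)) *
            rexp (-(β - β')^2/(4*(σ-σ')))) 0 := by
          apply ContinuousAt.mul _ continuousAt_const
          apply Real.continuous_sqrt.continuousAt.comp
          apply ContinuousAt.div
          · exact continuousAt_const.add continuousAt_id
          · exact continuousAt_const.add continuousAt_id
          · simp only [id_eq, add_zero]
            intro h'
            linarith
        have h8 := hct.tendsto.mono_left (nhdsWithin_le_nhds (s := Set.Ioi (0:ℝ)))
        simpa using h8
      have hfin := ge_of_tendsto hlim
        (eventually_nhdsWithin_of_forall (fun ε (hε : ε ∈ Set.Ioi 0) => key ε hε))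
      exact hfin

/-- pointwise density domination in the main case -/
lemma density_dom (σ σ' β β' κ : ℝ) (h1 : 0 < σ') (h2 : σ' < σ)
    (h3 : |κ| ≤ Real.sqrt (σ'/σ) * rexp (-(β - β')^2/(4*(σ - σ')))) (t : ℝ) :
    |κ| * gaussianPDFReal β' (2*σ').toNNReal t ≤ gaussianPDFReal β (2*σ).toNNReal t := by
  have hσ : 0 < σ := by linarith
  unfold gaussianPDFReal
  rw [Real.coe_toNNReal _ (by positivity : (0:ℝ) ≤ 2*σ),
    Real.coe_toNNReal _ (by positivity : (0:ℝ) ≤ 2*σ')]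
  have hσσ' : (0:ℝ) < σ - σ' := by linarith
  set x := t - β with hx
  set y := t - β' with hy
  have hsqid : Real.sqrt (σ'/σ) * (Real.sqrt (2*π*(2*σ')))⁻¹ = (Real.sqrt (2*π*(2*σ)))⁻¹ := by
    rw [← Real.sqrt_inv, ← Real.sqrt_mul (by positivity), ← Real.sqrt_inv]
    congr 1
    field_simp
  have hexp : rexp (-(β - β')^2/(4*(σ - σ'))) * rexp (-y^2/(2*(2*σ')))
      ≤ rexp (-x^2/(2*(2*σ))) := by
    rw [← Real.exp_add, Real.exp_le_exp]
    have hkey : x^2/(4*σ) ≤ (β-β')^2/(4*(σ-σ')) + y^2/(4*σ') := by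
      have hββ' : β - β' = y - x := by rw [hx, hy]; ring
      rw [hββ']
      rw [div_add_div _ _ (by positivity : (4:ℝ)*(σ-σ') ≠ 0) (by positivity : (4:ℝ)*σ' ≠ 0),
        div_le_div_iff₀ (by positivity) (by positivity)]
      nlinarith [sq_nonneg (σ*y - σ'*x), sq_nonneg (y-x), h1, h2]
    have e1 : -(x^2)/(2*(2*σ)) = -(x^2/(4*σ)) := by ring
    have e2 : -(y^2)/(2*(2*σ')) = -(y^2/(4*σ')) := by ring
    rw [e1, e2, neg_div]
    linarith
  calc |κ| * ((Real.sqrt (2*π*(2*σ')))⁻¹ * rexp (-y^2/(2*(2*σ'))))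
      ≤ (Real.sqrt (σ'/σ) * rexp (-(β - β')^2/(4*(σ - σ')))) *
        ((Real.sqrt (2*π*(2*σ')))⁻¹ * rexp (-y^2/(2*(2*σ')))) := by
        apply mul_le_mul_of_nonneg_right h3
        positivity
    _ = (Real.sqrt (2*π*(2*σ)))⁻¹ *
        (rexp (-(β - β')^2/(4*(σ - σ'))) * rexp (-y^2/(2*(2*σ')))) := by
        rw [← hsqid]; ring
    _ ≤ (Real.sqrt (2*π*(2*σ)))⁻¹ * rexp (-x^2/(2*(2*σ))) := by
        apply mul_le_mul_of_nonneg_left hexp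
        positivity


lemma pdf_mul_int (σ β : ℝ) (s : ℝ) :
    Integrable (fun t : ℝ => (gaussianPDFReal β (2*σ).toNNReal t : ℂ) * cexp (I*s*t)) := by
  have h := (integrable_gaussianPDFReal β (2*σ).toNNReal).ofReal (𝕜 := ℂ)
  have h2 := h.bdd_mul ((cexp_meas s).aestronglyMeasurable)
    (c := 1) (ae_of_all _ fun t => by
      rw [Complex.norm_exp]
      simp)
  simpa [mul_comm] using h2

lemma restrict_fin (μ : Measure (ℝ × ZMod 2)) [IsFiniteMeasure μ] (A : Set (ℝ × ZMod 2)) :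
    IsFiniteMeasure (μ.restrict A) := by
  constructor
  rw [Measure.restrict_apply_univ]
  exact measure_lt_top μ A

/-- characteristic integral of a signed-combination-of-gaussians density -/
lemma char_withDensity (σ σ' β β' : ℝ) (hσ : 0 < σ) (hσ' : 0 < σ') (c : ℝ) (s : ℝ)
    (hd : ∀ t, 0 ≤ (gaussianPDFReal β (2*σ).toNNReal t
      + c * gaussianPDFReal β' (2*σ').toNNReal t)/2) :
    ∫ t, cexp (I*(s:ℂ)*(t:ℂ)) ∂(volume.withDensity (fun t =>
        ENNReal.ofReal ((gaussianPDFReal β (2*σ).toNNReal t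
          + c * gaussianPDFReal β' (2*σ').toNNReal t)/2)))
      = (1/2:ℂ) * cexp (-(σ:ℂ)*s^2 + I*β*s) + ((c:ℂ)/2) * cexp (-(σ':ℂ)*s^2 + I*β'*s) := by
  have hm : Measurable (fun t => (gaussianPDFReal β (2*σ).toNNReal t
      + c * gaussianPDFReal β' (2*σ').toNNReal t)/2) :=
    ((measurable_gaussianPDFReal _ _).add
      ((measurable_gaussianPDFReal _ _).const_mul c)).div_const 2
  rw [integral_withDensity_toNNReal hd hm]
  have hpt : ∀ t : ℝ, (((gaussianPDFReal β (2*σ).toNNReal t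
        + c * gaussianPDFReal β' (2*σ').toNNReal t)/2 : ℝ):ℂ) * cexp (I*(s:ℂ)*(t:ℂ))
      = (1/2:ℂ) * ((gaussianPDFReal β (2*σ).toNNReal t : ℂ) * cexp (I*s*t))
        + ((c:ℂ)/2) * ((gaussianPDFReal β' (2*σ').toNNReal t : ℂ) * cexp (I*s*t)) := by
    intro t
    push_cast
    ring
  simp only [hpt]
  rw [integral_add ((pdf_mul_int σ β s).const_mul _) ((pdf_mul_int σ' β' s).const_mul _),
    integral_const_mul, integral_const_mul, pdf_fourier σ β s hσ, pdf_fourier σ' β' s hσ']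

/-- total mass of a signed-combination-of-gaussians density -/
lemma mass_withDensity (σ σ' β β' : ℝ) (hσ : 0 < σ) (hσ' : 0 < σ') (c : ℝ)
    (hd : ∀ t, 0 ≤ (gaussianPDFReal β (2*σ).toNNReal t
      + c * gaussianPDFReal β' (2*σ').toNNReal t)/2) :
    (volume.withDensity (fun t => ENNReal.ofReal ((gaussianPDFReal β (2*σ).toNNReal t
        + c * gaussianPDFReal β' (2*σ').toNNReal t)/2))) Set.univ
      = ENNReal.ofReal ((1+c)/2) := by
  have hint : Integrable (fun t => (gaussianPDFReal β (2*σ).toNNReal t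
      + c * gaussianPDFReal β' (2*σ').toNNReal t)/2) :=
    ((integrable_gaussianPDFReal _ _).add
      ((integrable_gaussianPDFReal _ _).const_mul c)).div_const 2
  rw [withDensity_apply _ MeasurableSet.univ, Measure.restrict_univ,
    ← ofReal_integral_eq_lintegral_ofReal hint (ae_of_all _ hd)]
  congr 1
  rw [integral_div, integral_add (integrable_gaussianPDFReal _ _)
    ((integrable_gaussianPDFReal _ _).const_mul c), integral_const_mul,
    integral_gaussianPDFReal_eq_one β (by simp only [ne_eq, Real.toNNReal_eq_zero, not_le]; positivity),
    integral_gaussianPDFReal_eq_one β' (by simp only [ne_eq, Real.toNNReal_eq_zero, not_le]; positivity)]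
  ring

end CharFnAux

end AuxSection2

/-- The function `f(s,0) = exp(−σs²+iβs)`, `f(s,1) = κ·exp(−σ′s²+iβ′s)` is the
characteristic function of a finite signed measure on `ℝ × ZMod 2`, and (for `κ ≠ 0`)
it is the characteristic function of a probability measure iff the `Θ`-condition holds. -/
theorem signed_measure_char_fn_R_Z2 (σ σ' β β' κ : ℝ) (hσ : 0 ≤ σ) (hσ' : 0 ≤ σ')
    (f : ℝ → ZMod 2 → ℂ)
    (hf0 : ∀ s : ℝ, f s 0 = Complex.exp (-(σ : ℂ) * s ^ 2 + Complex.I * β * s))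
    (hf1 : ∀ s : ℝ, f s 1 =
      (κ : ℂ) * Complex.exp (-(σ' : ℂ) * s ^ 2 + Complex.I * β' * s)) :
    (∃ νp νm : Measure (ℝ × ZMod 2), IsFiniteMeasure νp ∧ IsFiniteMeasure νm ∧
      ∀ (s : ℝ) (l : ZMod 2), f s l = charFn2 νp s l - charFn2 νm s l) ∧
    (κ ≠ 0 →
      ((∃ μ : Measure (ℝ × ZMod 2), IsProbabilityMeasure μ ∧
          ∀ (s : ℝ) (l : ZMod 2), charFn2 μ s l = f s l) ↔
        ThetaCond σ σ' β β' κ)) := by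
  classical
  open CharFnAux ProbabilityTheory Real in
  constructor
  · -- part (i)
    set G : Measure ℝ := ProbabilityTheory.gaussianReal β (2*σ).toNNReal with hG
    set Hm : Measure ℝ := ProbabilityTheory.gaussianReal β' (2*σ').toNNReal with hHm
    haveI : IsProbabilityMeasure G := by rw [hG]; infer_instance
    haveI : IsProbabilityMeasure Hm := by rw [hHm]; infer_instance
    set a := max κ 0 with ha
    set b := max (-κ) 0 with hb
    have ha0 : (0:ℝ) ≤ a := le_max_right _ _
    have hb0 : (0:ℝ) ≤ b := le_max_right _ _
    have hab : a - b = κ := by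
      rcases le_total 0 κ with h | h
      · rw [ha, hb, max_eq_left h, max_eq_right (neg_nonpos.mpr h)]; ring
      · rw [ha, hb, max_eq_right h, max_eq_left (neg_nonneg.mpr h)]; ring
    have habC : (a:ℂ) - (b:ℂ) = (κ:ℂ) := by exact_mod_cast hab
    haveI i1 := CharFnAux.smul_fin (ENNReal.ofReal (1/2)) ENNReal.ofReal_ne_top
      (G.map (fun t => (t, (0:ZMod 2))))
    haveI i2 := CharFnAux.smul_fin (ENNReal.ofReal (a/2)) ENNReal.ofReal_ne_top
      (Hm.map (fun t => (t, (0:ZMod 2))))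
    haveI i3 := CharFnAux.smul_fin (ENNReal.ofReal (1/2)) ENNReal.ofReal_ne_top
      (G.map (fun t => (t, (1:ZMod 2))))
    haveI i4 := CharFnAux.smul_fin (ENNReal.ofReal (b/2)) ENNReal.ofReal_ne_top
      (Hm.map (fun t => (t, (1:ZMod 2))))
    haveI i5 := CharFnAux.smul_fin (ENNReal.ofReal (b/2)) ENNReal.ofReal_ne_top
      (Hm.map (fun t => (t, (0:ZMod 2))))
    haveI i6 := CharFnAux.smul_fin (ENNReal.ofReal (a/2)) ENNReal.ofReal_ne_top
      (Hm.map (fun t => (t, (1:ZMod 2))))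
    refine ⟨(ENNReal.ofReal (1/2)) • (G.map (fun t => (t, (0:ZMod 2))))
        + (ENNReal.ofReal (a/2)) • (Hm.map (fun t => (t, (0:ZMod 2))))
        + ((ENNReal.ofReal (1/2)) • (G.map (fun t => (t, (1:ZMod 2))))
          + (ENNReal.ofReal (b/2)) • (Hm.map (fun t => (t, (1:ZMod 2))))),
      (ENNReal.ofReal (b/2)) • (Hm.map (fun t => (t, (0:ZMod 2))))
        + (ENNReal.ofReal (a/2)) • (Hm.map (fun t => (t, (1:ZMod 2)))),
      inferInstance, inferInstance, ?_⟩
    intro s l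
    have t1 : (ENNReal.ofReal (1/2 : ℝ)).toReal = 1/2 := ENNReal.toReal_ofReal (by norm_num)
    have t2 : (ENNReal.ofReal (a/2)).toReal = a/2 :=
      ENNReal.toReal_ofReal (by positivity)
    have t3 : (ENNReal.ofReal (b/2)).toReal = b/2 :=
      ENNReal.toReal_ofReal (by positivity)
    simp only [charFn2_add, charFn2_smul, charFn2_map, t1, t2, t3, hG, hHm,
      gauss_char σ β hσ, gauss_char σ' β' hσ']
    rcases (show ∀ l : ZMod 2, l = 0 ∨ l = 1 by decide) l with rfl | rfl
    · rw [hf0 s]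
      rw [show (((0:ZMod 2) * (0:ZMod 2)).val) = 0 from rfl,
        show (((1:ZMod 2) * (0:ZMod 2)).val) = 0 from rfl]
      push_cast
      ring
    · rw [hf1 s]
      rw [show (((0:ZMod 2) * (1:ZMod 2)).val) = 0 from rfl,
        show (((1:ZMod 2) * (1:ZMod 2)).val) = 1 from rfl]
      push_cast
      linear_combination (-(Complex.exp (-(σ':ℂ) * s ^ 2 + Complex.I * β' * s))) * habC
  · -- part (ii)
    intro hκ
    constructor
    · -- forward
      rintro ⟨μ, hprob, hchar⟩
      apply CharFnAux.thetaCond_of_K σ σ' β β' κ hσ hσ' hκ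
      intro ε hε t₀
      haveI hfr : IsFiniteMeasure (μ.restrict (Prod.snd ⁻¹' {(0:ZMod 2)})) :=
        CharFnAux.restrict_fin μ _
      haveI hfrc : IsFiniteMeasure (μ.restrict ((Prod.snd ⁻¹' {(0:ZMod 2)})ᶜ)) :=
        CharFnAux.restrict_fin μ _
      have e0 : ∀ s : ℝ,
          (∫ t, cexp (I*(s:ℂ)*(t:ℂ)) ∂((μ.restrict (Prod.snd ⁻¹' {(0:ZMod 2)})).map Prod.fst))
          + (∫ t, cexp (I*(s:ℂ)*(t:ℂ))
              ∂((μ.restrict ((Prod.snd ⁻¹' {(0:ZMod 2)})ᶜ)).map Prod.fst))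
          = cexp (-(σ:ℂ)*s^2 + I*β*s) := by
        intro s
        have h := (hchar s 0).trans (hf0 s)
        rw [charFn2_decomp μ s 0] at h
        simpa using h
      have e1 : ∀ s : ℝ,
          (∫ t, cexp (I*(s:ℂ)*(t:ℂ)) ∂((μ.restrict (Prod.snd ⁻¹' {(0:ZMod 2)})).map Prod.fst))
          - (∫ t, cexp (I*(s:ℂ)*(t:ℂ))
              ∂((μ.restrict ((Prod.snd ⁻¹' {(0:ZMod 2)})ᶜ)).map Prod.fst))
          = (κ:ℂ) * cexp (-(σ':ℂ)*s^2 + I*β'*s) := by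
        intro s
        have h := (hchar s 1).trans (hf1 s)
        rw [charFn2_decomp μ s 1] at h
        rw [show ((1:ZMod 2)).val = 1 from rfl, pow_one] at h
        linear_combination h
      set X := Real.sqrt (π/(σ+ε)) * rexp (-(β-t₀)^2/(4*(σ+ε))) with hX
      set Y := Real.sqrt (π/(σ'+ε)) * rexp (-(β'-t₀)^2/(4*(σ'+ε))) with hY
      have hg_int := CharFnAux.intW σ β hσ hε t₀
      have hh_int := CharFnAux.intW σ' β' hσ' hε t₀
      -- ν₁ bound
      have hpt1 : ∀ s : ℝ,
          (∫ t, cexp (I*(s:ℂ)*(t:ℂ))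
            ∂((μ.restrict ((Prod.snd ⁻¹' {(0:ZMod 2)})ᶜ)).map Prod.fst)) * W ε t₀ s
          = (1/2:ℂ) * (cexp (-(σ:ℂ)*s^2 + I*(β:ℂ)*s) * W ε t₀ s)
            - ((κ:ℂ)/2) * (cexp (-(σ':ℂ)*s^2 + I*(β':ℂ)*s) * W ε t₀ s) := by
        intro s
        have h0 := e0 s
        have h1 := e1 s
        linear_combination (CharFnAux.W ε t₀ s / 2) * h0 - (CharFnAux.W ε t₀ s / 2) * h1
      have hpt0 : ∀ s : ℝ,
          (∫ t, cexp (I*(s:ℂ)*(t:ℂ))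
            ∂((μ.restrict (Prod.snd ⁻¹' {(0:ZMod 2)})).map Prod.fst)) * W ε t₀ s
          = (1/2:ℂ) * (cexp (-(σ:ℂ)*s^2 + I*(β:ℂ)*s) * W ε t₀ s)
            + ((κ:ℂ)/2) * (cexp (-(σ':ℂ)*s^2 + I*(β':ℂ)*s) * W ε t₀ s) := by
        intro s
        have h0 := e0 s
        have h1 := e1 s
        linear_combination (CharFnAux.W ε t₀ s / 2) * h0 + (CharFnAux.W ε t₀ s / 2) * h1
      have hpos1 := CharFnAux.posA
        ((μ.restrict ((Prod.snd ⁻¹' {(0:ZMod 2)})ᶜ)).map Prod.fst) hε t₀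
      have hpos0 := CharFnAux.posA
        ((μ.restrict (Prod.snd ⁻¹' {(0:ZMod 2)})).map Prod.fst) hε t₀
      rw [show (fun s : ℝ => (∫ t, cexp (I*(s:ℂ)*(t:ℂ))
            ∂((μ.restrict ((Prod.snd ⁻¹' {(0:ZMod 2)})ᶜ)).map Prod.fst)) * W ε t₀ s)
          = fun s : ℝ => (1/2:ℂ) * (cexp (-(σ:ℂ)*s^2 + I*(β:ℂ)*s) * W ε t₀ s)
            - ((κ:ℂ)/2) * (cexp (-(σ':ℂ)*s^2 + I*(β':ℂ)*s) * W ε t₀ s) from funext hpt1,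
        integral_sub (hg_int.const_mul _) (hh_int.const_mul _),
        integral_const_mul, integral_const_mul,
        CharFnAux.intB σ β hε t₀ hσ, CharFnAux.intB σ' β' hε t₀ hσ', ← hX, ← hY,
        show ((1/2:ℂ) * (X:ℂ) - ((κ:ℂ)/2) * (Y:ℂ)) = (((X - κ*Y)/2 : ℝ) : ℂ) from by
          push_cast; ring,
        Complex.ofReal_re] at hpos1
      rw [show (fun s : ℝ => (∫ t, cexp (I*(s:ℂ)*(t:ℂ))
            ∂((μ.restrict (Prod.snd ⁻¹' {(0:ZMod 2)})).map Prod.fst)) * W ε t₀ s)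
          = fun s : ℝ => (1/2:ℂ) * (cexp (-(σ:ℂ)*s^2 + I*(β:ℂ)*s) * W ε t₀ s)
            + ((κ:ℂ)/2) * (cexp (-(σ':ℂ)*s^2 + I*(β':ℂ)*s) * W ε t₀ s) from funext hpt0,
        integral_add (hg_int.const_mul _) (hh_int.const_mul _),
        integral_const_mul, integral_const_mul,
        CharFnAux.intB σ β hε t₀ hσ, CharFnAux.intB σ' β' hε t₀ hσ', ← hX, ← hY,
        show ((1/2:ℂ) * (X:ℂ) + ((κ:ℂ)/2) * (Y:ℂ)) = (((X + κ*Y)/2 : ℝ) : ℂ) from by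
          push_cast; ring,
        Complex.ofReal_re] at hpos0
      rcases abs_cases κ with ⟨heq, _⟩ | ⟨heq, _⟩ <;> rw [heq] <;> linarith
    · -- backward
      intro htheta
      rcases htheta with ⟨hσ'pos, hlt, hκpos, hbound⟩ | ⟨hσeq, hβeq, hκ1⟩
      · -- density case : 0 < σ' < σ
        have hσpos : 0 < σ := lt_trans hσ'pos hlt
        have hdom := CharFnAux.density_dom σ σ' β β' κ hσ'pos hlt hbound
        have hd : ∀ c : ℝ, |c| ≤ |κ| → ∀ t, 0 ≤ (gaussianPDFReal β (2*σ).toNNReal t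
            + c * gaussianPDFReal β' (2*σ').toNNReal t)/2 := by
          intro c hc t
          have h1 := hdom t
          have h2 : 0 ≤ gaussianPDFReal β' (2*σ').toNNReal t :=
            gaussianPDFReal_nonneg _ _ t
          have h3 : -|c| * gaussianPDFReal β' (2*σ').toNNReal t
              ≤ c * gaussianPDFReal β' (2*σ').toNNReal t :=
            mul_le_mul_of_nonneg_right (neg_abs_le c) h2
          have h4 : |c| * gaussianPDFReal β' (2*σ').toNNReal t
              ≤ |κ| * gaussianPDFReal β' (2*σ').toNNReal t :=
            mul_le_mul_of_nonneg_right hc h2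
          nlinarith
        have hdκ := hd κ le_rfl
        have hdκ' := hd (-κ) (by rw [abs_neg])
        have hmass0 := CharFnAux.mass_withDensity σ σ' β β' hσpos hσ'pos κ hdκ
        have hmass1 := CharFnAux.mass_withDensity σ σ' β β' hσpos hσ'pos (-κ) hdκ'
        haveI if0 : IsFiniteMeasure (volume.withDensity (fun t =>
            ENNReal.ofReal ((gaussianPDFReal β (2*σ).toNNReal t
              + κ * gaussianPDFReal β' (2*σ').toNNReal t)/2))) :=
          ⟨by rw [hmass0]; exact ENNReal.ofReal_lt_top⟩
        haveI if1 : IsFiniteMeasure (volume.withDensity (fun t =>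
            ENNReal.ofReal ((gaussianPDFReal β (2*σ).toNNReal t
              + (-κ) * gaussianPDFReal β' (2*σ').toNNReal t)/2))) :=
          ⟨by rw [hmass1]; exact ENNReal.ofReal_lt_top⟩
        have hκle : |κ| ≤ 1 := by
          have hsle : Real.sqrt (σ'/σ) ≤ 1 := by
            rw [show (1:ℝ) = Real.sqrt 1 from (Real.sqrt_one).symm]
            apply Real.sqrt_le_sqrt
            rw [div_le_one hσpos]
            linarith
          have hss : (0:ℝ) < σ - σ' := by linarith
          have hexple : Real.exp (-(β - β')^2/(4*(σ - σ'))) ≤ 1 := by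
            rw [Real.exp_le_one_iff, neg_div]
            have h9 : (0:ℝ) ≤ (β - β')^2/(4*(σ - σ')) := by positivity
            linarith
          calc |κ| ≤ Real.sqrt (σ'/σ) * Real.exp (-(β - β')^2/(4*(σ - σ'))) := hbound
            _ ≤ 1 * 1 := mul_le_mul hsle hexple (Real.exp_pos _).le (by norm_num)
            _ = 1 := by norm_num
        have hκ2 := abs_le.1 hκle
        refine ⟨(volume.withDensity (fun t =>
            ENNReal.ofReal ((gaussianPDFReal β (2*σ).toNNReal t
              + κ * gaussianPDFReal β' (2*σ').toNNReal t)/2))).map (fun t => (t,(0:ZMod 2)))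
          + (volume.withDensity (fun t =>
            ENNReal.ofReal ((gaussianPDFReal β (2*σ).toNNReal t
              + (-κ) * gaussianPDFReal β' (2*σ').toNNReal t)/2))).map (fun t => (t,(1:ZMod 2))),
          ?_, ?_⟩
        · constructor
          rw [Measure.add_apply,
            Measure.map_apply (measurable_prodMk_right (y := (0:ZMod 2))) MeasurableSet.univ,
            Measure.map_apply (measurable_prodMk_right (y := (1:ZMod 2))) MeasurableSet.univ]
          simp only [Set.preimage_univ]
          rw [hmass0, hmass1, ← ENNReal.ofReal_add (by linarith) (by linarith),
            show (1+κ)/2 + (1+(-κ))/2 = 1 from by ring, ENNReal.ofReal_one]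
        · intro s l
          have hc0 := CharFnAux.char_withDensity σ σ' β β' hσpos hσ'pos κ s hdκ
          have hc1 := CharFnAux.char_withDensity σ σ' β β' hσpos hσ'pos (-κ) s hdκ'
          rw [CharFnAux.charFn2_add, CharFnAux.charFn2_map, CharFnAux.charFn2_map, hc0, hc1]
          rcases (show ∀ l : ZMod 2, l = 0 ∨ l = 1 by decide) l with rfl | rfl
          · rw [hf0 s, show (((0:ZMod 2)*(0:ZMod 2)).val) = 0 from rfl,
              show (((1:ZMod 2)*(0:ZMod 2)).val) = 0 from rfl]
            push_cast
            ring
          · rw [hf1 s, show (((0:ZMod 2)*(1:ZMod 2)).val) = 0 from rfl,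
              show (((1:ZMod 2)*(1:ZMod 2)).val) = 1 from rfl]
            push_cast
            ring
      · -- σ = σ', β = β', |κ| ≤ 1
        rcases hσeq with rfl
        rcases hβeq with rfl
        have hκ2 := abs_le.1 hκ1
        haveI j1 := CharFnAux.smul_fin (ENNReal.ofReal ((1+κ)/2)) ENNReal.ofReal_ne_top
          ((ProbabilityTheory.gaussianReal β (2*σ).toNNReal).map (fun t => (t,(0:ZMod 2))))
        haveI j2 := CharFnAux.smul_fin (ENNReal.ofReal ((1-κ)/2)) ENNReal.ofReal_ne_top
          ((ProbabilityTheory.gaussianReal β (2*σ).toNNReal).map (fun t => (t,(1:ZMod 2))))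
        refine ⟨ENNReal.ofReal ((1+κ)/2) •
            ((ProbabilityTheory.gaussianReal β (2*σ).toNNReal).map (fun t => (t,(0:ZMod 2))))
          + ENNReal.ofReal ((1-κ)/2) •
            ((ProbabilityTheory.gaussianReal β (2*σ).toNNReal).map (fun t => (t,(1:ZMod 2)))),
          ?_, ?_⟩
        · constructor
          rw [Measure.add_apply, Measure.smul_apply, Measure.smul_apply,
            smul_eq_mul, smul_eq_mul,
            Measure.map_apply (measurable_prodMk_right (y := (0:ZMod 2))) MeasurableSet.univ,
            Measure.map_apply (measurable_prodMk_right (y := (1:ZMod 2))) MeasurableSet.univ]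
          simp only [Set.preimage_univ, measure_univ, mul_one]
          rw [← ENNReal.ofReal_add (by linarith) (by linarith),
            show (1+κ)/2 + (1-κ)/2 = 1 from by ring, ENNReal.ofReal_one]
        · intro s l
          simp only [CharFnAux.charFn2_add, CharFnAux.charFn2_smul, CharFnAux.charFn2_map,
            CharFnAux.gauss_char σ β hσ,
            ENNReal.toReal_ofReal (show (0:ℝ) ≤ (1+κ)/2 by linarith),
            ENNReal.toReal_ofReal (show (0:ℝ) ≤ (1-κ)/2 by linarith)]
          rcases (show ∀ l : ZMod 2, l = 0 ∨ l = 1 by decide) l with rfl | rfl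
          · rw [hf0 s, show (((0:ZMod 2)*(0:ZMod 2)).val) = 0 from rfl,
              show (((1:ZMod 2)*(0:ZMod 2)).val) = 0 from rfl]
            push_cast
            ring
          · rw [hf1 s, show (((0:ZMod 2)*(1:ZMod 2)).val) = 0 from rfl,
              show (((1:ZMod 2)*(1:ZMod 2)).val) = 1 from rfl]
            push_cast
            ring
end

section
/- Let ε > 0, let n ≥ 1, let c_1,…,c_n be pairwise distinct real numbers, and let ψ_1,…,ψ_n : ℝ → ℂ be continuous functions such that ∑_{j=1}^n ψ_j(s_1 + c_j·s_2) = 0 for all real s_1, s_2 with |s_1| < ε and |s_2| < ε. Then the functions ψ_j are polynomials in a neighborhood of zero: there exist δ > 0 and polynomials P_1,…,P_n ∈ ℂ[X] such that ψ_j(s) = P_j(s) for all j and all real s with |s| < δ. -/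
open Polynomial
noncomputable def antiderivP (Q : ℂ[X]) : ℂ[X] := Q.sum fun i a => C (a / (i+1)) * X^(i+1)

lemma antiderivP_derivative (Q : ℂ[X]) : derivative (antiderivP Q) = Q := by
  conv_rhs => rw [← Polynomial.sum_C_mul_X_pow_eq Q]
  rw [antiderivP, Polynomial.sum, Polynomial.sum, map_sum]
  refine Finset.sum_congr rfl fun i _ => ?_
  rw [derivative_C_mul, derivative_X_pow]
  rw [← mul_assoc, ← C_mul, Nat.add_sub_cancel]
  congr 1
  push_cast
  have h1 : (i:ℂ)+1 ≠ 0 := Nat.cast_add_one_ne_zero i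
  field_simp

lemma antiderivP_natDegree_le (Q : ℂ[X]) (d : ℕ) (h : Q.natDegree ≤ d) :
    (antiderivP Q).natDegree ≤ d + 1 := by
  refine Polynomial.natDegree_sum_le_of_forall_le _ _ fun i hi => ?_
  calc (C (Q.coeff i / (i+1)) * X^(i+1)).natDegree ≤ i + 1 := by
        simpa using Polynomial.natDegree_C_mul_le _ _ |>.trans (by simp)
    _ ≤ d + 1 := by
        have := Polynomial.le_natDegree_of_mem_supp i hi
        omega

lemma eqOn_of_deriv_eqOn {f g : ℝ → ℂ} {ε : ℝ} (hε : 0 < ε)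
    (hf : Differentiable ℝ f) (hg : Differentiable ℝ g)
    (hd : ∀ x ∈ Metric.ball (0:ℝ) ε, deriv f x = deriv g x) (h0 : f 0 = g 0) :
    ∀ x ∈ Metric.ball (0:ℝ) ε, f x = g x := by
  intro x hx
  have key : (fun y => f y - g y) x = (fun y => f y - g y) 0 := by
    refine (convex_ball (0:ℝ) ε).is_const_of_fderivWithin_eq_zero
      ((hf.sub hg).differentiableOn) (fun z hz => ?_) hx (Metric.mem_ball_self hε)
    rw [fderivWithin_of_isOpen Metric.isOpen_ball hz]
    have hder : HasDerivAt (fun y => f y - g y) 0 z := by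
      have := ((hf z).hasDerivAt.sub (hg z).hasDerivAt)
      rwa [hd z hz, sub_self] at this
    rw [show f - g = fun y => f y - g y from rfl, hder.hasFDerivAt.fderiv]
    ext
    simp [ContinuousLinearMap.smulRight_apply]
  have := key
  simp only [h0, sub_self] at this
  linear_combination (norm := skip) this
  ring

lemma smooth_case : ∀ (n : ℕ) (ε : ℝ), 0 < ε → ∀ (c : Fin (n+1) → ℝ), Function.Injective c →
    ∀ (ψ : Fin (n+1) → ℝ → ℂ), (∀ j, ContDiff ℝ (⊤:ℕ∞) (ψ j)) →
    (∀ s₁ s₂ : ℝ, |s₁| < ε → |s₂| < ε → ∑ j, ψ j (s₁ + c j * s₂) = 0) →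
    ∃ P : Fin (n+1) → ℂ[X], (∀ j, (P j).natDegree ≤ n) ∧
      ∀ j, ∀ s : ℝ, |s| < ε → ψ j s = (P j).eval (s:ℂ) := by
  intro n
  induction n with
  | zero =>
    intro ε hε c hc ψ hψ heq
    refine ⟨fun _ => 0, fun j => by simp, fun j s hs => ?_⟩
    have := heq s 0 hs (by simpa using hε)
    rw [Fin.sum_univ_succ] at this
    simp only [mul_zero, add_zero, Finset.univ_eq_empty, Finset.sum_empty] at this
    have hj0 : j = 0 := by omega
    rw [hj0]
    simpa using this
  | succ n ih =>
    intro ε hε c hc ψ hψ heq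
    set L := Fin.last (n+1) with hL
    have hψd : ∀ j, Differentiable ℝ (ψ j) := fun j => (hψ j).differentiable (by simp)
    -- derivative in s₂ direction
    have hd2 : ∀ s₁ s₂ : ℝ, |s₁| < ε → |s₂| < ε →
        ∑ j, c j • deriv (ψ j) (s₁ + c j * s₂) = 0 := by
      intro s₁ s₂ h₁ h₂
      set g : ℝ → ℂ := fun u => ∑ j, ψ j (s₁ + c j * u) with hgdef
      have hgd : HasDerivAt g (∑ j, c j • deriv (ψ j) (s₁ + c j * s₂)) s₂ := by
        refine HasDerivAt.fun_sum fun j _ => ?_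
        have inner : HasDerivAt (fun u : ℝ => s₁ + c j * u) (c j) s₂ := by
          simpa using ((hasDerivAt_id s₂).const_mul (c j)).const_add s₁
        exact ((hψd j _).hasDerivAt).scomp s₂ inner
      have hev : g =ᶠ[nhds s₂] fun _ => 0 := by
        have hmem : Metric.ball (0:ℝ) ε ∈ nhds s₂ :=
          Metric.isOpen_ball.mem_nhds (by simpa [Real.norm_eq_abs] using h₂)
        filter_upwards [hmem] with u hu
        exact heq s₁ u h₁ (by simpa [Real.norm_eq_abs] using hu)
      have h0 : deriv g s₂ = 0 := by
        rw [Filter.EventuallyEq.deriv_eq hev]; simp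
      rw [← hgd.deriv, h0]
    -- derivative in s₁ direction
    have hd1 : ∀ s₁ s₂ : ℝ, |s₁| < ε → |s₂| < ε →
        ∑ j, deriv (ψ j) (s₁ + c j * s₂) = 0 := by
      intro s₁ s₂ h₁ h₂
      set g : ℝ → ℂ := fun t => ∑ j, ψ j (t + c j * s₂) with hgdef
      have hgd : HasDerivAt g (∑ j, (1:ℝ) • deriv (ψ j) (s₁ + c j * s₂)) s₁ := by
        refine HasDerivAt.fun_sum fun j _ => ?_
        have inner : HasDerivAt (fun t : ℝ => t + c j * s₂) (1:ℝ) s₁ :=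
          (hasDerivAt_id s₁).add_const _
        exact ((hψd j _).hasDerivAt).scomp s₁ inner
      have hev : g =ᶠ[nhds s₁] fun _ => 0 := by
        have hmem : Metric.ball (0:ℝ) ε ∈ nhds s₁ :=
          Metric.isOpen_ball.mem_nhds (by simpa [Real.norm_eq_abs] using h₁)
        filter_upwards [hmem] with u hu
        exact heq u s₂ (by simpa [Real.norm_eq_abs] using hu) h₂
      have h0 : deriv g s₁ = 0 := by
        rw [Filter.EventuallyEq.deriv_eq hev]; simp
      have := hgd.deriv
      rw [h0] at this
      simpa using this.symm
    -- combined relation for the truncated system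
    set c' : Fin (n+1) → ℝ := fun j => c j.castSucc with hc'def
    set φ : Fin (n+1) → ℝ → ℂ :=
      fun j x => (c j.castSucc - c L) • deriv (ψ j.castSucc) x with hφdef
    have heq' : ∀ s₁ s₂ : ℝ, |s₁| < ε → |s₂| < ε →
        ∑ j, φ j (s₁ + c' j * s₂) = 0 := by
      intro s₁ s₂ h₁ h₂
      have h2 := hd2 s₁ s₂ h₁ h₂
      have h1 := hd1 s₁ s₂ h₁ h₂
      have key : ∑ j, (c j - c L) • deriv (ψ j) (s₁ + c j * s₂) = 0 := by
        have : ∑ j, (c j - c L) • deriv (ψ j) (s₁ + c j * s₂)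
            = ∑ j, c j • deriv (ψ j) (s₁ + c j * s₂)
              - c L • ∑ j, deriv (ψ j) (s₁ + c j * s₂) := by
          rw [Finset.smul_sum, ← Finset.sum_sub_distrib]
          exact Finset.sum_congr rfl fun j _ => by rw [sub_smul]
        rw [this, h2, h1, smul_zero, sub_zero]
      rw [Fin.sum_univ_castSucc] at key
      simpa [φ, c', hL] using key
    have hφsm : ∀ j, ContDiff ℝ (⊤:ℕ∞) (φ j) :=
      fun j => ((contDiff_infty_iff_deriv.mp (hψ j.castSucc)).2).const_smul _
    have hc' : Function.Injective c' := hc.comp (Fin.castSucc_injective _)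
    obtain ⟨Q, hQdeg, hQeq⟩ := ih ε hε c' hc' φ hφsm heq'
    -- reconstruct the ψ's
    have hane : ∀ j : Fin (n+1), (c j.castSucc - c L) ≠ 0 := by
      intro j
      exact sub_ne_zero.mpr (fun h => (Fin.castSucc_lt_last j).ne (hc h))
    set R : Fin (n+1) → ℂ[X] :=
      fun j => antiderivP (C (((c j.castSucc - c L) : ℝ) : ℂ)⁻¹ * Q j) with hRdef
    set Pc : Fin (n+1) → ℂ[X] :=
      fun j => R j + C (ψ j.castSucc 0 - (R j).eval 0) with hPcdef
    have hPc : ∀ j : Fin (n+1), ∀ s : ℝ, |s| < ε → ψ j.castSucc s = (Pc j).eval (s:ℂ) := by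
      intro j s hs
      have hg : Differentiable ℝ (fun s : ℝ => (Pc j).eval (s:ℂ)) := by
        intro x
        exact (((Pc j).hasDerivAt (x:ℂ)).comp_ofReal).differentiableAt
      have hdeq : ∀ x ∈ Metric.ball (0:ℝ) ε,
          deriv (ψ j.castSucc) x = deriv (fun s : ℝ => (Pc j).eval (s:ℂ)) x := by
        intro x hx
        have hx' : |x| < ε := by simpa [Real.norm_eq_abs] using hx
        have h1 : φ j x = (Q j).eval (x:ℂ) := hQeq j x hx'
        have hder : deriv (fun s : ℝ => (Pc j).eval (s:ℂ)) x
            = (derivative (Pc j)).eval (x:ℂ) :=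
          (((Pc j).hasDerivAt (x:ℂ)).comp_ofReal).deriv
        rw [hder]
        have hdP : derivative (Pc j) = C (((c j.castSucc - c L) : ℝ) : ℂ)⁻¹ * Q j := by
          rw [hPcdef]
          simp only [derivative_add, derivative_C, add_zero, hRdef, antiderivP_derivative]
        rw [hdP]
        have hφx : ((c j.castSucc - c L : ℝ) : ℂ) * deriv (ψ j.castSucc) x
            = (Q j).eval (x:ℂ) := by
          rw [← h1, hφdef]
          simp [Complex.real_smul]
        have hcne : (((c j.castSucc - c L) : ℝ) : ℂ) ≠ 0 := by
          exact_mod_cast Complex.ofReal_ne_zero.mpr (hane j)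
        rw [eval_mul, eval_C, ← hφx, ← mul_assoc, inv_mul_cancel₀ hcne, one_mul]
      have := eqOn_of_deriv_eqOn hε (hψd _) hg hdeq (by simp [hPcdef])
      exact this s (by simpa [Real.norm_eq_abs] using hs)
    have hPcdeg : ∀ j : Fin (n+1), (Pc j).natDegree ≤ n + 1 := by
      intro j
      rw [hPcdef]
      refine (natDegree_add_le _ _).trans ?_
      simp only [natDegree_C, max_eq_left (Nat.zero_le _)]
      rw [hRdef]
      refine (antiderivP_natDegree_le _ n ?_).trans le_rfl
      exact (natDegree_C_mul_le _ _).trans (hQdeg j)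
    set PL : ℂ[X] := -∑ j : Fin (n+1), Pc j with hPLdef
    have hPL : ∀ s : ℝ, |s| < ε → ψ L s = PL.eval (s:ℂ) := by
      intro s hs
      have := heq s 0 hs (by simpa using hε)
      rw [Fin.sum_univ_castSucc] at this
      simp only [mul_zero, add_zero] at this
      have hsum : ∑ j : Fin (n+1), ψ j.castSucc s = ∑ j : Fin (n+1), (Pc j).eval (s:ℂ) :=
        Finset.sum_congr rfl fun j _ => hPc j s hs
      rw [hsum] at this
      rw [hPLdef]
      simp only [eval_neg, eval_finset_sum]
      linear_combination this
    -- assemble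
    refine ⟨Fin.snoc Pc PL, ?_, ?_⟩
    · intro j
      refine Fin.lastCases ?_ (fun i => ?_) j
      · rw [Fin.snoc_last, hPLdef, natDegree_neg]
        refine natDegree_sum_le_of_forall_le _ _ fun i _ => ?_
        exact hPcdeg i
      · rw [Fin.snoc_castSucc]
        exact hPcdeg i
    · intro j s hs
      refine Fin.lastCases ?_ (fun i => ?_) j
      · rw [Fin.snoc_last]
        exact hPL s hs
      · rw [Fin.snoc_castSucc]
        exact hPc i s hs

open MeasureTheory in
open scoped Convolution in
/-- A particular case of the Linnik–Rao lemma: if continuous functions `ψ_j : ℝ → ℂ`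
satisfy `∑ j, ψ_j (s₁ + c_j·s₂) = 0` for all `|s₁| < ε`, `|s₂| < ε`, where the `c_j`
are pairwise distinct, then the `ψ_j` are polynomials in a neighbourhood of zero. -/
theorem linnik_rao_polynomials (ε : ℝ) (hε : 0 < ε) (n : ℕ) (hn : 1 ≤ n)
    (c : Fin n → ℝ) (hc : Function.Injective c)
    (ψ : Fin n → ℝ → ℂ) (hψ : ∀ j, Continuous (ψ j))
    (heq : ∀ s₁ s₂ : ℝ, |s₁| < ε → |s₂| < ε → ∑ j, ψ j (s₁ + c j * s₂) = 0) :
    ∃ δ : ℝ, 0 < δ ∧ ∃ P : Fin n → Polynomial ℂ,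
      ∀ j, ∀ s : ℝ, |s| < δ → ψ j s = (P j).eval (s : ℂ) := by
  obtain ⟨m, rfl⟩ : ∃ m, n = m + 1 := ⟨n - 1, (Nat.succ_pred_eq_of_pos hn).symm⟩
  have hk1 : ∀ k : ℕ, (0:ℝ) < (k:ℝ) + 1 := fun k => by positivity
  set B : ℕ → ContDiffBump (0:ℝ) := fun k =>
    ⟨ε/(4*((k:ℝ)+1)), ε/(2*((k:ℝ)+1)), by positivity,
      by
        apply div_lt_div_of_pos_left hε (by positivity)
        have := hk1 k
        nlinarith⟩ with hB
  have hrOut : ∀ k, (B k).rOut ≤ ε/2 := by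
    intro k
    rw [hB]
    simp only
    rw [div_le_div_iff₀ (by positivity) (by norm_num)]
    have := hk1 k
    nlinarith
  set Ψ : ℕ → Fin (m+1) → ℝ → ℂ :=
    fun k j => (B k).normed volume ⋆[ContinuousLinearMap.lsmul ℝ ℝ, volume] ψ j with hΨ
  have hΨsm : ∀ k j, ContDiff ℝ (⊤:ℕ∞) (Ψ k j) := fun k j =>
    ((B k).hasCompactSupport_normed).contDiff_convolution_left _
      (B k).contDiff_normed ((hψ j).locallyIntegrable)
  have hΨeq : ∀ k, ∀ s₁ s₂ : ℝ, |s₁| < ε/2 → |s₂| < ε/2 →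
      ∑ j, Ψ k j (s₁ + c j * s₂) = 0 := by
    intro k s₁ s₂ h1 h2
    have hint : ∀ j ∈ Finset.univ, Integrable
        (fun t => (B k).normed volume t • ψ j ((s₁ + c j * s₂) - t)) volume := by
      intro j _
      refine Continuous.integrable_of_hasCompactSupport
        ((B k).continuous_normed.smul ((hψ j).comp (continuous_const.sub continuous_id)))
        ((B k).hasCompactSupport_normed.smul_right)
    have hconv : ∀ j : Fin (m+1), Ψ k j (s₁ + c j * s₂)
        = ∫ t, (B k).normed volume t • ψ j ((s₁ + c j * s₂) - t) := by
      intro j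
      rw [hΨ]
      exact convolution_lsmul
    rw [Finset.sum_congr rfl fun j _ => hconv j, ← integral_finset_sum _ hint]
    have hzero : ∀ t : ℝ, (∑ j, (B k).normed volume t • ψ j ((s₁ + c j * s₂) - t)) = 0 := by
      intro t
      by_cases ht : (B k).normed volume t = 0
      · simp [ht]
      · have htsupp : t ∈ Function.support ((B k).normed volume) := Function.mem_support.mpr ht
        rw [(B k).support_normed_eq] at htsupp
        have habs : |t| < ε/2 := by
          have := Metric.mem_ball.mp htsupp
          simp only [dist_zero_right, Real.norm_eq_abs] at this
          exact lt_of_lt_of_le this (hrOut k)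
        have harg : ∀ j : Fin (m+1), s₁ + c j * s₂ - t = (s₁ - t) + c j * s₂ := fun j => by ring
        simp_rw [harg]
        rw [← Finset.smul_sum, heq (s₁ - t) s₂ (by
          calc |s₁ - t| ≤ |s₁| + |t| := abs_sub _ _
            _ < ε := by linarith) (by linarith [abs_nonneg s₂]), smul_zero]
    simp_rw [hzero]
    simp
  have hhalf : (0:ℝ) < ε/2 := by positivity
  choose P' hdeg heqk using fun k => smooth_case m (ε/2) hhalf c hc (Ψ k) (hΨsm k) (hΨeq k)
  -- nodes
  set xi : Fin (m+1) → ℝ := fun i => ε/4 * (((i:ℕ):ℝ)+1) / (((m:ℕ):ℝ)+1) with hxi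
  have hxi_abs : ∀ i, |xi i| < ε/2 := by
    intro i
    have h1 : (0:ℝ) < xi i := by rw [hxi]; positivity
    have h2 : xi i ≤ ε/4 := by
      rw [hxi]
      simp only
      rw [div_le_iff₀ (by positivity)]
      have hi : ((i:ℕ):ℝ) ≤ (m:ℝ) := by exact_mod_cast Nat.lt_succ_iff.mp i.isLt
      nlinarith
    rw [abs_of_pos h1]
    linarith
  have hxi_inj : Function.Injective xi := by
    intro i j h
    rw [hxi] at h
    simp only at h
    have h4 : (ε/4) ≠ 0 := by positivity
    have hm : (((m:ℕ):ℝ)+1) ≠ 0 := by positivity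
    rw [div_eq_div_iff hm hm] at h
    have h1 := mul_right_cancel₀ hm h
    have h2 := mul_left_cancel₀ h4 h1
    have h3 : ((i:ℕ):ℝ) = ((j:ℕ):ℝ) := by linarith
    exact Fin.ext (by exact_mod_cast h3)
  set v : Fin (m+1) → ℂ := fun i => ((xi i : ℝ) : ℂ) with hv
  have hvinj : Set.InjOn v (Finset.univ : Finset (Fin (m+1))) := by
    intro i _ j _ h
    exact hxi_inj (Complex.ofReal_inj.mp h)
  set P : Fin (m+1) → ℂ[X] :=
    fun j => Lagrange.interpolate Finset.univ v (fun i => ψ j (xi i)) with hP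
  refine ⟨ε/2, hhalf, P, ?_⟩
  intro j s hs
  have htR : Filter.Tendsto (fun k : ℕ => (B k).rOut) Filter.atTop (nhds 0) := by
    have base := tendsto_one_div_add_atTop_nhds_zero_nat.const_mul (ε/2)
    rw [mul_zero] at base
    refine base.congr fun k => ?_
    rw [hB]
    simp only
    rw [div_mul_div_comm, mul_one]
  have hconv : ∀ x : ℝ, Filter.Tendsto (fun k => Ψ k j x) Filter.atTop (nhds (ψ j x)) :=
    fun x => ContDiffBump.convolution_tendsto_right_of_continuous htR (hψ j) x
  have hkey : ∀ k, Ψ k j s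
      = ∑ i, Ψ k j (xi i) * (Lagrange.basis Finset.univ v i).eval (s:ℂ) := by
    intro k
    have hdlt : (P' k j).degree < (Finset.univ : Finset (Fin (m+1))).card := by
      rw [Finset.card_univ, Fintype.card_fin]
      calc (P' k j).degree ≤ ((P' k j).natDegree : WithBot ℕ) := Polynomial.degree_le_natDegree
        _ < ((m+1 : ℕ) : WithBot ℕ) := by exact_mod_cast Nat.lt_succ_of_le (hdeg k j)
    have h1 : P' k j = Lagrange.interpolate Finset.univ v
        (fun i => (P' k j).eval (v i)) := Lagrange.eq_interpolate hvinj hdlt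
    have h2 : ∀ i : Fin (m+1), (P' k j).eval (v i) = Ψ k j (xi i) :=
      fun i => (heqk k j (xi i) (hxi_abs i)).symm
    calc Ψ k j s = (P' k j).eval (s:ℂ) := heqk k j s hs
      _ = (Lagrange.interpolate Finset.univ v (fun i => (P' k j).eval (v i))).eval (s:ℂ) := by
          rw [← h1]
      _ = ∑ i, Ψ k j (xi i) * (Lagrange.basis Finset.univ v i).eval (s:ℂ) := by
          rw [Lagrange.interpolate_apply, eval_finset_sum]
          exact Finset.sum_congr rfl fun i _ => by rw [eval_mul, eval_C, h2 i]
  have hR : Filter.Tendsto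
      (fun k => ∑ i, Ψ k j (xi i) * (Lagrange.basis Finset.univ v i).eval (s:ℂ))
      Filter.atTop (nhds (∑ i, ψ j (xi i) * (Lagrange.basis Finset.univ v i).eval (s:ℂ))) :=
    tendsto_finset_sum _ fun i _ => (hconv (xi i)).mul_const _
  have hL : Filter.Tendsto (fun k => Ψ k j s) Filter.atTop (nhds (ψ j s)) := hconv s
  have hLim := tendsto_nhds_unique (hL.congr fun k => hkey k) hR
  rw [hLim]
  show ∑ i, ψ j (xi i) * (Lagrange.basis Finset.univ v i).eval (s:ℂ)
      = (Lagrange.interpolate Finset.univ v (fun i => ψ j (xi i))).eval (s:ℂ)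
  rw [Lagrange.interpolate_apply, eval_finset_sum]
  exact Finset.sum_congr rfl fun i _ => by rw [eval_mul, eval_C]
end

section
/- Let X = ℝ × 𝕋, let a, b ∈ ℝ with a > 0, and let α be the topological automorphism α(t,z) = (a·t, e^{i·b·t}·z) of X. Let μ_1, μ_2 be probability measures on X and suppose Measure.map ((x,y) ↦ (x + y, x + α(y))) (μ_1 ⊗ μ_2) = Measure.map ((x,y) ↦ (x + y, −(x + α(y)))) (μ_1 ⊗ μ_2). Then there exist x_1, x_2 ∈ X such that (μ_j * δ_{−x_j})(G) = 1 for j = 1, 2, i.e. some shifts of μ_1 and μ_2 are concentrated on G. -/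
set_option maxHeartbeats 800000


open MeasureTheory Complex

noncomputable instance : MeasurableSpace Circle := borel Circle
instance : BorelSpace Circle := ⟨rfl⟩
noncomputable instance : MeasurableSpace (Additive Circle) :=
  inferInstanceAs (MeasurableSpace Circle)

/-- The group `X = ℝ × 𝕋`, with the circle written additively. -/
abbrev XT : Type := ℝ × Additive Circle

/-- The element `−1` of the circle group. -/
def negOneCircle : Circle := ⟨-1, by simp [Submonoid.unitSphere]⟩

/-- The automorphism `α(t,z) = (a·t, e^{i·b·t}·z)` of `ℝ × 𝕋`. -/
noncomputable def alphaXT (a b : ℝ) : XT → XT :=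
  fun x => (a * x.1, Additive.ofMul (Circle.exp (b * x.1)) + x.2)

/-- The two-element subgroup `G = {(0,1), (0,−1)}` of `ℝ × 𝕋`. -/
def setG : Set XT :=
  {x | x.1 = 0 ∧ (x.2.toMul = (1 : Circle) ∨ x.2.toMul = negOneCircle)}

instance : BorelSpace (Additive Circle) := ⟨rfl⟩

section Helpers

lemma norm_exp_real_mul_I (r : ℝ) : ‖Complex.exp ((r:ℂ) * I)‖ = 1 := by
  rw [Complex.norm_exp]; simp

variable {α : Type*} [MeasurableSpace α] {β : Type*} [MeasurableSpace β]

lemma integrable_char (μ : Measure α) [IsProbabilityMeasure μ]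
    {f : α → ℝ} (hf : Measurable f) :
    Integrable (fun x => Complex.exp ((f x : ℂ) * I)) μ := by
  refine (integrable_const (1:ℝ)).mono'
    ((Complex.measurable_exp.comp ((Complex.measurable_ofReal.comp hf).mul_const I)).aestronglyMeasurable)
    (Filter.Eventually.of_forall fun x => ?_)
  rw [norm_exp_real_mul_I]

lemma norm_char_le_one (μ : Measure α) [IsProbabilityMeasure μ] (f : α → ℝ) :
    ‖∫ x, Complex.exp ((f x : ℂ) * I) ∂μ‖ ≤ 1 := by
  calc ‖∫ x, Complex.exp ((f x : ℂ) * I) ∂μ‖ ≤ 1 * (μ Set.univ).toReal := by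
        apply norm_integral_le_of_norm_le_const
        exact Filter.Eventually.of_forall fun x => le_of_eq (norm_exp_real_mul_I _)
    _ = 1 := by simp

lemma char_prod (μ : Measure α) (ν : Measure β) [SFinite μ] [SFinite ν]
    (f : α → ℝ) (g : β → ℝ) :
    ∫ p, Complex.exp (((f p.1 + g p.2 : ℝ) : ℂ) * I) ∂(μ.prod ν) =
      (∫ x, Complex.exp ((f x : ℂ) * I) ∂μ) * ∫ y, Complex.exp ((g y : ℂ) * I) ∂ν := by
  simp_rw [Complex.ofReal_add, add_mul, Complex.exp_add]
  exact integral_prod_mul (L := ℂ) (fun x => Complex.exp ((f x : ℂ) * I)) (fun y => Complex.exp ((g y : ℂ) * I))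

lemma measure_inter_one (μ : Measure α) [IsProbabilityMeasure μ] {s t : Set α}
    (hs : MeasurableSet s) (ht : MeasurableSet t) (h1 : μ s = 1) (h2 : μ t = 1) :
    μ (s ∩ t) = 1 := by
  rw [← prob_compl_eq_zero_iff (hs.inter ht), Set.compl_inter]
  refine le_antisymm ?_ (zero_le)
  calc μ (sᶜ ∪ tᶜ) ≤ μ sᶜ + μ tᶜ := measure_union_le _ _
    _ = 0 := by rw [prob_compl_eq_zero_iff hs |>.2 h1, prob_compl_eq_zero_iff ht |>.2 h2]; simp

lemma diff_zero_of_cos (d : ℝ) (h1 : ∃ n : ℤ, (n:ℝ) * (2 * Real.pi) = d)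
    (h2 : ∃ k : ℤ, (k:ℝ) * (2 * Real.pi) = Real.pi * d) : d = 0 := by
  obtain ⟨n, hn⟩ := h1
  obtain ⟨k, hk⟩ := h2
  rcases eq_or_ne n 0 with h | h
  · simp [h] at hn; exact hn.symm
  · exfalso
    rw [← hn] at hk
    -- k * (2π) = π * (n * (2π))  ⇒ k = π n
    have hpi : (Real.pi : ℝ) ≠ 0 := Real.pi_ne_zero
    have h2pi : (2 * Real.pi : ℝ) ≠ 0 := by positivity
    have hk' : (k : ℝ) = Real.pi * n := by
      apply mul_left_cancel₀ h2pi
      rw [show (2*Real.pi) * (k:ℝ) = (k:ℝ) * (2*Real.pi) by ring, hk]; ring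
    have : Real.pi = (k : ℝ) / (n : ℝ) := by
      rw [hk']; field_simp
    refine irrational_pi ⟨(k : ℚ) / (n : ℚ), ?_⟩
    push_cast
    rw [this]

open scoped ENNReal

lemma dirac_of_char (ρ : Measure ℝ) [IsProbabilityMeasure ρ]
    (h : ∀ t : ℝ, ‖∫ x, Complex.exp (((t * x : ℝ) : ℂ) * I) ∂ρ‖ = 1) :
    ∃ r, ρ {r} = 1 := by
  set m := ρ.prod ρ with hm
  have key : ∀ t : ℝ, ∀ᵐ p : ℝ × ℝ ∂m, Real.cos (t * (p.1 - p.2)) = 1 := by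
    intro t
    have hchar : ∫ p : ℝ × ℝ, Complex.exp (((t * p.1 + (-t) * p.2 : ℝ) : ℂ) * I) ∂m = 1 := by
      rw [char_prod ρ ρ (fun x => t * x) (fun y => (-t) * y)]
      have hconj : (∫ y, Complex.exp ((((-t) * y : ℝ) : ℂ) * I) ∂ρ)
          = (starRingEnd ℂ) (∫ x, Complex.exp (((t * x : ℝ) : ℂ) * I) ∂ρ) := by
        rw [← integral_conj]
        congr 1; funext y
        rw [← Complex.exp_conj]
        congr 1
        simp only [map_mul, Complex.conj_I, Complex.conj_ofReal]
        push_cast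
        ring
      rw [hconj, Complex.mul_conj, Complex.normSq_eq_norm_sq, h t]
      norm_num
    have hint : Integrable (fun p : ℝ × ℝ => Complex.exp (((t * p.1 + (-t) * p.2 : ℝ) : ℂ) * I)) m :=
      integrable_char m (by fun_prop)
    have hre : ∫ p : ℝ × ℝ, Real.cos (t * p.1 + (-t) * p.2) ∂m = 1 := by
      have h2 := integral_re hint
      rw [hchar] at h2
      norm_num at h2
      rw [← h2]
      congr 1; funext p
      have hc : ((↑t * ↑p.1 + -(↑t * ↑p.2)) : ℂ) = ((t * p.1 + -t * p.2 : ℝ) : ℂ) := by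
        push_cast; ring
      rw [hc, Complex.exp_ofReal_mul_I_re]
    have hcosint : Integrable (fun p : ℝ × ℝ => Real.cos (t * p.1 + (-t) * p.2)) m := by
      refine (integrable_const (1:ℝ)).mono' ?_ (Filter.Eventually.of_forall fun p => ?_)
      · exact ((Real.continuous_cos.measurable).comp (by fun_prop)).aestronglyMeasurable
      · rw [Real.norm_eq_abs]; exact Real.abs_cos_le_one _
    have hzero : ∫ p : ℝ × ℝ, (1 - Real.cos (t * p.1 + (-t) * p.2)) ∂m = 0 := by
      rw [integral_sub (integrable_const 1) hcosint, hre, integral_const]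
      simp
    have hnn : 0 ≤ fun p : ℝ × ℝ => (1 - Real.cos (t * p.1 + (-t) * p.2)) := by
      intro p; simp only [Pi.zero_apply]
      nlinarith [Real.cos_le_one (t * p.1 + (-t) * p.2)]
    have hae := (integral_eq_zero_iff_of_nonneg hnn ((integrable_const (1:ℝ)).sub hcosint)).1 hzero
    filter_upwards [hae] with p hp
    simp only [Pi.zero_apply] at hp
    have harg : t * (p.1 - p.2) = t * p.1 + -t * p.2 := by ring
    rw [harg]; linarith
  -- combine t = 1 and t = π
  have h1 := key 1
  have hpi := key Real.pi
  have hdiag : ∀ᵐ p : ℝ × ℝ ∂m, p.1 = p.2 := by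
    filter_upwards [h1, hpi] with p e1 e2
    rw [one_mul] at e1
    have d1 := (Real.cos_eq_one_iff _).1 e1
    have d2 := (Real.cos_eq_one_iff _).1 e2
    have := diff_zero_of_cos (p.1 - p.2) d1 d2
    linarith
  have hdm : MeasurableSet {p : ℝ × ℝ | p.1 = p.2} :=
    measurableSet_eq_fun measurable_fst measurable_snd
  have hdiag1 : m {p : ℝ × ℝ | p.1 = p.2} = 1 := by
    rw [← prob_compl_eq_zero_iff hdm]
    have := ae_iff.mp hdiag
    exact this
  have hsec : ∀ x : ℝ, (Prod.mk x ⁻¹' {p : ℝ × ℝ | p.1 = p.2}) = {x} := by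
    intro x; ext y; simp [eq_comm]
  have hfub : ∫⁻ x, ρ {x} ∂ρ = 1 := by
    have hp := Measure.prod_apply (μ := ρ) (ν := ρ) hdm
    rw [hdiag1] at hp
    simp_rw [hsec] at hp
    exact hp.symm
  have hmeas : Measurable fun x => ρ {x} := by
    have hmm := measurable_measure_prodMk_left (ν := ρ) hdm
    simpa [hsec] using hmm
  have hle : ∀ x : ℝ, ρ {x} ≤ 1 := fun x => prob_le_one
  have hsub : ∫⁻ x, (1 - ρ {x}) ∂ρ = 0 := by
    rw [lintegral_sub hmeas (by rw [hfub]; exact ENNReal.one_ne_top)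
      (Filter.Eventually.of_forall hle)]
    rw [hfub, lintegral_one, measure_univ, tsub_self]
  have hone : ∀ᵐ x ∂ρ, ρ {x} = 1 := by
    have h0 := (lintegral_eq_zero_iff (measurable_const.sub hmeas)).1 hsub
    filter_upwards [h0] with x hx
    simp only [Pi.zero_apply] at hx
    exact le_antisymm (hle x) (tsub_eq_zero_iff_le.mp hx)
  haveI : (ae ρ).NeBot := ae_neBot.mpr (IsProbabilityMeasure.ne_zero ρ)
  exact hone.exists

lemma exists_dirac_pair {G : Type*} [AddCommGroup G] [MeasurableSpace G]
    [MeasurableSingletonClass G]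
    (κ₁ κ₂ : Measure G) [IsProbabilityMeasure κ₁] [IsProbabilityMeasure κ₂] (d : G)
    (hS : MeasurableSet {q : G × G | q.1 + q.2 = d})
    (h : (κ₁.prod κ₂) {q : G × G | q.1 + q.2 = d} = 1) :
    ∃ u, κ₁ {u} = 1 ∧ κ₂ {d - u} = 1 := by
  have hsec : ∀ z : G, (Prod.mk z ⁻¹' {q : G × G | q.1 + q.2 = d}) = {d - z} := by
    intro z; ext w
    simp only [Set.mem_preimage, Set.mem_setOf_eq, Set.mem_singleton_iff]
    constructor
    · intro hw; rw [← hw]; abel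
    · intro hw; rw [hw]; abel
  have hfub : ∫⁻ z, κ₂ {d - z} ∂κ₁ = 1 := by
    have hp := Measure.prod_apply (μ := κ₁) (ν := κ₂) hS
    rw [h] at hp
    simp_rw [hsec] at hp
    exact hp.symm
  have hmeas : Measurable fun z => κ₂ {d - z} := by
    have hmm := measurable_measure_prodMk_left (ν := κ₂) hS
    simpa [hsec] using hmm
  have hle : ∀ z : G, κ₂ {d - z} ≤ 1 := fun z => prob_le_one
  have hsub : ∫⁻ z, (1 - κ₂ {d - z}) ∂κ₁ = 0 := by
    rw [lintegral_sub hmeas (by rw [hfub]; exact ENNReal.one_ne_top)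
      (Filter.Eventually.of_forall hle)]
    rw [hfub, lintegral_one, measure_univ, tsub_self]
  have hone : ∀ᵐ z ∂κ₁, κ₂ {d - z} = 1 := by
    have h0 := (lintegral_eq_zero_iff (measurable_const.sub hmeas)).1 hsub
    filter_upwards [h0] with z hz
    simp only [Pi.zero_apply] at hz
    exact le_antisymm (hle z) (tsub_eq_zero_iff_le.mp hz)
  haveI : (ae κ₁).NeBot := ae_neBot.mpr (IsProbabilityMeasure.ne_zero κ₁)
  obtain ⟨z₀, hz₀⟩ := hone.exists
  refine ⟨z₀, ?_, hz₀⟩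
  rw [← prob_compl_eq_zero_iff (measurableSet_singleton z₀)]
  refine measure_mono_null ?_ (ae_iff.mp hone)
  intro z hz
  simp only [Set.mem_compl_iff, Set.mem_singleton_iff] at hz
  simp only [Set.mem_setOf_eq]
  intro hcon
  have hdisj : ({d - z} : Set G) ∩ {d - z₀} = ∅ := by
    ext w; simp only [Set.mem_inter_iff, Set.mem_singleton_iff, Set.mem_empty_iff_false,
      iff_false, not_and]
    intro h1 h2
    apply hz
    have hdd : d - z = d - z₀ := h1 ▸ h2 ▸ rfl
    have : z = z₀ := by
      have := congrArg (fun u => d - u) hdd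
      simpa using hdd
    exact this
  have : (2:ℝ≥0∞) ≤ 1 := by
    calc (2:ℝ≥0∞) = 1 + 1 := by norm_num
    _ = κ₂ {d - z} + κ₂ {d - z₀} := by rw [hcon, hz₀]
    _ = κ₂ ({d - z} ∪ {d - z₀}) :=
        (measure_union (Set.disjoint_iff_inter_eq_empty.mpr hdisj)
          (measurableSet_singleton _)).symm
    _ ≤ 1 := prob_le_one
  norm_num at this


lemma cont_alphaXT (a b : ℝ) : Continuous (alphaXT a b) := by
  unfold alphaXT
  exact Continuous.prodMk (by fun_prop)
    (Continuous.add (Circle.exp.continuous.comp (by fun_prop) :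
      Continuous fun x : XT => Additive.ofMul (Circle.exp (b * x.1))) continuous_snd)

example : MeasurableSub₂ XT := inferInstance
example : MeasurableAdd₂ (Additive Circle) := inferInstance
example : MeasurableNeg XT := inferInstance

lemma grp_id {G : Type*} [AddCommGroup G] (g w cc : G)
    (h : -(g + (cc + w)) - (g + w) = cc) : (g + g) + (w + w) = -cc + -cc := by
  have h1 : -(g + (cc + w)) = cc + (g + w) := by rwa [sub_eq_iff_eq_add] at h
  have h2 : (g + (cc + w)) + (cc + (g + w)) = 0 := by rw [← h1]; abel
  have h3 : ((g + g) + (w + w)) + (cc + cc) = 0 := by rw [← h2]; abel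
  rw [← neg_add]
  exact eq_neg_of_add_eq_zero_left h3

lemma two_torsion (v : Additive Circle) (h : v + v = 0) :
    v.toMul = 1 ∨ v.toMul = negOneCircle := by
  have hm : (v.toMul : Circle) * v.toMul = 1 := h
  have hc : ((v.toMul : Circle) : ℂ) * ((v.toMul : Circle) : ℂ) = 1 := by
    rw [← Circle.coe_mul, hm, Circle.coe_one]
  rcases mul_self_eq_one_iff.mp hc with h' | h'
  · exact Or.inl (Subtype.ext h')
  · exact Or.inr (Subtype.ext h')

lemma exists_sqrt (u : Additive Circle) : ∃ s : Additive Circle, s + s = u := by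
  refine ⟨Additive.ofMul (Circle.exp (Complex.arg ((u.toMul : Circle) : ℂ) / 2)), ?_⟩
  have : Circle.exp (Complex.arg ((u.toMul : Circle) : ℂ) / 2) *
      Circle.exp (Complex.arg ((u.toMul : Circle) : ℂ) / 2) = u.toMul := by
    rw [← Circle.exp_add]
    rw [show Complex.arg ((u.toMul : Circle) : ℂ) / 2 + Complex.arg ((u.toMul : Circle) : ℂ) / 2
      = Complex.arg ((u.toMul : Circle) : ℂ) by ring]
    exact Circle.exp_arg _
  exact congrArg Additive.ofMul this

lemma setG_eq : setG = ({((0:ℝ), Additive.ofMul (1 : Circle))} : Set XT)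
    ∪ {((0:ℝ), Additive.ofMul negOneCircle)} := by
  ext x
  simp only [setG, Set.mem_setOf_eq, Set.mem_union, Set.mem_singleton_iff, Prod.ext_iff]
  constructor
  · rintro ⟨h0, h1 | h1⟩
    · exact Or.inl ⟨h0, by exact h1⟩
    · exact Or.inr ⟨h0, by exact h1⟩
  · rintro (⟨h0, h1⟩ | ⟨h0, h1⟩)
    · exact ⟨h0, Or.inl (by exact h1)⟩
    · exact ⟨h0, Or.inr (by exact h1)⟩

lemma measurableSet_setG : MeasurableSet setG := by
  rw [setG_eq]
  exact (measurableSet_singleton _).union (measurableSet_singleton _)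

lemma measure_inter_one' {α : Type*} [MeasurableSpace α] (μ : Measure α)
    [IsProbabilityMeasure μ] {s t : Set α}
    (hs : MeasurableSet s) (ht : MeasurableSet t) (h1 : μ s = 1) (h2 : μ t = 1) :
    μ (s ∩ t) = 1 := by
  rw [← prob_compl_eq_zero_iff (hs.inter ht), Set.compl_inter]
  refine le_antisymm ?_ (zero_le)
  calc μ (sᶜ ∪ tᶜ) ≤ μ sᶜ + μ tᶜ := measure_union_le _ _
    _ = 0 := by rw [prob_compl_eq_zero_iff hs |>.2 h1, prob_compl_eq_zero_iff ht |>.2 h2]; simp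

lemma conv_dirac_setG (μ : Measure XT) [IsProbabilityMeasure μ] (r : ℝ) (u : Additive Circle)
    (h1 : μ {x : XT | x.1 = r} = 1) (h2 : μ {x : XT | x.2 + x.2 = u} = 1) :
    ∃ x₀ : XT, (μ.conv (Measure.dirac (-x₀))) setG = 1 := by
  obtain ⟨s₀, hs₀⟩ := exists_sqrt u
  refine ⟨(r, s₀), ?_⟩
  have hconv : μ.conv (Measure.dirac (-(r, s₀) : XT)) =
      Measure.map (fun x : XT => x + -(r, s₀)) μ := by
    unfold Measure.conv
    rw [Measure.prod_dirac,
      Measure.map_map measurable_add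
        (measurable_id'.prodMk measurable_const :
          Measurable fun x : XT => (x, (-(r, s₀) : XT)))]
    rfl
  have haddm : Measurable (fun x : XT => x + -(r, s₀)) :=
    measurable_id.add_const _
  rw [hconv, Measure.map_apply haddm measurableSet_setG]
  have hs1 : MeasurableSet {x : XT | x.1 = r} :=
    measurable_fst (measurableSet_singleton r)
  have hs2 : MeasurableSet {x : XT | x.2 + x.2 = u} :=
    (measurable_snd.add measurable_snd) (measurableSet_singleton u)
  have hint := measure_inter_one' μ hs1 hs2 h1 h2
  refine le_antisymm prob_le_one ?_
  rw [← hint]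
  apply measure_mono
  rintro x ⟨hx1, hx2⟩
  simp only [Set.mem_setOf_eq] at hx1 hx2
  simp only [Set.mem_preimage]
  constructor
  · show x.1 + -(r, s₀).1 = 0
    simp [hx1]
  · have hv : (x.2 + -s₀) + (x.2 + -s₀) = 0 := by
      have : (x.2 + -s₀) + (x.2 + -s₀) = (x.2 + x.2) + -(s₀ + s₀) := by abel
      rw [this, hx2, hs₀, add_neg_cancel]
    exact two_torsion _ hv

end Helpers

/-- Heyde's theorem for `ℝ × 𝕋` with `α(t,z) = (a·t, e^{i·b·t}·z)`, case `a > 0`: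
some shifts of the distributions are concentrated on `G`. -/
theorem heyde_R_T_pos_a (a b : ℝ) (ha : 0 < a)
    (μ₁ μ₂ : Measure XT) [IsProbabilityMeasure μ₁] [IsProbabilityMeasure μ₂]
    (hsym :
      Measure.map (fun p : XT × XT => (p.1 + p.2, p.1 + alphaXT a b p.2)) (μ₁.prod μ₂) =
      Measure.map (fun p : XT × XT => (p.1 + p.2, -(p.1 + alphaXT a b p.2))) (μ₁.prod μ₂)) :
    ∃ x₁ x₂ : XT,
      Measure.conv μ₁ (Measure.dirac (-x₁)) setG = 1 ∧
      Measure.conv μ₂ (Measure.dirac (-x₂)) setG = 1 := by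
  have hAm : Measurable (alphaXT a b) := (cont_alphaXT a b).measurable
  set m : Measure (XT × XT) := μ₁.prod μ₂ with hm
  have hfm : Measurable (fun p : XT × XT => (p.1 + p.2, p.1 + alphaXT a b p.2)) :=
    (measurable_fst.add measurable_snd).prodMk
      (measurable_fst.add (hAm.comp measurable_snd))
  have hgm : Measurable (fun p : XT × XT => (p.1 + p.2, -(p.1 + alphaXT a b p.2))) :=
    (measurable_fst.add measurable_snd).prodMk
      (measurable_fst.add (hAm.comp measurable_snd)).neg
  set Gc : Measure XT → ℝ → ℂ :=
    fun μ t => ∫ x : XT, Complex.exp (((t * x.1 : ℝ) : ℂ) * I) ∂μ with hGc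
  have hGle : ∀ (μ : Measure XT), IsProbabilityMeasure μ → ∀ t, ‖Gc μ t‖ ≤ 1 := by
    intro μ hμ t; exact norm_char_le_one μ _
  have hG0 : Gc μ₁ 0 = 1 := by
    simp [hGc]
  have hEq : ∀ t : ℝ, Gc μ₁ (2*t) * Gc μ₂ ((1+a)*t) = Gc μ₁ (0*t) * Gc μ₂ ((1-a)*t) := by
    intro t
    have hsm1 : AEStronglyMeasurable
        (fun v : XT × XT => Complex.exp (((t * (v.1.1 + v.2.1) : ℝ) : ℂ) * I))
        (Measure.map (fun p : XT × XT => (p.1 + p.2, p.1 + alphaXT a b p.2)) m) := by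
      apply Continuous.aestronglyMeasurable; fun_prop
    have hsm2 : AEStronglyMeasurable
        (fun v : XT × XT => Complex.exp (((t * (v.1.1 + v.2.1) : ℝ) : ℂ) * I))
        (Measure.map (fun p : XT × XT => (p.1 + p.2, -(p.1 + alphaXT a b p.2))) m) := by
      apply Continuous.aestronglyMeasurable; fun_prop
    have h0 := congrArg
      (fun ν => ∫ v : XT × XT, Complex.exp (((t * (v.1.1 + v.2.1) : ℝ) : ℂ) * I) ∂ν) hsym
    rw [integral_map hfm.aemeasurable hsm1, integral_map hgm.aemeasurable hsm2] at h0
    have e1 : ∀ p : XT × XT, (t * (((p.1 + p.2).1) + ((p.1 + alphaXT a b p.2).1)) : ℝ)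
        = (2*t) * p.1.1 + ((1+a)*t) * p.2.1 := by
      intro p; simp only [Prod.fst_add, alphaXT]; ring
    have e2 : ∀ p : XT × XT, (t * (((p.1 + p.2).1) + ((-(p.1 + alphaXT a b p.2)).1)) : ℝ)
        = (0*t) * p.1.1 + ((1-a)*t) * p.2.1 := by
      intro p; simp only [Prod.fst_add, Prod.fst_neg, alphaXT]; ring
    simp_rw [e1, e2] at h0
    rw [char_prod μ₁ μ₂ (fun x => (2*t) * x.1) (fun y => ((1+a)*t) * y.1),
        char_prod μ₁ μ₂ (fun x => (0*t) * x.1) (fun y => ((1-a)*t) * y.1)] at h0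
    exact h0
  have hEq' : ∀ t : ℝ, Gc μ₁ (2*t) * Gc μ₂ ((1+a)*t) = Gc μ₂ ((1-a)*t) := by
    intro t
    rw [hEq t, zero_mul, hG0, one_mul]
  set c : ℝ := (1-a)/(1+a) with hcdef
  have h1a : (0:ℝ) < 1 + a := by linarith
  have hstep : ∀ s : ℝ, ‖Gc μ₂ (c*s)‖ ≤ ‖Gc μ₂ s‖ := by
    intro s
    have h := hEq' (s/(1+a))
    rw [show (1+a)*(s/(1+a)) = s by field_simp,
        show (1-a)*(s/(1+a)) = c*s by rw [hcdef]; field_simp] at h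
    calc ‖Gc μ₂ (c*s)‖ = ‖Gc μ₁ (2*(s/(1+a)))‖ * ‖Gc μ₂ s‖ := by rw [← h, norm_mul]
      _ ≤ 1 * ‖Gc μ₂ s‖ :=
        mul_le_mul_of_nonneg_right (hGle μ₁ inferInstance _) (norm_nonneg _)
      _ = ‖Gc μ₂ s‖ := one_mul _
  have hiter : ∀ (n : ℕ) (s : ℝ), ‖Gc μ₂ (c^n * s)‖ ≤ ‖Gc μ₂ s‖ := by
    intro n
    induction n with
    | zero => intro s; simp
    | succ n ih =>
        intro s
        calc ‖Gc μ₂ (c^(n+1) * s)‖ = ‖Gc μ₂ (c * (c^n * s))‖ := by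
              rw [show c^(n+1) * s = c * (c^n * s) by ring]
          _ ≤ ‖Gc μ₂ (c^n * s)‖ := hstep _
          _ ≤ ‖Gc μ₂ s‖ := ih s
  have hc : |c| < 1 := by
    rw [hcdef, abs_div, abs_of_pos h1a, div_lt_one h1a, abs_lt]
    constructor <;> linarith
  have hlim : ∀ s : ℝ,
      Filter.Tendsto (fun n : ℕ => Gc μ₂ (c^n * s)) Filter.atTop (nhds 1) := by
    intro s
    have h1 : Filter.Tendsto (fun n : ℕ => (c^n * s : ℝ)) Filter.atTop (nhds 0) := by
      simpa using (tendsto_pow_atTop_nhds_zero_of_abs_lt_one hc).mul_const s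
    have hcont : Continuous fun u : ℝ => Complex.exp ((u:ℂ) * I) :=
      Complex.continuous_exp.comp (Complex.continuous_ofReal.mul continuous_const)
    have hres := tendsto_integral_of_dominated_convergence (μ := μ₂)
      (F := fun (n : ℕ) (x : XT) => Complex.exp (((c^n * s * x.1 : ℝ) : ℂ) * I))
      (f := fun _ => (1:ℂ)) (fun _ => (1:ℝ))
      (fun n => (Continuous.aestronglyMeasurable (by fun_prop)))
      (integrable_const 1)
      (fun n => Filter.Eventually.of_forall fun x => le_of_eq (norm_exp_real_mul_I _))
      (Filter.Eventually.of_forall fun x => by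
        have e : Filter.Tendsto (fun k : ℕ => (c^k * s * x.1 : ℝ)) Filter.atTop (nhds 0) := by
          simpa using h1.mul_const x.1
        have h3 := (hcont.tendsto 0).comp e
        simp only [Function.comp_def, Complex.ofReal_zero, zero_mul, Complex.exp_zero] at h3
        exact h3)
    have hone : (∫ _x : XT, (1:ℂ) ∂μ₂) = 1 := by simp
    rw [hone] at hres
    exact hres
  have hG2 : ∀ s : ℝ, ‖Gc μ₂ s‖ = 1 := by
    intro s
    refine le_antisymm (hGle μ₂ inferInstance s) ?_
    have hn : Filter.Tendsto (fun n : ℕ => ‖Gc μ₂ (c^n * s)‖) Filter.atTop (nhds 1) := by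
      simpa using (hlim s).norm
    exact le_of_tendsto hn (Filter.Eventually.of_forall fun n => hiter n s)
  have hG1 : ∀ s : ℝ, ‖Gc μ₁ s‖ = 1 := by
    intro s
    have h := hEq' (s/2)
    rw [show 2*(s/2) = s by ring] at h
    have hnm := congrArg Norm.norm h
    rw [norm_mul, hG2, hG2, mul_one] at hnm
    exact hnm
  have hmarg : ∀ (μ : Measure XT), IsProbabilityMeasure μ → (∀ s, ‖Gc μ s‖ = 1) →
      ∃ r : ℝ, μ {x : XT | x.1 = r} = 1 := by
    intro μ hPμ hμ
    set ρ : Measure ℝ := μ.map (fun x : XT => x.1) with hρ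
    haveI : IsProbabilityMeasure ρ := Measure.isProbabilityMeasure_map measurable_fst.aemeasurable
    have htr : ∀ t : ℝ, (∫ x : ℝ, Complex.exp (((t * x : ℝ) : ℂ) * I) ∂ρ) = Gc μ t := by
      intro t
      rw [hρ, integral_map measurable_fst.aemeasurable
        (Continuous.aestronglyMeasurable (by fun_prop))]
    obtain ⟨r, hr⟩ := dirac_of_char ρ (fun t => by rw [htr t]; exact hμ t)
    refine ⟨r, ?_⟩
    rw [hρ, Measure.map_apply measurable_fst (measurableSet_singleton r)] at hr
    exact hr
  obtain ⟨r₁, hr₁⟩ := hmarg μ₁ inferInstance hG1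
  obtain ⟨r₂, hr₂⟩ := hmarg μ₂ inferInstance hG2
  -- circle part
  set c2 : Additive Circle := Additive.ofMul (Circle.exp (b * r₂)) with hc2
  set pt : XT := (a * r₂ - r₂, c2) with hpt
  have hφm : Measurable (fun v : XT × XT => v.2 - v.1) := measurable_snd.sub measurable_fst
  have hptS : MeasurableSet ((fun v : XT × XT => v.2 - v.1) ⁻¹' {pt}) :=
    hφm (measurableSet_singleton pt)
  have h1 : m ((fun p : XT × XT => (p.1 + p.2, p.1 + alphaXT a b p.2)) ⁻¹'
        ((fun v : XT × XT => v.2 - v.1) ⁻¹' {pt}))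
      = m ((fun p : XT × XT => (p.1 + p.2, -(p.1 + alphaXT a b p.2))) ⁻¹'
        ((fun v : XT × XT => v.2 - v.1) ⁻¹' {pt})) := by
    rw [← Measure.map_apply hfm hptS, ← Measure.map_apply hgm hptS, hsym]
  have hLpre : ((fun p : XT × XT => (p.1 + p.2, p.1 + alphaXT a b p.2)) ⁻¹'
        ((fun v : XT × XT => v.2 - v.1) ⁻¹' {pt}))
      = {p : XT × XT | alphaXT a b p.2 - p.2 = pt} := by
    ext p
    simp only [Set.mem_preimage, Set.mem_singleton_iff, Set.mem_setOf_eq]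
    rw [add_sub_add_left_eq_sub]
  have hset21 : m {p : XT × XT | p.2.1 = r₂} = 1 := by
    have hEqset : {p : XT × XT | p.2.1 = r₂} = Set.univ ×ˢ {y : XT | y.1 = r₂} := by
      ext p; simp
    rw [hm, hEqset, Measure.prod_prod, measure_univ, one_mul, hr₂]
  have hsub2 : {p : XT × XT | p.2.1 = r₂} ⊆ {p : XT × XT | alphaXT a b p.2 - p.2 = pt} := by
    intro p hp
    simp only [Set.mem_setOf_eq] at hp ⊢
    have : alphaXT a b p.2 - p.2
        = (a * p.2.1 - p.2.1, Additive.ofMul (Circle.exp (b * p.2.1))) := by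
      unfold alphaXT
      rw [Prod.ext_iff]
      exact ⟨rfl, add_sub_cancel_right _ _⟩
    rw [this, hp, hpt, hc2]
  have hmsub2 : MeasurableSet {p : XT × XT | alphaXT a b p.2 - p.2 = pt} :=
    ((hAm.comp measurable_snd).sub measurable_snd) (measurableSet_singleton pt)
  have hL1 : m {p : XT × XT | alphaXT a b p.2 - p.2 = pt} = 1 :=
    le_antisymm prob_le_one (hset21 ▸ measure_mono hsub2)
  rw [hLpre, hL1] at h1
  set d : Additive Circle := -c2 + -c2 with hd
  have hRmeas : MeasurableSet {p : XT × XT | -(p.1 + alphaXT a b p.2) - (p.1 + p.2) = pt} :=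
    ((measurable_fst.add (hAm.comp measurable_snd)).neg.sub
      (measurable_fst.add measurable_snd)) (measurableSet_singleton pt)
  have hmset21 : MeasurableSet {p : XT × XT | p.2.1 = r₂} :=
    (measurable_fst.comp measurable_snd) (measurableSet_singleton r₂)
  have hR : m {p : XT × XT | (p.1.2 + p.1.2) + (p.2.2 + p.2.2) = d} = 1 := by
    have hRpre : ((fun p : XT × XT => (p.1 + p.2, -(p.1 + alphaXT a b p.2))) ⁻¹'
          ((fun v : XT × XT => v.2 - v.1) ⁻¹' {pt}))
        = {p : XT × XT | -(p.1 + alphaXT a b p.2) - (p.1 + p.2) = pt} := rfl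
    rw [hRpre] at h1
    have hint := measure_inter_one' m hRmeas hmset21 h1.symm hset21
    refine le_antisymm prob_le_one ?_
    rw [← hint]
    apply measure_mono
    rintro p ⟨hpe, hp2⟩
    simp only [Set.mem_setOf_eq] at hpe hp2 ⊢
    have h2nd := congrArg Prod.snd hpe
    have hα2 : (alphaXT a b p.2).2 = c2 + p.2.2 := by
      show Additive.ofMul (Circle.exp (b * p.2.1)) + p.2.2 = c2 + p.2.2
      rw [hp2, hc2]
    have hsnd : -(p.1.2 + (c2 + p.2.2)) - (p.1.2 + p.2.2) = c2 := by
      have hl : (-(p.1 + alphaXT a b p.2) - (p.1 + p.2)).2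
          = -(p.1.2 + (c2 + p.2.2)) - (p.1.2 + p.2.2) := by
        simp only [Prod.snd_sub, Prod.snd_neg, Prod.snd_add, hα2]
      rw [← hl, h2nd, hpt]
    exact grp_id _ _ _ hsnd
  -- push to the circle
  have hcom : Measurable (fun x : XT => x.2 + x.2) := measurable_snd.add measurable_snd
  set κ₁ : Measure (Additive Circle) := μ₁.map (fun x : XT => x.2 + x.2) with hκ₁
  set κ₂ : Measure (Additive Circle) := μ₂.map (fun x : XT => x.2 + x.2) with hκ₂
  haveI : IsProbabilityMeasure κ₁ := Measure.isProbabilityMeasure_map hcom.aemeasurable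
  haveI : IsProbabilityMeasure κ₂ := Measure.isProbabilityMeasure_map hcom.aemeasurable
  have hdS : MeasurableSet {q : (Additive Circle) × (Additive Circle) | q.1 + q.2 = d} :=
    (measurable_fst.add measurable_snd) (measurableSet_singleton d)
  have hκ : (κ₁.prod κ₂) {q : (Additive Circle) × (Additive Circle) | q.1 + q.2 = d} = 1 := by
    rw [hκ₁, hκ₂, Measure.map_prod_map _ _ hcom hcom,
      Measure.map_apply (hcom.prodMap hcom) hdS]
    exact hR
  obtain ⟨u, hu1, hu2⟩ := exists_dirac_pair κ₁ κ₂ d hdS hκ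
  have hμu1 : μ₁ {x : XT | x.2 + x.2 = u} = 1 := by
    rw [hκ₁, Measure.map_apply hcom (measurableSet_singleton u)] at hu1
    exact hu1
  have hμu2 : μ₂ {x : XT | x.2 + x.2 = d - u} = 1 := by
    rw [hκ₂, Measure.map_apply hcom (measurableSet_singleton (d - u))] at hu2
    exact hu2
  obtain ⟨x₁, hx₁⟩ := conv_dirac_setG μ₁ r₁ u hr₁ hμu1
  obtain ⟨x₂, hx₂⟩ := conv_dirac_setG μ₂ r₂ (d - u) hr₂ hμu2
  exact ⟨x₁, x₂, hx₁, hx₂⟩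
end

section
/- Let X = ℝ × 𝕋, let a, b ∈ ℝ with a ≠ 0, and let α be the topological automorphism α(t,z) = (a·t, e^{i·b·t}·z) of X. Let μ_1, μ_2 be probability measures on X and suppose Measure.map ((x,y) ↦ (x + y, x + α(y))) (μ_1 ⊗ μ_2) = Measure.map ((x,y) ↦ (x + y, −(x + α(y)))) (μ_1 ⊗ μ_2). Then there exist x_1, x_2 ∈ X such that the shifted measures λ_j = μ_j * δ_{−x_j} satisfy: if a ≠ 1, then λ_j is concentrated on the closed subgroup K = { (t, ±e^{i·b·t/(a−1)}) : t ∈ ℝ } (λ_j(K) = 1); if a = 1, then λ_j is concentrated on G; and in both cases Measure.map ((x,y) ↦ (x + y, x + α(y))) (λ_1 ⊗ λ_2) = Measure.map ((x,y) ↦ (x + y, −(x + α(y)))) (λ_1 ⊗ λ_2). -/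
open MeasureTheory Complex
open scoped ENNReal

noncomputable def setK (a b : ℝ) : Set XT :=
  {x | x.2.toMul = Circle.exp (b * x.1 / (a - 1)) ∨
       x.2.toMul = negOneCircle * Circle.exp (b * x.1 / (a - 1))}

-- instances
instance inst_s14 : BorelSpace (Additive Circle) := ⟨rfl⟩
instance : SecondCountableTopology (Additive Circle) :=
  inferInstanceAs (SecondCountableTopology Circle)

example : MeasurableAdd₂ (Additive Circle) := by infer_instance
example : MeasurableNeg (Additive Circle) := by infer_instance
example : MeasurableAdd₂ XT := by infer_instance
example : MeasurableNeg XT := by infer_instance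
example : MeasurableSingletonClass (Additive Circle) := by infer_instance

-- circle square lemma
lemma circle_sq (z : Circle) : z * z = 1 ↔ z = 1 ∨ z = negOneCircle := by
  constructor
  · intro h
    have h' : (z:ℂ) * z = 1 := by
      have := congrArg Subtype.val h; push_cast at this ⊢; exact_mod_cast this
    rcases mul_self_eq_one_iff.1 h' with h | h
    · left; exact Subtype.ext h
    · right; exact Subtype.ext h
  · rintro (rfl | rfl)
    · simp
    · apply Subtype.ext; show ((-1 : ℂ)) * (-1) = 1; ring

lemma add_self_eq_zero_iff (y : Additive Circle) :
    y + y = 0 ↔ y.toMul = 1 ∨ y.toMul = negOneCircle := by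
  rw [← circle_sq]
  rfl

-- alpha lemmas
lemma alpha_measurable (a b : ℝ) : Measurable (alphaXT a b) := by
  apply Continuous.measurable
  unfold alphaXT
  refine Continuous.prodMk (by fun_prop) ?_
  exact Continuous.mul (Circle.exp.continuous.comp (continuous_const.mul continuous_fst))
    (continuous_snd : Continuous fun x : XT => Additive.toMul x.2)

lemma alpha_add (a b : ℝ) (x y : XT) :
    alphaXT a b (x + y) = alphaXT a b x + alphaXT a b y := by
  unfold alphaXT
  refine Prod.ext (by simp [Prod.fst_add]; ring) ?_
  show Additive.ofMul (Circle.exp (b * (x.1 + y.1))) + (x.2 + y.2) =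
      (Additive.ofMul (Circle.exp (b * x.1)) + x.2) + (Additive.ofMul (Circle.exp (b * y.1)) + y.2)
  rw [show b * (x.1 + y.1) = b * x.1 + b * y.1 by ring, Circle.exp_add, ofMul_mul]
  abel

lemma alpha_zero (a b : ℝ) : alphaXT a b 0 = 0 := by
  unfold alphaXT
  refine Prod.ext (by simp) ?_
  show Additive.ofMul (Circle.exp (b * (0:ℝ))) + (0 : Additive Circle) = 0
  simp

lemma alpha_neg (a b : ℝ) (x : XT) : alphaXT a b (-x) = -alphaXT a b x := by
  have h := alpha_add a b x (-x)
  rw [add_neg_cancel, alpha_zero] at h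
  exact (neg_eq_of_add_eq_zero_right h.symm).symm

-- torsion subgroup as a set
lemma tor_add {Y : Type*} [AddCommGroup Y] :
    ∀ x ∈ {y : Y | y + y = 0}, ∀ z ∈ {y : Y | y + y = 0}, x + z ∈ {y : Y | y + y = 0} := by
  intro x hx z hz
  have : (x + z) + (x + z) = (x + x) + (z + z) := by abel
  simp only [Set.mem_setOf_eq] at *
  rw [this, hx, hz, add_zero]

lemma tor_sub {Y : Type*} [AddCommGroup Y] :
    ∀ x ∈ {y : Y | y + y = 0}, ∀ z ∈ {y : Y | y + y = 0}, x - z ∈ {y : Y | y + y = 0} := by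
  intro x hx z hz
  have : (x - z) + (x - z) = (x + x) - (z + z) := by abel
  simp only [Set.mem_setOf_eq] at *
  rw [this, hx, hz, sub_zero]

lemma tor_meas {Y : Type*} [AddCommGroup Y] [MeasurableSpace Y] [MeasurableAdd₂ Y]
    [MeasurableSingletonClass Y] : MeasurableSet {y : Y | y + y = 0} := by
  have : {y : Y | y + y = 0} = (fun y : Y => y + y) ⁻¹' {0} := rfl
  rw [this]
  exact (measurable_id.add measurable_id) (measurableSet_singleton 0)

-- the beta homomorphism (case a ≠ 1)
noncomputable def betaF (a b : ℝ) : XT → Additive Circle :=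
  fun x => Additive.ofMul (Additive.toMul x.2 * (Circle.exp (b * x.1 / (a - 1)))⁻¹)

lemma betaF_measurable (a b : ℝ) : Measurable (betaF a b) := by
  apply Continuous.measurable
  unfold betaF
  exact (Continuous.mul (continuous_snd : Continuous fun x : XT => Additive.toMul x.2)
    ((Circle.exp.continuous.comp (by fun_prop)).inv) :
    Continuous fun x : XT => Additive.toMul x.2 * (Circle.exp (b * x.1 / (a - 1)))⁻¹)

lemma betaF_add (a b : ℝ) (x y : XT) :
    betaF a b (x + y) = betaF a b x + betaF a b y := by
  unfold betaF
  rw [← ofMul_mul]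
  apply congrArg Additive.ofMul
  show Additive.toMul (x.2 + y.2) * (Circle.exp (b * (x.1 + y.1) / (a-1)))⁻¹ = _
  rw [toMul_add, show b * (x.1 + y.1) / (a-1) = b * x.1 / (a-1) + b * y.1 / (a-1) by ring,
    Circle.exp_add, mul_inv]
  exact mul_mul_mul_comm _ _ _ _

lemma betaF_zero (a b : ℝ) : betaF a b 0 = 0 := by
  unfold betaF
  show Additive.ofMul (Additive.toMul (0 : Additive Circle) * (Circle.exp (b * (0:ℝ) / (a-1)))⁻¹) = 0
  simp

lemma betaF_neg (a b : ℝ) (x : XT) : betaF a b (-x) = -betaF a b x := by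
  have h := betaF_add a b x (-x)
  rw [add_neg_cancel, betaF_zero] at h
  exact (neg_eq_of_add_eq_zero_right h.symm).symm

lemma betaF_alpha (a b : ℝ) (ha : a ≠ 1) (y : XT) :
    betaF a b (alphaXT a b y) = betaF a b y := by
  unfold betaF alphaXT
  apply congrArg Additive.ofMul
  show Additive.toMul (Additive.ofMul (Circle.exp (b * y.1)) + y.2) *
      (Circle.exp (b * (a * y.1) / (a-1)))⁻¹ = Additive.toMul y.2 * (Circle.exp (b * y.1 / (a-1)))⁻¹
  rw [toMul_add, toMul_ofMul]
  have ha' : a - 1 ≠ 0 := sub_ne_zero.2 ha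
  have key : Circle.exp (b * y.1) * (Circle.exp (b * (a * y.1) / (a-1)))⁻¹ =
      (Circle.exp (b * y.1 / (a-1)))⁻¹ := by
    rw [← div_eq_mul_inv, ← Circle.exp_sub, ← Circle.exp_neg]
    apply congrArg
    field_simp
    ring
  calc Circle.exp (b * y.1) * Additive.toMul y.2 * (Circle.exp (b * (a * y.1) / (a-1)))⁻¹
      = Additive.toMul y.2 * (Circle.exp (b * y.1) * (Circle.exp (b * (a * y.1) / (a-1)))⁻¹) := by
        rw [mul_comm (Circle.exp (b * y.1)) (Additive.toMul y.2), mul_assoc]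
    _ = _ := by rw [key]

lemma setK_eq (a b : ℝ) : setK a b = betaF a b ⁻¹' {y : Additive Circle | y + y = 0} := by
  ext x
  simp only [setK, Set.mem_setOf_eq, Set.mem_preimage]
  rw [add_self_eq_zero_iff]
  unfold betaF
  rw [toMul_ofMul]
  constructor
  · rintro (h | h)
    · left; rw [h]; simp
    · right; rw [h]; rw [mul_assoc]; simp
  · rintro (h | h)
    · left; rwa [mul_inv_eq_one] at h
    · right
      rw [mul_inv_eq_iff_eq_mul] at h
      rw [h]

-- convolution with a dirac is a translation
lemma conv_dirac' (μ : Measure XT) [SFinite μ] (c : XT) :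
    μ.conv (Measure.dirac c) = Measure.map (· + c) μ := by
  unfold Measure.conv
  rw [Measure.prod_dirac, Measure.map_map measurable_add measurable_prodMk_right]
  rfl

-- the translation-invariance lemma for the symmetry condition
lemma shift_sym (a b : ℝ) (μ₁ μ₂ : Measure XT)
    [IsProbabilityMeasure μ₁] [IsProbabilityMeasure μ₂]
    (hsym :
      Measure.map (fun p : XT × XT => (p.1 + p.2, p.1 + alphaXT a b p.2)) (μ₁.prod μ₂) =
      Measure.map (fun p : XT × XT => (p.1 + p.2, -(p.1 + alphaXT a b p.2))) (μ₁.prod μ₂))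
    (x₁ x₂ : XT)
    (hr : (x₁ + alphaXT a b x₂) + (x₁ + alphaXT a b x₂) = 0) :
    Measure.map (fun p : XT × XT => (p.1 + p.2, p.1 + alphaXT a b p.2))
        ((μ₁.conv (Measure.dirac (-x₁))).prod (μ₂.conv (Measure.dirac (-x₂)))) =
      Measure.map (fun p : XT × XT => (p.1 + p.2, -(p.1 + alphaXT a b p.2)))
        ((μ₁.conv (Measure.dirac (-x₁))).prod (μ₂.conv (Measure.dirac (-x₂)))) := by
  set r := x₁ + alphaXT a b x₂ with hrdef
  have hrr : -r = r := neg_eq_of_add_eq_zero_right hr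
  have hmα : Measurable (alphaXT a b) := alpha_measurable a b
  have hmT : Measurable (fun p : XT × XT => (p.1 + p.2, p.1 + alphaXT a b p.2)) :=
    (measurable_fst.add measurable_snd).prodMk
      (measurable_fst.add (hmα.comp measurable_snd))
  have hmT' : Measurable (fun p : XT × XT => (p.1 + p.2, -(p.1 + alphaXT a b p.2))) :=
    (measurable_fst.add measurable_snd).prodMk
      (measurable_fst.add (hmα.comp measurable_snd)).neg
  have hmf₁ : Measurable (fun x : XT => x + -x₁) := measurable_add_const _
  have hmf₂ : Measurable (fun x : XT => x + -x₂) := measurable_add_const _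
  have hG : Measurable (fun q : XT × XT => (q.1 + -(x₁ + x₂), q.2 + -r)) :=
    (measurable_fst.add_const _).prodMk (measurable_snd.add_const _)
  rw [conv_dirac' μ₁ (-x₁), conv_dirac' μ₂ (-x₂),
    Measure.map_prod_map _ _ hmf₁ hmf₂,
    Measure.map_map hmT (hmf₁.prodMap hmf₂),
    Measure.map_map hmT' (hmf₁.prodMap hmf₂)]
  have hcomp1 : (fun p : XT × XT => (p.1 + p.2, p.1 + alphaXT a b p.2)) ∘
      (Prod.map (fun x : XT => x + -x₁) (fun x : XT => x + -x₂)) =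
      (fun q : XT × XT => (q.1 + -(x₁ + x₂), q.2 + -r)) ∘
      (fun p : XT × XT => (p.1 + p.2, p.1 + alphaXT a b p.2)) := by
    funext p
    refine Prod.ext ?_ ?_
    · show (p.1 + -x₁) + (p.2 + -x₂) = (p.1 + p.2) + -(x₁ + x₂)
      abel
    · show (p.1 + -x₁) + alphaXT a b (p.2 + -x₂) = (p.1 + alphaXT a b p.2) + -r
      rw [alpha_add, alpha_neg, hrdef]
      abel
  have hcomp2 : (fun p : XT × XT => (p.1 + p.2, -(p.1 + alphaXT a b p.2))) ∘
      (Prod.map (fun x : XT => x + -x₁) (fun x : XT => x + -x₂)) =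
      (fun q : XT × XT => (q.1 + -(x₁ + x₂), q.2 + -r)) ∘
      (fun p : XT × XT => (p.1 + p.2, -(p.1 + alphaXT a b p.2))) := by
    funext p
    refine Prod.ext ?_ ?_
    · show (p.1 + -x₁) + (p.2 + -x₂) = (p.1 + p.2) + -(x₁ + x₂)
      abel
    · show -((p.1 + -x₁) + alphaXT a b (p.2 + -x₂)) = -(p.1 + alphaXT a b p.2) + -r
      rw [alpha_add, alpha_neg]
      rw [show -((p.1 + -x₁) + (alphaXT a b p.2 + -(alphaXT a b x₂))) =
        -(p.1 + alphaXT a b p.2) + r from by rw [hrdef]; abel, hrr]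
  rw [hcomp1, hcomp2, ← Measure.map_map hG hmT, ← Measure.map_map hG hmT', hsym]

-- diagonal lemma
lemma diag_lemma {Y : Type*} [AddCommGroup Y] [MeasurableSpace Y] [MeasurableAdd₂ Y]
    [MeasurableNeg Y] [MeasurableSingletonClass Y]
    (m : Measure (XT × XT)) [IsProbabilityMeasure m]
    (w : XT × XT → Y) (hw : Measurable w)
    (h : Measure.map (fun p => (w p, w p)) m = Measure.map (fun p => (w p, -(w p))) m) :
    m {p | w p + w p = 0} = 1 := by
  have hD : MeasurableSet {q : Y × Y | q.1 + q.2 = 0} :=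
    (measurable_fst.add measurable_snd) (measurableSet_singleton 0)
  have h1 := congrArg (fun ν : Measure (Y × Y) => ν {q : Y × Y | q.1 + q.2 = 0}) h
  rw [Measure.map_apply (hw.prodMk hw) hD, Measure.map_apply (hw.prodMk hw.neg : Measurable fun p => (w p, -(w p))) hD] at h1
  have h2 : (fun p => (w p, -(w p))) ⁻¹' {q : Y × Y | q.1 + q.2 = 0} = Set.univ := by
    ext p; simp
  rw [h2, measure_univ] at h1
  have h3 : (fun p => (w p, w p)) ⁻¹' {q : Y × Y | q.1 + q.2 = 0} = {p | w p + w p = 0} := rfl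
  rw [h3] at h1
  exact h1

lemma coset_meas {Y : Type*} [AddCommGroup Y] [MeasurableSpace Y] [MeasurableAdd Y]
    (S : Set Y) (hS : MeasurableSet S) (c : Y) : MeasurableSet {y : Y | y - c ∈ S} := by
  have : {y : Y | y - c ∈ S} = (· + -c) ⁻¹' S := by ext y; simp [sub_eq_add_neg]
  rw [this]; exact measurable_add_const (-c) hS

lemma coset_of_conv {Y : Type*} [AddCommGroup Y] [MeasurableSpace Y] [MeasurableAdd₂ Y]
    (ν₁ ν₂ : Measure Y) [IsProbabilityMeasure ν₁] [IsProbabilityMeasure ν₂]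
    (S : Set Y) (hS : MeasurableSet S)
    (hadd : ∀ x ∈ S, ∀ y ∈ S, x + y ∈ S) (hsub : ∀ x ∈ S, ∀ y ∈ S, x - y ∈ S)
    (h : Measure.map (fun p : Y × Y => p.1 + p.2) (ν₁.prod ν₂) S = 1) :
    ∃ d₁ d₂ : Y, ν₁ {y | y - d₁ ∈ S} = 1 ∧ ν₂ {y | y - d₂ ∈ S} = 1 ∧ d₁ + d₂ ∈ S := by
  have hAdd : Measurable (fun p : Y × Y => p.1 + p.2) := measurable_add
  have hE : MeasurableSet ((fun p : Y × Y => p.1 + p.2) ⁻¹' S) := hAdd hS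
  have h1 : (ν₁.prod ν₂) ((fun p : Y × Y => p.1 + p.2) ⁻¹' S) = 1 := by
    rwa [Measure.map_apply hAdd hS] at h
  have sect : ∀ (μ : Measure Y) (_ : IsProbabilityMeasure μ)
      (f : Y → ℝ≥0∞) (_ : Measurable f) (_ : ∀ u, f u ≤ 1)
      (_ : ∫⁻ u, f u ∂μ = 1), ∀ᵐ u ∂μ, f u = 1 := by
    intro μ hμ f hf hle hint
    have hsub' : ∫⁻ u, (1 - f u) ∂μ = 0 := by
      rw [lintegral_sub hf (by simp [hint]) (ae_of_all _ hle)]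
      simp [hint]
    have := (lintegral_eq_zero_iff (measurable_const.sub hf)).1 hsub'
    filter_upwards [this] with u hu
    exact le_antisymm (hle u) (tsub_eq_zero_iff_le.1 hu)
  have hprod : ∫⁻ u, ν₂ (Prod.mk u ⁻¹' ((fun p : Y × Y => p.1 + p.2) ⁻¹' S)) ∂ν₁ = 1 := by
    rw [← Measure.prod_apply hE]; exact h1
  have hmeas₂ : Measurable fun u => ν₂ (Prod.mk u ⁻¹' ((fun p : Y × Y => p.1 + p.2) ⁻¹' S)) :=
    measurable_measure_prodMk_left hE
  have hae₂ : ∀ᵐ u ∂ν₁, ν₂ {v | u + v ∈ S} = 1 := by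
    have := sect ν₁ inferInstance _ hmeas₂ (fun u => prob_le_one) hprod
    filter_upwards [this] with u hu; exact hu
  obtain ⟨c₁, hc₁⟩ := hae₂.exists
  have hprod' : ∫⁻ v, ν₁ ((fun u => (u, v)) ⁻¹' ((fun p : Y × Y => p.1 + p.2) ⁻¹' S)) ∂ν₂ = 1 := by
    rw [← Measure.prod_apply_symm hE]; exact h1
  have hmeas₁ : Measurable fun v =>
      ν₁ ((fun u => (u, v)) ⁻¹' ((fun p : Y × Y => p.1 + p.2) ⁻¹' S)) :=
    measurable_measure_prodMk_right hE
  have hae₁ : ∀ᵐ v ∂ν₂, ν₁ {u | u + v ∈ S} = 1 := by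
    have := sect ν₂ inferInstance _ hmeas₁ (fun v => prob_le_one) hprod'
    filter_upwards [this] with v hv; exact hv
  obtain ⟨c₂, hc₂⟩ := hae₁.exists
  have hd₁ : ν₁ {y | y - -c₂ ∈ S} = 1 := by
    have : {y : Y | y - -c₂ ∈ S} = {u | u + c₂ ∈ S} := by ext y; simp [sub_neg_eq_add]
    rw [this]; exact hc₂
  have hd₂ : ν₂ {y | y - -c₁ ∈ S} = 1 := by
    have : {y : Y | y - -c₁ ∈ S} = {v | c₁ + v ∈ S} := by
      ext y; simp [sub_neg_eq_add, add_comm]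
    rw [this]; exact hc₁
  refine ⟨-c₂, -c₁, hd₁, hd₂, ?_⟩
  set d₁ := -c₂ with hd₁def
  set d₂ := -c₁ with hd₂def
  set ρ := Measure.map (fun p : Y × Y => p.1 + p.2) (ν₁.prod ν₂) with hρ
  have hρP : IsProbabilityMeasure ρ := Measure.isProbabilityMeasure_map hAdd.aemeasurable
  have hCmeas : MeasurableSet {y : Y | y - (d₁ + d₂) ∈ S} := coset_meas S hS _
  have hD₁meas : MeasurableSet {y : Y | y - d₁ ∈ S} := coset_meas S hS _
  have hρC : ρ {y : Y | y - (d₁ + d₂) ∈ S} = 1 := by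
    apply le_antisymm prob_le_one
    rw [hρ, Measure.map_apply hAdd hCmeas, Measure.prod_apply (hAdd hCmeas)]
    have hlow : ∀ u : Y, ({u | u - d₁ ∈ S} : Set Y).indicator (fun _ => (1:ℝ≥0∞)) u ≤
        ν₂ (Prod.mk u ⁻¹' ((fun p : Y × Y => p.1 + p.2) ⁻¹' {y | y - (d₁ + d₂) ∈ S})) := by
      intro u
      by_cases hu : u ∈ {u : Y | u - d₁ ∈ S}
      · rw [Set.indicator_of_mem hu]
        have hsubset : {v : Y | v - d₂ ∈ S} ⊆
            Prod.mk u ⁻¹' ((fun p : Y × Y => p.1 + p.2) ⁻¹' {y | y - (d₁ + d₂) ∈ S}) := by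
          intro v hv
          have heq : (u + v) - (d₁ + d₂) = (u - d₁) + (v - d₂) := by abel
          simp only [Set.mem_preimage, Set.mem_setOf_eq, heq]
          exact hadd _ hu _ hv
        calc (1:ℝ≥0∞) = ν₂ {v | v - d₂ ∈ S} := hd₂.symm
          _ ≤ _ := measure_mono hsubset
      · rw [Set.indicator_of_notMem hu]; exact zero_le
    calc (1:ℝ≥0∞) = ν₁ {u | u - d₁ ∈ S} := hd₁.symm
      _ = ∫⁻ u, ({u | u - d₁ ∈ S} : Set Y).indicator (fun _ => (1:ℝ≥0∞)) u ∂ν₁ := by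
          rw [lintegral_indicator hD₁meas]; simp
      _ ≤ _ := lintegral_mono hlow
  have hint : ρ (S ∩ {y | y - (d₁ + d₂) ∈ S}) ≠ 0 := by
    have h1' : ρ Sᶜ = 0 := by
      have := prob_compl_eq_one_sub hS (μ := ρ); rw [h] at this; simpa using this
    have h2' : ρ {y : Y | y - (d₁ + d₂) ∈ S}ᶜ = 0 := by
      have := prob_compl_eq_one_sub hCmeas (μ := ρ); rw [hρC] at this; simpa using this
    have hcompl : ρ (S ∩ {y | y - (d₁ + d₂) ∈ S})ᶜ = 0 := by
      rw [Set.compl_inter]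
      exact le_antisymm (le_trans (measure_union_le _ _) (by simp [h1', h2'])) zero_le
    intro h0
    have huniv : ρ Set.univ = 0 := by
      rw [← Set.union_compl_self (S ∩ {y | y - (d₁ + d₂) ∈ S})]
      exact le_antisymm (le_trans (measure_union_le _ _) (by simp [h0, hcompl])) zero_le
    simp [measure_univ] at huniv
  obtain ⟨y, hyS, hyC⟩ := MeasureTheory.nonempty_of_measure_ne_zero hint
  have heq : d₁ + d₂ = y - (y - (d₁ + d₂)) := by abel
  rw [heq]
  exact hsub _ hyS _ hyC

lemma prob_inter_one {Ω : Type*} [MeasurableSpace Ω] (μ : Measure Ω) [IsProbabilityMeasure μ]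
    {A B : Set Ω} (hA : MeasurableSet A) (hB : MeasurableSet B)
    (h1 : μ A = 1) (h2 : μ B = 1) : μ (A ∩ B) = 1 := by
  have hA' : μ Aᶜ = 0 := by
    have := prob_compl_eq_one_sub hA (μ := μ); rw [h1] at this; simpa using this
  have hB' : μ Bᶜ = 0 := by
    have := prob_compl_eq_one_sub hB (μ := μ); rw [h2] at this; simpa using this
  have hc : μ (A ∩ B)ᶜ = 0 := by
    rw [Set.compl_inter]
    exact le_antisymm (le_trans (measure_union_le _ _) (by simp [hA', hB'])) zero_le
  have := prob_compl_eq_one_sub (hA.inter hB) (μ := μ)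
  rw [hc] at this
  have h3 : (1:ℝ≥0∞) - μ (A ∩ B) = 0 := this.symm
  have h4 : μ (A ∩ B) ≤ 1 := prob_le_one
  exact le_antisymm h4 (by rwa [tsub_eq_zero_iff_le] at h3)

lemma ae_of_prob_one {Ω : Type*} [MeasurableSpace Ω] (μ : Measure Ω) [IsProbabilityMeasure μ]
    {A : Set Ω} (hA : MeasurableSet A) (h1 : μ A = 1) : ∀ᵐ x ∂μ, x ∈ A := by
  rw [ae_iff]
  have : {x | ¬ x ∈ A} = Aᶜ := rfl
  rw [this]
  have := prob_compl_eq_one_sub hA (μ := μ); rw [h1] at this; simpa using this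

set_option maxHeartbeats 1000000 in
/-- Lemma 3.1: under the symmetry condition on `ℝ × 𝕋` with
`α(t,z) = (a·t, e^{i·b·t}·z)`, suitable shifts `λⱼ = μⱼ ∗ δ_{−xⱼ}` are concentrated on
`K = {(t, ±e^{i·b·t/(a−1)})}` (if `a ≠ 1`), resp. on `G` (if `a = 1`), and the shifted
measures again satisfy the symmetry condition. -/
theorem heyde_R_T_shift_lemma (a b : ℝ) (ha : a ≠ 0)
    (μ₁ μ₂ : Measure XT) [IsProbabilityMeasure μ₁] [IsProbabilityMeasure μ₂]
    (hsym :
      Measure.map (fun p : XT × XT => (p.1 + p.2, p.1 + alphaXT a b p.2)) (μ₁.prod μ₂) =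
      Measure.map (fun p : XT × XT => (p.1 + p.2, -(p.1 + alphaXT a b p.2))) (μ₁.prod μ₂)) :
    ∃ x₁ x₂ : XT,
      (a ≠ 1 →
        Measure.conv μ₁ (Measure.dirac (-x₁)) (setK a b) = 1 ∧
        Measure.conv μ₂ (Measure.dirac (-x₂)) (setK a b) = 1) ∧
      (a = 1 →
        Measure.conv μ₁ (Measure.dirac (-x₁)) setG = 1 ∧
        Measure.conv μ₂ (Measure.dirac (-x₂)) setG = 1) ∧
      (Measure.map (fun p : XT × XT => (p.1 + p.2, p.1 + alphaXT a b p.2))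
          ((Measure.conv μ₁ (Measure.dirac (-x₁))).prod
            (Measure.conv μ₂ (Measure.dirac (-x₂)))) =
        Measure.map (fun p : XT × XT => (p.1 + p.2, -(p.1 + alphaXT a b p.2)))
          ((Measure.conv μ₁ (Measure.dirac (-x₁))).prod
            (Measure.conv μ₂ (Measure.dirac (-x₂))))) := by
  have hmα : Measurable (alphaXT a b) := alpha_measurable a b
  have hmT : Measurable (fun p : XT × XT => (p.1 + p.2, p.1 + alphaXT a b p.2)) :=
    (measurable_fst.add measurable_snd).prodMk
      (measurable_fst.add (hmα.comp measurable_snd))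
  have hmT' : Measurable (fun p : XT × XT => (p.1 + p.2, -(p.1 + alphaXT a b p.2))) :=
    (measurable_fst.add measurable_snd).prodMk
      (measurable_fst.add (hmα.comp measurable_snd)).neg
  by_cases hA : a = 1
  · -- case a = 1
    subst hA
    -- Step 1 : the real parts are a.s. constant
    have hw1 : Measurable (fun p : XT × XT => p.1.1 + p.2.1) :=
      measurable_fst.fst.add measurable_snd.fst
    have hf : Measurable (fun x : XT => x.1) := measurable_fst
    have hcompT : (Prod.map (fun x : XT => x.1) (fun x : XT => x.1)) ∘
        (fun p : XT × XT => (p.1 + p.2, p.1 + alphaXT 1 b p.2)) =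
        fun p : XT × XT => (p.1.1 + p.2.1, p.1.1 + p.2.1) := by
      funext p
      refine Prod.ext rfl ?_
      show p.1.1 + (1 : ℝ) * p.2.1 = p.1.1 + p.2.1
      rw [one_mul]
    have hcompT' : (Prod.map (fun x : XT => x.1) (fun x : XT => x.1)) ∘
        (fun p : XT × XT => (p.1 + p.2, -(p.1 + alphaXT 1 b p.2))) =
        fun p : XT × XT => (p.1.1 + p.2.1, -(p.1.1 + p.2.1)) := by
      funext p
      refine Prod.ext rfl ?_
      show -(p.1.1 + (1 : ℝ) * p.2.1) = -(p.1.1 + p.2.1)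
      rw [one_mul]
    have h2 : Measure.map (fun p : XT × XT => (p.1.1 + p.2.1, p.1.1 + p.2.1)) (μ₁.prod μ₂) =
        Measure.map (fun p : XT × XT => (p.1.1 + p.2.1, -(p.1.1 + p.2.1))) (μ₁.prod μ₂) := by
      rw [← hcompT, ← hcompT', ← Measure.map_map (hf.prodMap hf) hmT,
        ← Measure.map_map (hf.prodMap hf) hmT', hsym]
    have h3 : (μ₁.prod μ₂) {p : XT × XT | (p.1.1 + p.2.1) + (p.1.1 + p.2.1) = 0} = 1 :=
      diag_lemma (μ₁.prod μ₂) (fun p => p.1.1 + p.2.1) hw1 h2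
    have h4 : Measure.map (fun q : ℝ × ℝ => q.1 + q.2)
        ((Measure.map (fun x : XT => x.1) μ₁).prod (Measure.map (fun x : XT => x.1) μ₂))
        {t : ℝ | t + t = 0} = 1 := by
      rw [Measure.map_prod_map _ _ hf hf, Measure.map_map measurable_add (hf.prodMap hf)]
      have e3 : (fun q : ℝ × ℝ => q.1 + q.2) ∘
          (Prod.map (fun x : XT => x.1) (fun x : XT => x.1)) =
          fun p : XT × XT => p.1.1 + p.2.1 := by funext p; rfl
      rw [e3, Measure.map_apply hw1 tor_meas]
      exact h3
    have : IsProbabilityMeasure (Measure.map (fun x : XT => x.1) μ₁) :=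
      Measure.isProbabilityMeasure_map hf.aemeasurable
    have : IsProbabilityMeasure (Measure.map (fun x : XT => x.1) μ₂) :=
      Measure.isProbabilityMeasure_map hf.aemeasurable
    obtain ⟨c₁, c₂, hc₁, hc₂, hcS⟩ := coset_of_conv _ _ _ tor_meas tor_add tor_sub h4
    have hc0 : c₁ + c₂ = 0 := by
      have := hcS; simp only [Set.mem_setOf_eq] at this; linarith
    have hsetc : ∀ c : ℝ, {t : ℝ | t - c ∈ {y : ℝ | y + y = 0}} = {t : ℝ | t = c} := by
      intro c; ext t; simp only [Set.mem_setOf_eq]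
      constructor <;> intro h <;> linarith
    have hfc₁ : μ₁ {x : XT | x.1 = c₁} = 1 := by
      rw [Measure.map_apply hf (coset_meas _ tor_meas c₁), hsetc c₁] at hc₁
      exact hc₁
    have hfc₂ : μ₂ {x : XT | x.1 = c₂} = 1 := by
      rw [Measure.map_apply hf (coset_meas _ tor_meas c₂), hsetc c₂] at hc₂
      exact hc₂
    have hmA₁ : MeasurableSet {x : XT | x.1 = c₁} :=
      measurable_fst (measurableSet_singleton c₁)
    have hmA₂ : MeasurableSet {x : XT | x.1 = c₂} :=
      measurable_fst (measurableSet_singleton c₂)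
    -- Step 2 : the circle parts
    set q : Additive Circle := Additive.ofMul (Circle.exp (b * c₂)) with hq
    set w2 : XT × XT → Additive Circle := fun p => q + (p.1.2 + p.2.2) with hw2def
    have hw2 : Measurable w2 :=
      measurable_const.add (measurable_fst.snd.add measurable_snd.snd)
    have hg : Measurable (fun x : XT => x.2) := measurable_snd
    have hg₁ : Measurable (fun x : XT => q + x.2) := measurable_const.add measurable_snd
    have hae : ∀ᵐ p ∂(μ₁.prod μ₂), p.2.1 = c₂ := by
      have hs : MeasurableSet {p : XT × XT | p.2.1 = c₂} :=
        measurable_snd.fst (measurableSet_singleton c₂)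
      have hms : (μ₁.prod μ₂) {p : XT × XT | p.2.1 = c₂} = 1 := by
        have hseq : {p : XT × XT | p.2.1 = c₂} = Set.univ ×ˢ {x : XT | x.1 = c₂} := by
          ext p; simp [Set.mem_prod]
        rw [hseq, Measure.prod_prod, measure_univ, one_mul]
        exact hfc₂
      have := ae_of_prob_one (μ₁.prod μ₂) hs hms
      filter_upwards [this] with p hp; exact hp
    -- push hsym through the circle projections
    have hmapT : Measure.map ((Prod.map (fun x : XT => x.2) (fun x : XT => x.2)) ∘
        (fun p : XT × XT => (p.1 + p.2, p.1 + alphaXT 1 b p.2))) (μ₁.prod μ₂) =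
        Measure.map (fun p : XT × XT => (p.1.2 + p.2.2, q + (p.1.2 + p.2.2))) (μ₁.prod μ₂) := by
      apply Measure.map_congr
      filter_upwards [hae] with p hp
      refine Prod.ext rfl ?_
      show p.1.2 + (Additive.ofMul (Circle.exp (b * p.2.1)) + p.2.2) = q + (p.1.2 + p.2.2)
      rw [hp, ← hq]
      abel
    have hmapT' : Measure.map ((Prod.map (fun x : XT => x.2) (fun x : XT => x.2)) ∘
        (fun p : XT × XT => (p.1 + p.2, -(p.1 + alphaXT 1 b p.2)))) (μ₁.prod μ₂) =
        Measure.map (fun p : XT × XT => (p.1.2 + p.2.2, -(q + (p.1.2 + p.2.2)))) (μ₁.prod μ₂) := by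
      apply Measure.map_congr
      filter_upwards [hae] with p hp
      refine Prod.ext rfl ?_
      show -(p.1.2 + (Additive.ofMul (Circle.exp (b * p.2.1)) + p.2.2)) = -(q + (p.1.2 + p.2.2))
      rw [hp, ← hq]
      abel_nf
    have hstep : Measure.map (fun p : XT × XT => (p.1.2 + p.2.2, q + (p.1.2 + p.2.2))) (μ₁.prod μ₂)
        = Measure.map (fun p : XT × XT => (p.1.2 + p.2.2, -(q + (p.1.2 + p.2.2)))) (μ₁.prod μ₂) := by
      rw [← hmapT, ← hmapT', ← Measure.map_map (hg.prodMap hg) hmT,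
        ← Measure.map_map (hg.prodMap hg) hmT', hsym]
    have hv : Measurable (fun p : XT × XT => p.1.2 + p.2.2) :=
      measurable_fst.snd.add measurable_snd.snd
    have hF : Measurable (fun y : (Additive Circle) × (Additive Circle) => (q + y.1, y.2)) :=
      (measurable_const.add measurable_fst).prodMk measurable_snd
    have h2 : Measure.map (fun p : XT × XT => (w2 p, w2 p)) (μ₁.prod μ₂) =
        Measure.map (fun p : XT × XT => (w2 p, -(w2 p))) (μ₁.prod μ₂) := by
      have e1 : (fun p : XT × XT => (w2 p, w2 p)) =
          (fun y : (Additive Circle) × (Additive Circle) => (q + y.1, y.2)) ∘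
          (fun p : XT × XT => (p.1.2 + p.2.2, q + (p.1.2 + p.2.2))) := rfl
      have e2 : (fun p : XT × XT => (w2 p, -(w2 p))) =
          (fun y : (Additive Circle) × (Additive Circle) => (q + y.1, y.2)) ∘
          (fun p : XT × XT => (p.1.2 + p.2.2, -(q + (p.1.2 + p.2.2)))) := rfl
      rw [e1, e2, ← Measure.map_map hF (hv.prodMk (measurable_const.add hv) :
          Measurable fun p : XT × XT => (p.1.2 + p.2.2, q + (p.1.2 + p.2.2))),
        ← Measure.map_map hF (hv.prodMk (measurable_const.add hv).neg :
          Measurable fun p : XT × XT => (p.1.2 + p.2.2, -(q + (p.1.2 + p.2.2)))), hstep]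
    have h3 : (μ₁.prod μ₂) {p : XT × XT | w2 p + w2 p = 0} = 1 :=
      diag_lemma (μ₁.prod μ₂) w2 hw2 h2
    have : IsProbabilityMeasure (Measure.map (fun x : XT => q + x.2) μ₁) :=
      Measure.isProbabilityMeasure_map hg₁.aemeasurable
    have : IsProbabilityMeasure (Measure.map (fun x : XT => x.2) μ₂) :=
      Measure.isProbabilityMeasure_map hg.aemeasurable
    have h4 : Measure.map (fun y : (Additive Circle) × (Additive Circle) => y.1 + y.2)
        ((Measure.map (fun x : XT => q + x.2) μ₁).prod (Measure.map (fun x : XT => x.2) μ₂))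
        {y : Additive Circle | y + y = 0} = 1 := by
      rw [Measure.map_prod_map _ _ hg₁ hg, Measure.map_map measurable_add (hg₁.prodMap hg)]
      have e3 : (fun y : (Additive Circle) × (Additive Circle) => y.1 + y.2) ∘
          (Prod.map (fun x : XT => q + x.2) (fun x : XT => x.2)) = w2 := by
        funext p
        show (q + p.1.2) + p.2.2 = q + (p.1.2 + p.2.2)
        rw [add_assoc]
      rw [e3, Measure.map_apply hw2 tor_meas]
      exact h3
    obtain ⟨e₁, e₂, he₁, he₂, heS⟩ := coset_of_conv _ _ _ tor_meas tor_add tor_sub h4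
    have he₁' : μ₁ {x : XT | (q + x.2) - e₁ ∈ {y : Additive Circle | y + y = 0}} = 1 := by
      rw [Measure.map_apply hg₁ (coset_meas _ tor_meas e₁)] at he₁
      exact he₁
    have he₂' : μ₂ {x : XT | x.2 - e₂ ∈ {y : Additive Circle | y + y = 0}} = 1 := by
      rw [Measure.map_apply hg (coset_meas _ tor_meas e₂)] at he₂
      exact he₂
    have hmB₁ : MeasurableSet {x : XT | (q + x.2) - e₁ ∈ {y : Additive Circle | y + y = 0}} :=
      hg₁ (coset_meas _ tor_meas e₁)
    have hmB₂ : MeasurableSet {x : XT | x.2 - e₂ ∈ {y : Additive Circle | y + y = 0}} :=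
      hg (coset_meas _ tor_meas e₂)
    -- the shifts
    refine ⟨(c₁, e₁ - q), (c₂, e₂), fun h => absurd rfl h, fun _ => ?_, ?_⟩
    · -- concentration on G
      have hGeq : setG = {x : XT | x.1 = 0 ∧ x.2 + x.2 = 0} := by
        ext x
        simp only [setG, Set.mem_setOf_eq]
        rw [add_self_eq_zero_iff]
      have hGmeas : MeasurableSet setG := by
        rw [hGeq]
        exact (measurable_fst (measurableSet_singleton (0:ℝ))).inter
          ((measurable_snd.add measurable_snd) (measurableSet_singleton (0 : Additive Circle)))
      constructor
      · rw [conv_dirac' μ₁ _, Measure.map_apply (measurable_add_const _) hGmeas]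
        apply le_antisymm prob_le_one
        have hsubset : {x : XT | x.1 = c₁} ∩
            {x : XT | (q + x.2) - e₁ ∈ {y : Additive Circle | y + y = 0}} ⊆
            (fun x : XT => x + -(c₁, e₁ - q)) ⁻¹' setG := by
          rintro x ⟨hx1, hx2⟩
          simp only [Set.mem_setOf_eq] at hx1 hx2
          simp only [Set.mem_preimage, hGeq, Set.mem_setOf_eq]
          constructor
          · show x.1 + -c₁ = 0
            rw [hx1]; ring
          · show (x.2 + -(e₁ - q)) + (x.2 + -(e₁ - q)) = 0
            have : x.2 + -(e₁ - q) = (q + x.2) - e₁ := by abel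
            rw [this]
            exact hx2
        calc (1:ℝ≥0∞) = μ₁ ({x : XT | x.1 = c₁} ∩
            {x : XT | (q + x.2) - e₁ ∈ {y : Additive Circle | y + y = 0}}) :=
              (prob_inter_one μ₁ hmA₁ hmB₁ hfc₁ he₁').symm
          _ ≤ _ := measure_mono hsubset
      · rw [conv_dirac' μ₂ _, Measure.map_apply (measurable_add_const _) hGmeas]
        apply le_antisymm prob_le_one
        have hsubset : {x : XT | x.1 = c₂} ∩
            {x : XT | x.2 - e₂ ∈ {y : Additive Circle | y + y = 0}} ⊆
            (fun x : XT => x + -(c₂, e₂)) ⁻¹' setG := by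
          rintro x ⟨hx1, hx2⟩
          simp only [Set.mem_setOf_eq] at hx1 hx2
          simp only [Set.mem_preimage, hGeq, Set.mem_setOf_eq]
          constructor
          · show x.1 + -c₂ = 0
            rw [hx1]; ring
          · show (x.2 + -e₂) + (x.2 + -e₂) = 0
            have : x.2 + -e₂ = x.2 - e₂ := by abel
            rw [this]
            exact hx2
        calc (1:ℝ≥0∞) = μ₂ ({x : XT | x.1 = c₂} ∩
            {x : XT | x.2 - e₂ ∈ {y : Additive Circle | y + y = 0}}) :=
              (prob_inter_one μ₂ hmA₂ hmB₂ hfc₂ he₂').symm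
          _ ≤ _ := measure_mono hsubset
    · -- symmetry of the shifted measures
      apply shift_sym 1 b μ₁ μ₂ hsym
      have hα2 : alphaXT 1 b (c₂, e₂) = (c₂, q + e₂) := by
        unfold alphaXT
        refine Prod.ext (by show (1:ℝ) * c₂ = c₂; ring) ?_
        show Additive.ofMul (Circle.exp (b * c₂)) + e₂ = q + e₂
        rw [hq]
      rw [hα2]
      refine Prod.ext ?_ ?_
      · show (c₁ + c₂) + (c₁ + c₂) = 0
        rw [hc0, add_zero]
      · show ((e₁ - q) + (q + e₂)) + ((e₁ - q) + (q + e₂)) = (0 : Additive Circle)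
        have : (e₁ - q) + (q + e₂) = e₁ + e₂ := by abel
        rw [this]
        exact heS
  · -- case a ≠ 1
    have hmβ : Measurable (betaF a b) := betaF_measurable a b
    set w : XT × XT → Additive Circle := fun p => betaF a b p.1 + betaF a b p.2 with hwdef
    have hww : Measurable w := (hmβ.comp measurable_fst).add (hmβ.comp measurable_snd)
    have hcompT : (Prod.map (betaF a b) (betaF a b)) ∘
        (fun p : XT × XT => (p.1 + p.2, p.1 + alphaXT a b p.2)) = fun p => (w p, w p) := by
      funext p
      refine Prod.ext ?_ ?_
      · show betaF a b (p.1 + p.2) = w p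
        rw [betaF_add]
      · show betaF a b (p.1 + alphaXT a b p.2) = w p
        rw [betaF_add, betaF_alpha a b hA]
    have hcompT' : (Prod.map (betaF a b) (betaF a b)) ∘
        (fun p : XT × XT => (p.1 + p.2, -(p.1 + alphaXT a b p.2))) =
        fun p => (w p, -(w p)) := by
      funext p
      refine Prod.ext ?_ ?_
      · show betaF a b (p.1 + p.2) = w p
        rw [betaF_add]
      · show betaF a b (-(p.1 + alphaXT a b p.2)) = -(w p)
        rw [betaF_neg, betaF_add, betaF_alpha a b hA]
    have h2 : Measure.map (fun p => (w p, w p)) (μ₁.prod μ₂) =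
        Measure.map (fun p => (w p, -(w p))) (μ₁.prod μ₂) := by
      rw [← hcompT, ← hcompT', ← Measure.map_map (hmβ.prodMap hmβ) hmT,
        ← Measure.map_map (hmβ.prodMap hmβ) hmT', hsym]
    have h3 : (μ₁.prod μ₂) {p : XT × XT | w p + w p = 0} = 1 :=
      diag_lemma (μ₁.prod μ₂) w hww h2
    have : IsProbabilityMeasure (Measure.map (betaF a b) μ₁) :=
      Measure.isProbabilityMeasure_map hmβ.aemeasurable
    have : IsProbabilityMeasure (Measure.map (betaF a b) μ₂) :=
      Measure.isProbabilityMeasure_map hmβ.aemeasurable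
    have h4 : Measure.map (fun y : (Additive Circle) × (Additive Circle) => y.1 + y.2)
        ((Measure.map (betaF a b) μ₁).prod (Measure.map (betaF a b) μ₂))
        {y : Additive Circle | y + y = 0} = 1 := by
      rw [Measure.map_prod_map _ _ hmβ hmβ, Measure.map_map measurable_add (hmβ.prodMap hmβ)]
      have e3 : (fun y : (Additive Circle) × (Additive Circle) => y.1 + y.2) ∘
          (Prod.map (betaF a b) (betaF a b)) = w := by funext p; rfl
      rw [e3, Measure.map_apply hww tor_meas]
      exact h3
    obtain ⟨d₁, d₂, hd₁, hd₂, hdS⟩ := coset_of_conv _ _ _ tor_meas tor_add tor_sub h4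
    have hKmeas : MeasurableSet (setK a b) := by
      rw [setK_eq]
      exact hmβ tor_meas
    have hbx : ∀ d : Additive Circle, betaF a b ((0 : ℝ), d) = d := by
      intro d
      unfold betaF
      show Additive.ofMul (Additive.toMul d * (Circle.exp (b * (0:ℝ) / (a-1)))⁻¹) = d
      simp
    have hconc : ∀ (μ : Measure XT) (_ : IsProbabilityMeasure μ) (d : Additive Circle)
        (_ : Measure.map (betaF a b) μ {y | y - d ∈ {y : Additive Circle | y + y = 0}} = 1),
        μ.conv (Measure.dirac (-((0 : ℝ), d))) (setK a b) = 1 := by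
      intro μ hμ d hd
      rw [conv_dirac' μ _, Measure.map_apply (measurable_add_const _) hKmeas]
      have hseteq : (fun x : XT => x + -((0 : ℝ), d)) ⁻¹' setK a b =
          betaF a b ⁻¹' {y | y - d ∈ {y : Additive Circle | y + y = 0}} := by
        ext x
        simp only [Set.mem_preimage, setK_eq]
        have : betaF a b (x + -((0 : ℝ), d)) = betaF a b x - d := by
          rw [betaF_add, betaF_neg, hbx, sub_eq_add_neg]
        rw [this]
        rfl
      rw [hseteq, ← Measure.map_apply hmβ (coset_meas _ tor_meas d)]
      exact hd
    refine ⟨((0 : ℝ), d₁), ((0 : ℝ), d₂), fun _ => ?_, fun h => absurd h hA, ?_⟩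
    · exact ⟨hconc μ₁ inferInstance d₁ hd₁, hconc μ₂ inferInstance d₂ hd₂⟩
    · apply shift_sym a b μ₁ μ₂ hsym
      have hα2 : alphaXT a b ((0 : ℝ), d₂) = ((0 : ℝ), d₂) := by
        unfold alphaXT
        refine Prod.ext (by show a * (0:ℝ) = 0; ring) ?_
        show Additive.ofMul (Circle.exp (b * (0:ℝ))) + d₂ = d₂
        simp
      rw [hα2]
      refine Prod.ext ?_ ?_
      · show ((0:ℝ) + 0) + ((0:ℝ) + 0) = 0
        ring
      · show (d₁ + d₂) + (d₁ + d₂) = (0 : Additive Circle)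
        exact hdS
end
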